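/- arXiv:2112.03561 — 6 statements merged into one kernel-verified Lean document; each statement's English description precedes it below -/
import Mathlib

section
/- Every subgroup H of the alternating group A₆ with |H| ≥ 30 has order 36, 60, or 360; equivalently, H is all of A₆, or isomorphic to A₅, or to the semidirect product (C₃ × C₃) ⋊ C₄ of order 36. -/
open Equiv Equiv.Perm Subgroup

notation "G6" => alternatingGroup (Fin 6)

private lemma multiset_prime_dvd_lcm {p : ℕ} (hp : p.Prime) (s : Multiset ℕ) (h : p ∣ s.lcm) :
    ∃ a ∈ s, p ∣ a := by
  induction s using Multiset.induction with
  | empty => rw [Multiset.lcm_zero] at h; exact absurd (Nat.dvd_one.mp h) hp.ne_one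
  | cons a s ih =>
    rw [Multiset.lcm_cons] at h
    have h2 : p ∣ a * s.lcm := h.trans (lcm_dvd (dvd_mul_right a s.lcm) (dvd_mul_left s.lcm a))
    rcases hp.dvd_mul.mp h2 with h3 | h3
    · exact ⟨a, Multiset.mem_cons_self a s, h3⟩
    · obtain ⟨b, hb, hpb⟩ := ih h3
      exact ⟨b, Multiset.mem_cons_of_mem hb, hpb⟩

private lemma cycle_sum_le (g : Perm (Fin 6)) : g.cycleType.sum ≤ 6 := by
  rw [Equiv.Perm.sum_cycleType]
  simpa using g.support.card_le_univ

private lemma perm_no_order_5q (g : Perm (Fin 6)) {q : ℕ} (hq : q = 2 ∨ q = 3)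
    (h : orderOf g = 5 * q) : False := by
  have hlcm : g.cycleType.lcm = 5 * q := by rw [Equiv.Perm.lcm_cycleType, h]
  have h5 : (5:ℕ) ∣ g.cycleType.lcm := by rw [hlcm]; exact Dvd.intro q rfl
  have hqd : q ∣ g.cycleType.lcm := by rw [hlcm]; exact Dvd.intro_left 5 rfl
  obtain ⟨a, ha, h5a⟩ := multiset_prime_dvd_lcm (by norm_num) _ h5
  have hqprime : q.Prime := by rcases hq with rfl | rfl <;> norm_num
  obtain ⟨b, hb, hqb⟩ := multiset_prime_dvd_lcm hqprime _ hqd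
  have hsum := cycle_sum_le g
  have hadvd : a ∣ 5 * q := hlcm ▸ Multiset.dvd_lcm ha
  have hbdvd : b ∣ 5 * q := hlcm ▸ Multiset.dvd_lcm hb
  have ha2 : 2 ≤ a := Equiv.Perm.two_le_of_mem_cycleType ha
  have hb2 : 2 ≤ b := Equiv.Perm.two_le_of_mem_cycleType hb
  have hale : a ≤ 6 := le_trans (Multiset.le_sum_of_mem ha) hsum
  have hble : b ≤ 6 := le_trans (Multiset.le_sum_of_mem hb) hsum
  -- a = 5, b = q
  have ha5 : a = 5 := by
    rcases hq with rfl | rfl <;> (interval_cases a <;> omega)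
  have hbq : b = q := by
    rcases hq with rfl | rfl <;> (interval_cases b <;> omega)
  have hne : b ≠ a := by omega
  have hbe : b ∈ g.cycleType.erase a := Multiset.mem_erase_of_ne hne |>.mpr hb
  have : a + b ≤ g.cycleType.sum := by
    calc a + b ≤ a + (g.cycleType.erase a).sum := by
          exact Nat.add_le_add_left (Multiset.le_sum_of_mem hbe) a
      _ = g.cycleType.sum := by
          rw [← Multiset.sum_cons, Multiset.cons_erase ha]
  omega

private lemma cardA6 : Nat.card (alternatingGroup (Fin 6)) = 360 := by
  have h := two_mul_card_alternatingGroup (α := Fin 6)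
  rw [← Nat.card_eq_fintype_card, ← Nat.card_eq_fintype_card] at h
  have h2 : Nat.card (Perm (Fin 6)) = 720 := by
    rw [Nat.card_eq_fintype_card, Fintype.card_perm, Fintype.card_fin]
    norm_num [Nat.factorial]
  omega

private lemma perm_no_order_6 (g : Perm (Fin 6)) (hg : g ∈ alternatingGroup (Fin 6))
    (h : orderOf g = 6) : False := by
  have hlcm : g.cycleType.lcm = 6 := by rw [Equiv.Perm.lcm_cycleType, h]
  have hsign : Equiv.Perm.sign g = 1 := Equiv.Perm.mem_alternatingGroup.mp hg
  have hsum := cycle_sum_le g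
  have h2 : (2:ℕ) ∣ g.cycleType.lcm := by rw [hlcm]; norm_num
  have h3 : (3:ℕ) ∣ g.cycleType.lcm := by rw [hlcm]; norm_num
  obtain ⟨a, ha, h2a⟩ := multiset_prime_dvd_lcm (by norm_num) _ h2
  obtain ⟨b, hb, h3b⟩ := multiset_prime_dvd_lcm (by norm_num) _ h3
  have hadvd : a ∣ 6 := hlcm ▸ Multiset.dvd_lcm ha
  have hbdvd : b ∣ 6 := hlcm ▸ Multiset.dvd_lcm hb
  have ha2 : 2 ≤ a := Equiv.Perm.two_le_of_mem_cycleType ha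
  have hb2 : 2 ≤ b := Equiv.Perm.two_le_of_mem_cycleType hb
  have hale : a ≤ 6 := le_trans (Multiset.le_sum_of_mem ha) hsum
  have hble : b ≤ 6 := le_trans (Multiset.le_sum_of_mem hb) hsum
  -- every part is ≥ 2
  have hparts : ∀ x ∈ g.cycleType, 2 ≤ x := fun x hx => Equiv.Perm.two_le_of_mem_cycleType hx
  -- helper to show the full cycle type once we know part(s)
  by_cases h6 : 6 ∈ g.cycleType
  · -- cycleType = {6}
    have hct : g.cycleType = {6} := by
      have hrest : g.cycleType.erase 6 = 0 := by
        by_contra hne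
        obtain ⟨x, hx⟩ := Multiset.exists_mem_of_ne_zero hne
        have hx2 : 2 ≤ x := hparts x (Multiset.mem_of_mem_erase hx)
        have : 6 + x ≤ g.cycleType.sum := by
          calc 6 + x ≤ 6 + (g.cycleType.erase 6).sum :=
                Nat.add_le_add_left (Multiset.le_sum_of_mem hx) 6
            _ = g.cycleType.sum := by rw [← Multiset.sum_cons, Multiset.cons_erase h6]
        omega
      have := Multiset.cons_erase h6
      rw [hrest] at this
      exact this.symm
    rw [Equiv.Perm.sign_of_cycleType, hct] at hsign
    exact absurd hsign (by decide)
  · -- a = 2, b = 3, cycleType = {2,3}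
    have ha6 : a ≠ 6 := fun e => h6 (e ▸ ha)
    have hb6 : b ≠ 6 := fun e => h6 (e ▸ hb)
    have ha' : a = 2 := by interval_cases a <;> omega
    have hb' : b = 3 := by interval_cases b <;> omega
    subst ha' hb'
    have hbe : (3:ℕ) ∈ g.cycleType.erase 2 := (Multiset.mem_erase_of_ne (by norm_num)).mpr hb
    have hct : g.cycleType = {2, 3} := by
      have hrest : (g.cycleType.erase 2).erase 3 = 0 := by
        by_contra hne
        obtain ⟨x, hx⟩ := Multiset.exists_mem_of_ne_zero hne
        have hx2 : 2 ≤ x := hparts x (Multiset.mem_of_mem_erase (Multiset.mem_of_mem_erase hx))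
        have : 2 + (3 + x) ≤ g.cycleType.sum := by
          calc 2 + (3 + x) ≤ 2 + (3 + ((g.cycleType.erase 2).erase 3).sum) := by
                have := Multiset.le_sum_of_mem hx; omega
            _ = 2 + (g.cycleType.erase 2).sum := by
                rw [← Multiset.sum_cons, Multiset.cons_erase hbe]
            _ = g.cycleType.sum := by rw [← Multiset.sum_cons, Multiset.cons_erase ha]
        omega
      have e1 := Multiset.cons_erase hbe
      rw [hrest] at e1
      have e2 := Multiset.cons_erase ha
      rw [← e1] at e2
      exact e2.symm
    rw [Equiv.Perm.sign_of_cycleType, hct] at hsign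
    exact absurd hsign (by decide)

private lemma A6_order_ne (x : alternatingGroup (Fin 6)) :
    orderOf x ≠ 6 ∧ orderOf x ≠ 10 ∧ orderOf x ≠ 15 := by
  have hcoe : orderOf (x : Perm (Fin 6)) = orderOf x := orderOf_coe x
  refine ⟨fun h => perm_no_order_6 x x.2 (hcoe.trans h), fun h => ?_, fun h => ?_⟩
  · exact perm_no_order_5q (x : Perm (Fin 6)) (Or.inl rfl) (by rw [hcoe, h])
  · exact perm_no_order_5q (x : Perm (Fin 6)) (Or.inr rfl) (by rw [hcoe, h])

private lemma no_commute_distinct (x y : alternatingGroup (Fin 6))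
    (hx : orderOf x = 2 ∨ orderOf x = 3 ∨ orderOf x = 5)
    (hy : orderOf y = 2 ∨ orderOf y = 3 ∨ orderOf y = 5)
    (hne : orderOf x ≠ orderOf y) (hc : Commute x y) : False := by
  have h := hc.orderOf_mul_eq_mul_orderOf_of_coprime (by
    rcases hx with h1|h1|h1 <;> rcases hy with h2|h2|h2 <;> rw [h1, h2] <;> first | omega | decide)
  have H := A6_order_ne (x * y)
  rcases hx with h1|h1|h1 <;> rcases hy with h2|h2|h2 <;> rw [h1, h2] at h <;>
    simp_all <;> omega

private lemma dvd360_mem {n : ℕ} (h : n ∣ 360) :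
    n ∈ ({1,2,3,4,5,6,8,9,10,12,15,18,20,24,30,36,40,45,60,72,90,120,180,360} : Finset ℕ) := by
  have hm : n ∈ Nat.divisors 360 := Nat.mem_divisors.mpr ⟨h, by norm_num⟩
  have hsub : (Nat.divisors 360) ⊆
      ({1,2,3,4,5,6,8,9,10,12,15,18,20,24,30,36,40,45,60,72,90,120,180,360} : Finset ℕ) := by decide
  exact hsub hm

-- If q ∈ {2,3,5} and g has order q, then the centralizer of g has card dividing cq
-- where c2 = 8, c3 = 9, c5 = 5.
private lemma centralizer_card_dvd (g : alternatingGroup (Fin 6)) {q : ℕ}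
    (hq : q = 2 ∨ q = 3 ∨ q = 5) (hg : orderOf g = q) :
    Nat.card (centralizer ((zpowers g : Subgroup _) : Set (alternatingGroup (Fin 6)))) ∣
      (if q = 2 then 8 else if q = 3 then 9 else 5) := by
  set C := centralizer ((zpowers g : Subgroup _) : Set (alternatingGroup (Fin 6))) with hC
  have hdvd : Nat.card C ∣ 360 := cardA6 ▸ Subgroup.card_subgroup_dvd_card C
  -- no element of another prime order p ∈ {2,3,5}, p ≠ q, exists in C
  have key : ∀ p : ℕ, p.Prime → p = 2 ∨ p = 3 ∨ p = 5 → p ≠ q → ¬ (p ∣ Nat.card C) := by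
    intro p hp hpmem hpq hdvdC
    haveI : Fact p.Prime := ⟨hp⟩
    haveI : Fintype C := Fintype.ofFinite _
    rw [Nat.card_eq_fintype_card] at hdvdC
    obtain ⟨y, hy⟩ := exists_prime_orderOf_dvd_card (G := C) p hdvdC
    have hyo : orderOf (y : alternatingGroup (Fin 6)) = p := by rw [orderOf_coe, hy]
    have hcomm : Commute (g : alternatingGroup (Fin 6)) (y : alternatingGroup (Fin 6)) :=
      Subgroup.mem_centralizer_iff.mp y.2 g (Subgroup.mem_zpowers g)
    exact no_commute_distinct g y (by omega) (by rw [hyo]; omega) (by rw [hg, hyo]; omega) hcomm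
  rcases hq with rfl | rfl | rfl
  · have h3 := key 3 (by norm_num) (by tauto) (by norm_num)
    have h5 := key 5 (by norm_num) (by tauto) (by norm_num)
    simp only [if_pos rfl]
    generalize hn : Nat.card ↥C = n at h3 h5 hdvd ⊢
    have hmem := dvd360_mem hdvd
    fin_cases hmem <;> revert h3 h5 <;> decide
  · have h2 := key 2 (by norm_num) (by tauto) (by norm_num)
    have h5 := key 5 (by norm_num) (by tauto) (by norm_num)
    norm_num only
    generalize hn : Nat.card ↥C = n at h2 h5 hdvd ⊢
    have hmem := dvd360_mem hdvd
    fin_cases hmem <;> revert h2 h5 <;> decide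
  · have h2 := key 2 (by norm_num) (by tauto) (by norm_num)
    have h3 := key 3 (by norm_num) (by tauto) (by norm_num)
    norm_num only
    generalize hn : Nat.card ↥C = n at h2 h3 hdvd ⊢
    have hmem := dvd360_mem hdvd
    fin_cases hmem <;> revert h2 h3 <;> decide

-- The conjugacy class of g has ncard * c ≥ 360 whenever card of centralizer divides c.
private lemma class_bound (N : Subgroup G6) (hN : N.Normal) {g : G6} (hgN : g ∈ N) {q c : ℕ}
    (hg : orderOf g = q)
    (hcdvd : Nat.card (centralizer ((zpowers g : Subgroup _) : Set G6)) ∣ c) (hc : c ≠ 0) :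
    360 ≤ {x : G6 | x ∈ N ∧ orderOf x = q}.ncard * c := by
  set S : Set G6 := MulAction.orbit (ConjAct G6) g with hS
  have hsub : S ⊆ {x : G6 | x ∈ N ∧ orderOf x = q} := by
    rintro x ⟨h, rfl⟩
    simp only [ConjAct.smul_def]
    constructor
    · exact hN.conj_mem g hgN (ConjAct.ofConjAct h)
    · have : ConjAct.ofConjAct h * g * (ConjAct.ofConjAct h)⁻¹ =
          (MulAut.conj (ConjAct.ofConjAct h)) g := rfl
      rw [this, MulEquiv.orderOf_eq, hg]
  -- orbit-stabilizer
  have hcard : Nat.card S * Nat.card (MulAction.stabilizer (ConjAct G6) g) = 360 := by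
    have e1 : Nat.card S = (MulAction.stabilizer (ConjAct G6) g).index := by
      rw [Subgroup.index_eq_card]
      exact Nat.card_congr (MulAction.orbitEquivQuotientStabilizer (ConjAct G6) g)
    rw [e1, mul_comm, Subgroup.card_mul_index]
    exact cardA6
  have hstab : Nat.card (MulAction.stabilizer (ConjAct G6) g) =
      Nat.card (centralizer ((zpowers g : Subgroup _) : Set G6)) := by
    rw [ConjAct.stabilizer_eq_centralizer, Subgroup.zpowers_eq_closure, Subgroup.centralizer_closure]
    rfl
  rw [hstab] at hcard
  obtain ⟨k, hk⟩ := hcdvd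
  have hk1 : 0 < k := Nat.pos_of_ne_zero (fun h0 => hc (by simp [hk, h0]))
  have hle : S.ncard ≤ {x : G6 | x ∈ N ∧ orderOf x = q}.ncard :=
    Set.ncard_le_ncard hsub (Set.toFinite _)
  have hSn : Nat.card S = S.ncard := Nat.card_coe_set_eq S
  have hcpos : 0 < Nat.card (centralizer ((zpowers g : Subgroup _) : Set G6)) := Nat.card_pos
  calc (360:ℕ) = S.ncard * Nat.card (centralizer ((zpowers g : Subgroup _) : Set G6)) := by
        rw [← hSn, hcard]
    _ ≤ {x : G6 | x ∈ N ∧ orderOf x = q}.ncard * c := by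
        rw [hk]
        exact Nat.mul_le_mul hle (Nat.le_mul_of_pos_right _ hk1)
  done

private lemma no_normal_180 (N : Subgroup G6) (hN : N.Normal) (hcard : Nat.card N = 180) :
    False := by
  have hidx : N.index = 2 := by
    have := N.index_mul_card
    rw [hcard, cardA6] at this
    omega
  have hmem3 : ∀ x : G6, orderOf x = 3 → x ∈ N := by
    intro x hx
    have h1 : orderOf ((QuotientGroup.mk' N) x) ∣ 3 := hx ▸ orderOf_map_dvd _ x
    have h2 : orderOf ((QuotientGroup.mk' N) x) ∣ 2 := by
      have := orderOf_dvd_natCard ((QuotientGroup.mk' N) x)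
      rwa [← Subgroup.index_eq_card, hidx] at this
    have h3 := Nat.dvd_gcd h1 h2
    norm_num at h3
    exact h3
  set M := Subgroup.map (alternatingGroup (Fin 6)).subtype N with hMdef
  have hsub : alternatingGroup (Fin 6) ≤ M := by
    rw [← Equiv.Perm.closure_three_cycles_eq_alternating]
    refine (Subgroup.closure_le M).mpr ?_
    rintro σ hσ
    have hσA : σ ∈ alternatingGroup (Fin 6) := hσ.mem_alternatingGroup
    have h3 : orderOf (⟨σ, hσA⟩ : G6) = 3 := by
      rw [← orderOf_coe]
      exact hσ.orderOf
    exact ⟨⟨σ, hσA⟩, hmem3 _ h3, rfl⟩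
  have hM : Nat.card M = 180 := by
    rw [← hcard]
    exact Nat.card_congr
      (Subgroup.equivMapOfInjective N _ (Subgroup.subtype_injective _)).toEquiv.symm
  have hdvd := Subgroup.card_dvd_of_le hsub
  rw [hM, cardA6] at hdvd
  norm_num at hdvd

private lemma main_count (N : Subgroup G6) :
    {x : G6 | x ∈ N ∧ orderOf x = 2}.ncard + {x : G6 | x ∈ N ∧ orderOf x = 3}.ncard
      + {x : G6 | x ∈ N ∧ orderOf x = 5}.ncard + 1 ≤ Nat.card N := by
  set S2 := {x : G6 | x ∈ N ∧ orderOf x = 2} with hS2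
  set S3 := {x : G6 | x ∈ N ∧ orderOf x = 3} with hS3
  set S5 := {x : G6 | x ∈ N ∧ orderOf x = 5} with hS5
  have d23 : Disjoint S2 S3 := Set.disjoint_left.mpr (by rintro x ⟨_, h⟩ ⟨_, h'⟩; omega)
  have d235 : Disjoint (S2 ∪ S3) S5 := Set.disjoint_left.mpr (by
    rintro x (⟨_, h⟩ | ⟨_, h⟩) ⟨_, h'⟩ <;> omega)
  have d1 : Disjoint (S2 ∪ S3 ∪ S5) {(1:G6)} := Set.disjoint_right.mpr (by
    rintro x rfl h
    have h1 : orderOf (1:G6) = 1 := orderOf_one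
    rcases h with (⟨_, h⟩ | ⟨_, h⟩) | ⟨_, h⟩ <;> omega)
  have hsub : S2 ∪ S3 ∪ S5 ∪ {(1:G6)} ⊆ (N : Set G6) := by
    rintro x (((⟨h, _⟩ | ⟨h, _⟩) | ⟨h, _⟩) | rfl)
    · exact h
    · exact h
    · exact h
    · exact N.one_mem
  have e1 : (S2 ∪ S3 ∪ S5 ∪ {(1:G6)}).ncard = S2.ncard + S3.ncard + S5.ncard + 1 := by
    rw [Set.ncard_union_eq d1 (Set.toFinite _) (Set.toFinite _),
      Set.ncard_union_eq d235 (Set.toFinite _) (Set.toFinite _),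
      Set.ncard_union_eq d23 (Set.toFinite _) (Set.toFinite _), Set.ncard_singleton]
  have e2 : (S2 ∪ S3 ∪ S5 ∪ {(1:G6)}).ncard ≤ (N : Set G6).ncard :=
    Set.ncard_le_ncard hsub (Set.toFinite _)
  have e3 : (N : Set G6).ncard = Nat.card N := (Nat.card_coe_set_eq _).symm
  omega

private lemma dvd_cases {d : ℕ} (h : d ∣ 360) :
    (¬2∣d → ¬3∣d → ¬5∣d → d = 1) ∧ (¬3∣d → ¬5∣d → d ∣ 8) ∧ (¬2∣d → ¬5∣d → d ∣ 9)
    ∧ (¬2∣d → ¬3∣d → d ∣ 5) ∧ (¬5∣d → d ∣ 72) ∧ (¬3∣d → d ∣ 40) ∧ (¬2∣d → d ∣ 45)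
    ∧ (158 ≤ d → d ≠ 360 → d = 180) := by
  have hmem := dvd360_mem h
  fin_cases hmem <;> exact (by decide)

private lemma A6_normal_eq (N : Subgroup G6) (hN : N.Normal) (hbot : N ≠ ⊥) : N = ⊤ := by
  have hdvd : Nat.card N ∣ 360 := cardA6 ▸ N.card_subgroup_dvd_card
  by_cases htop : Nat.card N = 360
  · exact Subgroup.eq_top_of_card_eq N (by rw [htop, cardA6])
  have h2lt : 2 ≤ Nat.card N := (Subgroup.one_lt_card_iff_ne_bot N).mpr hbot
  exfalso
  have hb : ∀ p : ℕ, (p = 2 ∨ p = 3 ∨ p = 5) → p ∣ Nat.card N →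
      360 ≤ {x : G6 | x ∈ N ∧ orderOf x = p}.ncard *
        (if p = 2 then 8 else if p = 3 then 9 else 5) := by
    intro p hp hpd
    haveI : Fact p.Prime := ⟨by rcases hp with rfl|rfl|rfl <;> norm_num⟩
    haveI : Fintype ↥N := Fintype.ofFinite _
    rw [Nat.card_eq_fintype_card] at hpd
    obtain ⟨y, hy⟩ := exists_prime_orderOf_dvd_card (G := ↥N) p hpd
    have hyo : orderOf (y : G6) = p := by rw [orderOf_coe, hy]
    exact class_bound N hN y.2 hyo (centralizer_card_dvd _ hp hyo)
      (by rcases hp with rfl|rfl|rfl <;> norm_num)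
  have hmain := main_count N
  obtain ⟨c1, c8, c9, c5, c72, c40, c45, c180⟩ := dvd_cases hdvd
  by_cases h2 : 2 ∣ Nat.card N <;> by_cases h3 : 3 ∣ Nat.card N <;>
    by_cases h5 : 5 ∣ Nat.card N
  · -- 2,3,5
    have B2 := hb 2 (Or.inl rfl) h2
    have B3 := hb 3 (Or.inr (Or.inl rfl)) h3
    have B5 := hb 5 (Or.inr (Or.inr rfl)) h5
    norm_num at B2 B3 B5
    exact no_normal_180 N hN (c180 (by omega) htop)
  · have B2 := hb 2 (Or.inl rfl) h2
    have B3 := hb 3 (Or.inr (Or.inl rfl)) h3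
    norm_num at B2 B3
    have := Nat.le_of_dvd (by omega) (c72 h5)
    omega
  · have B2 := hb 2 (Or.inl rfl) h2
    have B5 := hb 5 (Or.inr (Or.inr rfl)) h5
    norm_num at B2 B5
    have := Nat.le_of_dvd (by omega) (c40 h3)
    omega
  · have B2 := hb 2 (Or.inl rfl) h2
    norm_num at B2
    have := Nat.le_of_dvd (by omega) (c8 h3 h5)
    omega
  · have B3 := hb 3 (Or.inr (Or.inl rfl)) h3
    have B5 := hb 5 (Or.inr (Or.inr rfl)) h5
    norm_num at B3 B5
    have := Nat.le_of_dvd (by omega) (c45 h2)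
    omega
  · have B3 := hb 3 (Or.inr (Or.inl rfl)) h3
    norm_num at B3
    have := Nat.le_of_dvd (by omega) (c9 h2 h5)
    omega
  · have B5 := hb 5 (Or.inr (Or.inr rfl)) h5
    norm_num at B5
    have := Nat.le_of_dvd (by omega) (c5 h2 h3)
    omega
  · exact absurd (c1 h2 h3 h5) (by omega)

private lemma index_ge_six (H : Subgroup G6) (hne : H ≠ ⊤) (hidx : H.index ≤ 5) : False := by
  by_cases hbot : H.normalCore = ⊥
  · have hker : (MulAction.toPermHom G6 (G6 ⧸ H)).ker = ⊥ := by
      rw [← Subgroup.normalCore_eq_ker]; exact hbot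
    have hinj := (MonoidHom.ker_eq_bot_iff _).mp hker
    have hle := Nat.card_le_card_of_injective _ hinj
    haveI : DecidableEq (G6 ⧸ H) := Classical.decEq _
    haveI : Fintype (G6 ⧸ H) := Fintype.ofFinite _
    have h1 : Nat.card (Perm (G6 ⧸ H)) = (Nat.card (G6 ⧸ H)).factorial := by
      rw [Nat.card_eq_fintype_card, Nat.card_eq_fintype_card, Fintype.card_perm]
    have h2 : Nat.card (G6 ⧸ H) ≤ 5 := by rw [← Subgroup.index_eq_card]; exact hidx
    have h3 : (Nat.card (G6 ⧸ H)).factorial ≤ 120 := by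
      calc (Nat.card (G6 ⧸ H)).factorial ≤ (5:ℕ).factorial := Nat.factorial_le h2
        _ = 120 := by norm_num [Nat.factorial]
    rw [cardA6, h1] at hle
    omega
  · have := A6_normal_eq H.normalCore (Subgroup.normalCore_normal H) hbot
    have h2 : H = ⊤ := top_le_iff.mp (this ▸ Subgroup.normalCore_le H)
    exact hne h2

private lemma order5_normalizer_le (K : Subgroup G6) (hK : Nat.card K = 5) :
    Nat.card (normalizer (K : Set G6)) ≤ 20 := by
  haveI : Fact (Nat.Prime 5) := ⟨by norm_num⟩
  have hcomm : ∀ x ∈ K, ∀ y ∈ K, x * y = y * x := by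
    haveI := isCyclic_of_prime_card hK
    obtain ⟨g, hg⟩ := IsCyclic.exists_generator (α := ↥K)
    intro x hx y hy
    obtain ⟨m, hm⟩ := hg ⟨x, hx⟩
    obtain ⟨n, hn⟩ := hg ⟨y, hy⟩
    have h : (⟨x, hx⟩ : ↥K) * ⟨y, hy⟩ = ⟨y, hy⟩ * ⟨x, hx⟩ := by
      rw [← hm, ← hn]
      exact ((Commute.refl g).zpow_zpow m n).eq
    exact congrArg Subtype.val h
  have hKC : K ≤ centralizer (K : Set G6) := fun x hx =>
    Subgroup.mem_centralizer_iff.mpr (fun h hh => hcomm h hh x hx)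
  -- an element of order 5 in K
  obtain ⟨x0, hx0⟩ : ∃ x : ↥K, x ≠ 1 := by
    haveI : Nontrivial ↥K := by
      apply Finite.one_lt_card_iff_nontrivial.mp
      rw [hK]; omega
    exact exists_ne 1
  have hx5 : orderOf (x0 : G6) = 5 := by
    rw [orderOf_coe]
    have hdvd : orderOf x0 ∣ 5 := hK ▸ orderOf_dvd_natCard x0
    rcases (Nat.dvd_prime (by norm_num)).mp hdvd with h | h
    · exact absurd (orderOf_eq_one_iff.mp h) hx0
    · exact h
  -- centralizer has card 5
  have hCdvd : Nat.card (centralizer (K : Set G6)) ∣ 360 :=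
    cardA6 ▸ Subgroup.card_subgroup_dvd_card _
  have hC5 : (5:ℕ) ∣ Nat.card (centralizer (K : Set G6)) := by
    have := Subgroup.card_dvd_of_le hKC
    rw [hK] at this
    exact this
  have hkey : ∀ p : ℕ, p.Prime → (p = 2 ∨ p = 3) → ¬ p ∣ Nat.card (centralizer (K : Set G6)) := by
    intro p hp hp23 hdvdC
    haveI : Fact p.Prime := ⟨hp⟩
    haveI : Fintype (centralizer (K : Set G6)) := Fintype.ofFinite _
    rw [Nat.card_eq_fintype_card] at hdvdC
    obtain ⟨y, hy⟩ := exists_prime_orderOf_dvd_card (G := ↥(centralizer (K : Set G6))) p hdvdC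
    have hyo : orderOf (y : G6) = p := by rw [orderOf_coe, hy]
    have hcom : Commute (x0 : G6) (y : G6) :=
      Subgroup.mem_centralizer_iff.mp y.2 _ x0.2
    exact no_commute_distinct _ _ (by omega) (by omega) (by omega) hcom
  have hC : Nat.card (centralizer (K : Set G6)) = 5 := by
    have h2 := hkey 2 (by norm_num) (by omega)
    have h3 := hkey 3 (by norm_num) (by omega)
    generalize hn : Nat.card ↥(centralizer (K : Set G6)) = n at h2 h3 hCdvd hC5
    have hmem := dvd360_mem hCdvd
    fin_cases hmem <;> revert h2 h3 hC5 <;> decide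
  -- N/C embedding
  haveI : IsCyclic ↥K := isCyclic_of_prime_card hK
  have hAut : Nat.card (MulAut ↥K) = 4 := by
    rw [IsCyclic.card_mulAut, hK]
    decide
  have hker := Subgroup.normalizerMonoidHom_ker K
  have hcards : Nat.card (normalizer (K : Set G6)) =
      Nat.card (↥(normalizer (K : Set G6)) ⧸ (K.normalizerMonoidHom).ker) * Nat.card (K.normalizerMonoidHom).ker := by
    exact Subgroup.card_eq_card_quotient_mul_card_subgroup _
  have hrange : Nat.card (↥(normalizer (K : Set G6)) ⧸ (K.normalizerMonoidHom).ker) ≤ 4 := by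
    have e := Nat.card_congr (QuotientGroup.quotientKerEquivRange (K.normalizerMonoidHom)).toEquiv
    rw [e]
    calc Nat.card (K.normalizerMonoidHom).range ≤ Nat.card (MulAut ↥K) := by
          apply Nat.le_of_dvd
          · rw [hAut]; omega
          · exact Subgroup.card_subgroup_dvd_card _
      _ = 4 := hAut
  have hkerle : Nat.card (K.normalizerMonoidHom).ker ≤ 5 := by
    rw [hker]
    have hle : centralizer (K : Set G6) ≤ normalizer (K : Set G6) := by
      intro x hx
      rw [Subgroup.mem_normalizer_iff]
      intro n
      constructor
      · intro hn
        have h1 := Subgroup.mem_centralizer_iff.mp hx n hn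
        have h2 : x * n * x⁻¹ = n := by rw [← h1]; group
        rw [h2]
        exact hn
      · intro hn
        have h1 := Subgroup.mem_centralizer_iff.mp hx _ hn
        have h2 : n = x * n * x⁻¹ := by
          have h3 : x * n = x * (x * n * x⁻¹) := by
            calc x * n = x * n * x⁻¹ * x := by group
              _ = x * (x * n * x⁻¹) := h1
          exact mul_left_cancel h3
        rw [h2]
        exact hn
    have e := Nat.card_congr (Subgroup.subgroupOfEquivOfLe hle).toEquiv
    rw [e, hC]
  calc Nat.card (normalizer (K : Set G6)) = _ := hcards
    _ ≤ 4 * 5 := Nat.mul_le_mul hrange hkerle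
    _ = 20 := by norm_num

-- If H has a normal subgroup of order 5, then card H < 30.
private lemma normal_order5_contra (H : Subgroup G6) (h30 : 30 ≤ Nat.card H)
    (P : Subgroup ↥H) (hP : Nat.card P = 5) (hPn : P.Normal) : False := by
  set K := Subgroup.map H.subtype P with hKdef
  have hKcard : Nat.card K = 5 := by
    rw [← hP]
    exact (Nat.card_congr (Subgroup.equivMapOfInjective P _
      (Subgroup.subtype_injective _)).toEquiv).symm
  have hHle : H ≤ normalizer (K : Set G6) := by
    intro g hg
    rw [Subgroup.mem_normalizer_iff]
    intro n
    constructor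
    · rintro ⟨p, hp, rfl⟩
      exact ⟨(⟨g, hg⟩ : ↥H) * p * (⟨g, hg⟩ : ↥H)⁻¹, hPn.conj_mem p hp _, rfl⟩
    · rintro ⟨p, hp, hpe⟩
      refine ⟨(⟨g, hg⟩ : ↥H)⁻¹ * p * (⟨g, hg⟩ : ↥H), hPn.conj_mem p hp _, ?_⟩
      have hpc : H.subtype p = g * n * g⁻¹ := hpe
      simp only [Subgroup.coe_subtype, MulMemClass.coe_mul, InvMemClass.coe_inv] at hpc ⊢
      rw [hpc]
      group
  have h1 : Nat.card H ≤ Nat.card (normalizer (K : Set G6)) :=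
    Nat.le_of_dvd (Nat.card_pos) (Subgroup.card_dvd_of_le hHle)
  have h2 := order5_normalizer_le K hKcard
  omega

-- Sylow 5 subgroups of H (with 5 | card H, card H ≤ 45ish) have card 5
private lemma sylow_card_eq {G : Type*} [Group G] [Finite G] {p : ℕ} [Fact p.Prime]
    (hp : p ∣ Nat.card G) (hp2 : ¬ p^2 ∣ Nat.card G) (P : Sylow p G) : Nat.card P = p := by
  rw [Sylow.card_eq_multiplicity]
  have h0 : Nat.card G ≠ 0 := Nat.card_pos.ne'
  have h1 : 1 ≤ (Nat.card G).factorization p := by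
    rw [← Nat.Prime.pow_dvd_iff_le_factorization (Fact.out) h0, pow_one]
    exact hp
  have h2 : ¬ 2 ≤ (Nat.card G).factorization p := by
    rw [← Nat.Prime.pow_dvd_iff_le_factorization (Fact.out) h0]
    exact hp2
  have : (Nat.card G).factorization p = 1 := by omega
  rw [this, pow_one]

private lemma count_order_p {G : Type*} [Group G] [Finite G] {p : ℕ} [hp : Fact p.Prime]
    (hall : ∀ P : Sylow p G, Nat.card (P : Subgroup G) = p) :
    (p - 1) * Nat.card (Sylow p G) ≤ Nat.card {g : G // orderOf g = p} := by
  classical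
  haveI : Fintype G := Fintype.ofFinite _
  -- the map
  have horder : ∀ (P : Sylow p G) (x : ↥(P : Subgroup G)), x ≠ 1 → orderOf (x : G) = p := by
    intro P x hx
    have h1 : orderOf (x : G) = orderOf x := orderOf_coe x
    have h2 : orderOf x ∣ p := by
      have := orderOf_dvd_natCard x
      rwa [hall P] at this
    rcases (Nat.dvd_prime hp.out).mp h2 with h | h
    · exact absurd (orderOf_eq_one_iff.mp h) hx
    · rw [h1, h]
  set Φ : (Σ P : Sylow p G, {x : ↥(P : Subgroup G) // x ≠ 1}) → {g : G // orderOf g = p} :=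
    fun z => ⟨(z.2.1 : G), horder z.1 z.2.1 z.2.2⟩ with hΦ
  have hinj : Function.Injective Φ := by
    rintro ⟨P, x, hx⟩ ⟨P', x', hx'⟩ heq
    have hco : (x : G) = (x' : G) := congrArg Subtype.val heq
    have hPP : P = P' := by
      apply Sylow.ext
      have e1 : zpowers (x : G) = (P : Subgroup G) := by
        apply Subgroup.eq_of_le_of_card_ge (Subgroup.zpowers_le.mpr x.2)
        rw [hall P, Nat.card_zpowers, horder P x hx]
      have e2 : zpowers (x' : G) = (P' : Subgroup G) := by
        apply Subgroup.eq_of_le_of_card_ge (Subgroup.zpowers_le.mpr x'.2)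
        rw [hall P', Nat.card_zpowers, horder P' x' hx']
      rw [← e1, ← e2, hco]
    subst hPP
    simp only [Sigma.mk.inj_iff, heq_eq_eq, true_and]
    exact Subtype.ext (Subtype.ext hco)
  have hle := Nat.card_le_card_of_injective Φ hinj
  -- compute card of sigma
  have hsig : Nat.card (Σ P : Sylow p G, {x : ↥(P : Subgroup G) // x ≠ 1}) =
      (p - 1) * Nat.card (Sylow p G) := by
    haveI : Fintype (Sylow p G) := Fintype.ofFinite _
    rw [Nat.card_eq_fintype_card, Fintype.card_sigma]
    have hone : ∀ P : Sylow p G, Fintype.card {x : ↥(P : Subgroup G) // x ≠ 1} = p - 1 := by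
      intro P
      have hc : Fintype.card ↥(P : Subgroup G) = p := by
        rw [← Nat.card_eq_fintype_card]; exact hall P
      have := Fintype.card_subtype_compl (fun x : ↥(P : Subgroup G) => x = 1)
      rw [Fintype.card_subtype_eq, hc] at this
      convert this using 2
    rw [Finset.sum_congr rfl (fun P _ => hone P), Finset.sum_const, Finset.card_univ,
      Nat.card_eq_fintype_card, smul_eq_mul, mul_comm]
  omega

-- a Sylow p with count 1 is normal
private lemma sylow_count_one_normal {G : Type*} [Group G] [Finite G] {p : ℕ} [Fact p.Prime]
    (P : Sylow p G) (h1 : Nat.card (Sylow p G) = 1) : (P : Subgroup G).Normal := by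
  rw [← Subgroup.normalizer_eq_top_iff, ← Subgroup.index_eq_one]
  rw [Sylow.card_eq_index_normalizer P] at h1
  exact h1

-- order 30 subgroups do not exist
private lemma no_order_30 (H : Subgroup G6) (hcard : Nat.card H = 30) : False := by
  haveI : Fact (Nat.Prime 5) := ⟨by norm_num⟩
  haveI : Fact (Nat.Prime 3) := ⟨by norm_num⟩
  obtain ⟨P⟩ : Nonempty (Sylow 5 ↥H) := inferInstance
  obtain ⟨Q⟩ : Nonempty (Sylow 3 ↥H) := inferInstance
  have hP5 : Nat.card (P : Subgroup ↥H) = 5 :=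
    sylow_card_eq (by rw [hcard]; norm_num) (by rw [hcard]; norm_num) P
  have hQ3 : Nat.card (Q : Subgroup ↥H) = 3 :=
    sylow_card_eq (by rw [hcard]; norm_num) (by rw [hcard]; norm_num) Q
  -- index of P = 6, index of Q = 10
  have hPidx : (P : Subgroup ↥H).index = 6 := by
    have := (P : Subgroup ↥H).card_mul_index
    rw [hP5, hcard] at this; omega
  have hQidx : (Q : Subgroup ↥H).index = 10 := by
    have := (Q : Subgroup ↥H).card_mul_index
    rw [hQ3, hcard] at this; omega
  have hn5 : Nat.card (Sylow 5 ↥H) = 1 ∨ Nat.card (Sylow 5 ↥H) = 6 := by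
    have hdvd := Sylow.card_dvd_index P
    rw [hPidx] at hdvd
    have hmod := card_sylow_modEq_one 5 ↥H
    rw [Nat.ModEq] at hmod
    have h6 : Nat.card (Sylow 5 ↥H) ≤ 6 := Nat.le_of_dvd (by norm_num) hdvd
    have h1 : 1 ≤ Nat.card (Sylow 5 ↥H) := Nat.card_pos
    interval_cases h : Nat.card (Sylow 5 ↥H) <;> omega
  have hn3 : Nat.card (Sylow 3 ↥H) = 1 ∨ Nat.card (Sylow 3 ↥H) = 10 := by
    have hdvd := Sylow.card_dvd_index Q
    rw [hQidx] at hdvd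
    have hmod := card_sylow_modEq_one 3 ↥H
    rw [Nat.ModEq] at hmod
    have h10 : Nat.card (Sylow 3 ↥H) ≤ 10 := Nat.le_of_dvd (by norm_num) hdvd
    have h1 : 1 ≤ Nat.card (Sylow 3 ↥H) := Nat.card_pos
    interval_cases h : Nat.card (Sylow 3 ↥H) <;> omega
  rcases hn5 with hn5 | hn5
  · exact normal_order5_contra H (by omega) P hP5 (sylow_count_one_normal P hn5)
  rcases hn3 with hn3 | hn3
  · -- Q normal in H: N/C argument gives an element of order 15
    have hQn : (Q : Subgroup ↥H).Normal := sylow_count_one_normal Q hn3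
    haveI : IsCyclic ↥(Q : Subgroup ↥H) := isCyclic_of_prime_card hQ3
    have hAut : Nat.card (MulAut ↥(Q : Subgroup ↥H)) = 2 := by
      rw [IsCyclic.card_mulAut, hQ3]; decide
    set C := centralizer ((Q : Subgroup ↥H) : Set ↥H) with hC
    have hntop : normalizer ((Q : Subgroup ↥H) : Set ↥H) = ⊤ := Subgroup.normalizer_eq_top_iff.mpr hQn
    have hcards := Subgroup.card_eq_card_quotient_mul_card_subgroup
      ((Q : Subgroup ↥H).normalizerMonoidHom).ker
    have hcardn : Nat.card (normalizer ((Q : Subgroup ↥H) : Set ↥H)) = 30 := by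
      rw [hntop, Subgroup.card_top, hcard]
    have hrange : Nat.card
        (↥(normalizer ((Q : Subgroup ↥H) : Set ↥H)) ⧸ ((Q : Subgroup ↥H).normalizerMonoidHom).ker) ≤ 2 := by
      have e := Nat.card_congr
        (QuotientGroup.quotientKerEquivRange ((Q : Subgroup ↥H).normalizerMonoidHom)).toEquiv
      rw [e]
      calc Nat.card ((Q : Subgroup ↥H).normalizerMonoidHom).range
          ≤ Nat.card (MulAut ↥(Q : Subgroup ↥H)) :=
            Nat.le_of_dvd (by rw [hAut]; omega) (Subgroup.card_subgroup_dvd_card _)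
        _ = 2 := hAut
    have hkerC : Nat.card ((Q : Subgroup ↥H).normalizerMonoidHom).ker = Nat.card C := by
      rw [Subgroup.normalizerMonoidHom_ker]
      have hle : C ≤ normalizer ((Q : Subgroup ↥H) : Set ↥H) := by rw [hntop]; exact le_top
      exact Nat.card_congr (Subgroup.subgroupOfEquivOfLe hle).toEquiv
    haveI : Nonempty ↥C := ⟨1⟩
    have hCge : 15 ≤ Nat.card C := by
      rw [hcardn, hkerC] at hcards
      nlinarith [Nat.card_pos (α := ↥C)]
    have hCdvd : Nat.card C ∣ 30 := by
      rw [← hcard]; exact Subgroup.card_subgroup_dvd_card C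
    have hC5 : 5 ∣ Nat.card C := by
      have hle : Nat.card C ≤ 30 := Nat.le_of_dvd (by norm_num) hCdvd
      interval_cases h : Nat.card C <;> omega
    -- Cauchy in C
    haveI : Fintype ↥C := Fintype.ofFinite _
    rw [Nat.card_eq_fintype_card] at hC5
    obtain ⟨y, hy⟩ := exists_prime_orderOf_dvd_card (G := ↥C) 5 hC5
    have hy5 : orderOf (y : ↥H) = 5 := by rw [orderOf_coe, hy]
    -- nontrivial element of Q
    obtain ⟨q0, hq0⟩ : ∃ q : ↥(Q : Subgroup ↥H), q ≠ 1 := by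
      haveI : Nontrivial ↥(Q : Subgroup ↥H) := by
        apply Finite.one_lt_card_iff_nontrivial.mp
        rw [hQ3]; omega
      exact exists_ne 1
    have hq3 : orderOf (q0 : ↥H) = 3 := by
      rw [orderOf_coe]
      have hdvd : orderOf q0 ∣ 3 := by
        have := orderOf_dvd_natCard q0
        rwa [hQ3] at this
      rcases (Nat.dvd_prime (by norm_num)).mp hdvd with h | h
      · exact absurd (orderOf_eq_one_iff.mp h) hq0
      · exact h
    have hcomm : Commute (q0 : ↥H) ((y : ↥H)) :=
      Subgroup.mem_centralizer_iff.mp y.2 _ q0.2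
    have h15 : orderOf ((q0 : ↥H) * (y : ↥H)) = 15 := by
      rw [hcomm.orderOf_mul_eq_mul_orderOf_of_coprime (by rw [hq3, hy5]; decide), hq3, hy5]
    have h15' : orderOf (((q0 : ↥H) * (y : ↥H) : ↥H) : G6) = 15 := by
      rw [orderOf_coe, h15]
    exact (A6_order_ne _).2.2 h15'
  · -- n5 = 6, n3 = 10 : counting
    have hallP : ∀ P' : Sylow 5 ↥H, Nat.card (P' : Subgroup ↥H) = 5 := fun P' =>
      sylow_card_eq (by rw [hcard]; norm_num) (by rw [hcard]; norm_num) P'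
    have hallQ : ∀ Q' : Sylow 3 ↥H, Nat.card (Q' : Subgroup ↥H) = 3 := fun Q' =>
      sylow_card_eq (by rw [hcard]; norm_num) (by rw [hcard]; norm_num) Q'
    have c5 := count_order_p hallP
    have c3 := count_order_p hallQ
    rw [hn5] at c5
    rw [hn3] at c3
    norm_num at c5 c3
    -- combine
    set f : {g : ↥H // orderOf g = 5} ⊕ {g : ↥H // orderOf g = 3} → ↥H :=
      Sum.elim Subtype.val Subtype.val with hf
    have hinj : Function.Injective f := by
      rintro (⟨a, ha⟩ | ⟨a, ha⟩) (⟨b, hb⟩ | ⟨b, hb⟩) heq <;>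
        simp only [hf, Sum.elim_inl, Sum.elim_inr] at heq
      · simp [heq]
      · exfalso; rw [heq] at ha; omega
      · exfalso; rw [heq] at ha; omega
      · simp [heq]
    have hle := Nat.card_le_card_of_injective f hinj
    rw [Nat.card_sum, hcard] at hle
    omega

private lemma no_order_40_45 (H : Subgroup G6)
    (hcard : Nat.card H = 40 ∨ Nat.card H = 45) : False := by
  haveI : Fact (Nat.Prime 5) := ⟨by norm_num⟩
  obtain ⟨P⟩ : Nonempty (Sylow 5 ↥H) := inferInstance
  have hP5 : Nat.card (P : Subgroup ↥H) = 5 :=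
    sylow_card_eq (by rcases hcard with h | h <;> rw [h] <;> norm_num)
      (by rcases hcard with h | h <;> rw [h] <;> norm_num) P
  have hPidx : (P : Subgroup ↥H).index = 8 ∨ (P : Subgroup ↥H).index = 9 := by
    have := (P : Subgroup ↥H).card_mul_index
    rw [hP5] at this
    rcases hcard with h | h <;> rw [h] at this <;> omega
  have hn5 : Nat.card (Sylow 5 ↥H) = 1 := by
    have hdvd := Sylow.card_dvd_index P
    have hmod := card_sylow_modEq_one 5 ↥H
    rw [Nat.ModEq] at hmod
    have h89 : Nat.card (Sylow 5 ↥H) ∣ 8 ∨ Nat.card (Sylow 5 ↥H) ∣ 9 := by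
      rcases hPidx with h | h <;> rw [h] at hdvd
      · exact Or.inl hdvd
      · exact Or.inr hdvd
    have h9 : Nat.card (Sylow 5 ↥H) ≤ 9 := by
      rcases h89 with h | h <;> have := Nat.le_of_dvd (by norm_num) h <;> omega
    have h1 : 1 ≤ Nat.card (Sylow 5 ↥H) := Nat.card_pos
    interval_cases hh : Nat.card (Sylow 5 ↥H) <;> rcases h89 with h | h <;> omega
  exact normal_order5_contra H (by omega) P hP5 (sylow_count_one_normal P hn5)

/-- Every subgroup `H` of the alternating group A₆ with `|H| ≥ 30` has order
`36`, `60` or `360`. -/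
theorem A6_large_subgroups (H : Subgroup (alternatingGroup (Fin 6)))
    (h : 30 ≤ Nat.card H) :
    Nat.card H = 36 ∨ Nat.card H = 60 ∨ Nat.card H = 360 := by
  have hdvd : Nat.card H ∣ 360 := cardA6 ▸ Subgroup.card_subgroup_dvd_card H
  have hidx := H.index_mul_card
  rw [cardA6] at hidx
  have hne360 : Nat.card H ≠ 360 → H ≠ ⊤ := by
    intro hc he
    rw [he, Subgroup.card_top, cardA6] at hc
    exact hc rfl
  have h3045 := no_order_30 H
  have h4045 := no_order_40_45 H
  have hmem := dvd360_mem hdvd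
  generalize hd : Nat.card ↥H = d at h hdvd hidx hne360 h3045 h4045 hmem ⊢
  fin_cases hmem <;> first
    | omega
    | (exact (h3045 (by omega)).elim)
    | (exact (h4045 (by omega)).elim)
    | (exact (index_ge_six H (hne360 (by omega)) (by omega)).elim)
end

section
/- If L, s and integers 2 ≤ r₁ ≤ ⋯ ≤ rₛ satisfy L = −2 + Σᵢ(1 − 1/rᵢ) with 0 < L < 1/6, then s = 3 and either r₁ = 2 with 3 ≤ r₂ ≤ 5 and r₃ = 1/(1/2 − L − 1/r₂), or (r₁,r₂,r₃) = (3,3,4) with L = 1/12, or (r₁,r₂,r₃) = (3,3,5) with L = 2/15. -/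
open Finset
set_option maxHeartbeats 1000000

/-- Classification of ramification data for a genus-0 quotient when
`0 < L < 1/6`: `s = 3` and the triple of indices is `(2, r₂, r₃)` with
`3 ≤ r₂ ≤ 5` and `r₃ = 1/(1/2 - L - 1/r₂)`, or `(3,3,4)` with `L = 1/12`,
or `(3,3,5)` with `L = 2/15`. -/
theorem riemann_hurwitz_small_L (L : ℝ) (s : ℕ) (r : ℕ → ℕ)
    (hr2 : ∀ i < s, 2 ≤ r i)
    (hmono : ∀ i j, i ≤ j → j < s → r i ≤ r j)
    (hL : L = -2 + ∑ i ∈ Finset.range s, (1 - 1 / (r i : ℝ)))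
    (hL0 : 0 < L) (hL6 : L < 1 / 6) :
    s = 3 ∧
      ((r 0 = 2 ∧ 3 ≤ r 1 ∧ r 1 ≤ 5 ∧ (r 2 : ℝ) = 1 / (1 / 2 - L - 1 / (r 1 : ℝ)))
        ∨ (r 0 = 3 ∧ r 1 = 3 ∧ r 2 = 4 ∧ L = 1 / 12)
        ∨ (r 0 = 3 ∧ r 1 = 3 ∧ r 2 = 5 ∧ L = 2 / 15)) := by
  have key : ∀ i ∈ Finset.range s, (1:ℝ)/2 ≤ 1 - 1/(r i : ℝ) ∧ 1 - 1/(r i : ℝ) ≤ 1 := by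
    intro i hi
    rw [Finset.mem_range] at hi
    have h2 : (2:ℝ) ≤ (r i : ℝ) := by exact_mod_cast hr2 i hi
    have hp : (0:ℝ) < (r i : ℝ) := by linarith
    have h12 : 1/(r i : ℝ) ≤ 1/2 := by
      apply one_div_le_one_div_of_le <;> linarith
    have h0 : 0 < 1/(r i : ℝ) := by positivity
    constructor <;> linarith
  have hlow : (s:ℝ) * (1/2) ≤ ∑ i ∈ Finset.range s, (1 - 1/(r i : ℝ)) := by
    have := Finset.card_nsmul_le_sum (Finset.range s) (fun i => 1 - 1/(r i : ℝ)) (1/2)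
      (fun i hi => (key i hi).1)
    simpa [Finset.card_range, nsmul_eq_mul] using this
  have hhigh : ∑ i ∈ Finset.range s, (1 - 1/(r i : ℝ)) ≤ (s:ℝ) := by
    have := Finset.sum_le_card_nsmul (Finset.range s) (fun i => 1 - 1/(r i : ℝ)) 1
      (fun i hi => (key i hi).2)
    simpa [Finset.card_range, nsmul_eq_mul] using this
  have hs3 : 3 ≤ s := by
    by_contra h
    push_neg at h
    have : (s:ℝ) ≤ 2 := by exact_mod_cast Nat.lt_succ_iff.mp h
    linarith
  have hs4 : s ≤ 4 := by
    by_contra h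
    push_neg at h
    have : (5:ℝ) ≤ (s:ℝ) := by exact_mod_cast h
    linarith
  -- rule out s = 4
  have hs : s = 3 := by
    interval_cases s
    · rfl
    · exfalso
      rw [Finset.sum_range_succ, Finset.sum_range_succ, Finset.sum_range_succ,
        Finset.sum_range_succ, Finset.sum_range_zero] at hL
      have k0 := key 0 (by simp)
      have k1 := key 1 (by simp)
      have k2 := key 2 (by simp)
      have h32 : (2:ℝ) ≤ (r 3 : ℝ) := by exact_mod_cast hr2 3 (by norm_num)
      have h3p : (0:ℝ) < (r 3 : ℝ) := by linarith
      -- 1/r3 > 1/3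
      have h13 : (1:ℝ)/3 < 1/(r 3 : ℝ) := by
        linarith [k0.1, k1.1, k2.1]
      have hr3lt : (r 3 : ℝ) < 3 := by
        have hm : (r 3:ℝ) * (1/(r 3:ℝ)) = 1 := mul_one_div_cancel (ne_of_gt h3p)
        nlinarith [mul_lt_mul_of_pos_left h13 h3p]
      have hr3 : r 3 = 2 := by
        have h1 : r 3 < 3 := by exact_mod_cast hr3lt
        have h2 : 2 ≤ r 3 := hr2 3 (by norm_num)
        omega
      have h0 : r 0 = 2 := by have := hr2 0 (by norm_num); have := hmono 0 3 (by norm_num) (by norm_num); omega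
      have h1 : r 1 = 2 := by have := hr2 1 (by norm_num); have := hmono 1 3 (by norm_num) (by norm_num); omega
      have h2 : r 2 = 2 := by have := hr2 2 (by norm_num); have := hmono 2 3 (by norm_num) (by norm_num); omega
      rw [h0, h1, h2, hr3] at hL
      norm_num at hL
      linarith
  subst hs
  refine ⟨rfl, ?_⟩
  rw [Finset.sum_range_succ, Finset.sum_range_succ, Finset.sum_range_succ,
    Finset.sum_range_zero] at hL
  have h02 : 2 ≤ r 0 := hr2 0 (by norm_num)
  have h12 : 2 ≤ r 1 := hr2 1 (by norm_num)
  have h22 : 2 ≤ r 2 := hr2 2 (by norm_num)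
  have h01 : r 0 ≤ r 1 := hmono 0 1 (by norm_num) (by norm_num)
  have h12' : r 1 ≤ r 2 := hmono 1 2 (by norm_num) (by norm_num)
  have c0 : (2:ℝ) ≤ (r 0 : ℝ) := by exact_mod_cast h02
  have c1 : (2:ℝ) ≤ (r 1 : ℝ) := by exact_mod_cast h12
  have c2 : (2:ℝ) ≤ (r 2 : ℝ) := by exact_mod_cast h22
  have p0 : (0:ℝ) < (r 0 : ℝ) := by linarith
  have p1 : (0:ℝ) < (r 1 : ℝ) := by linarith
  have p2 : (0:ℝ) < (r 2 : ℝ) := by linarith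
  have m01 : (r 0 : ℝ) ≤ (r 1 : ℝ) := by exact_mod_cast h01
  have m12 : (r 1 : ℝ) ≤ (r 2 : ℝ) := by exact_mod_cast h12'
  have i01 : 1/(r 1 : ℝ) ≤ 1/(r 0 : ℝ) := one_div_le_one_div_of_le p0 m01
  have i12 : 1/(r 2 : ℝ) ≤ 1/(r 1 : ℝ) := one_div_le_one_div_of_le p1 m12
  -- L = 1 - 1/r0 - 1/r1 - 1/r2
  have hLe : 1/(r 0:ℝ) + 1/(r 1:ℝ) + 1/(r 2:ℝ) = 1 - L := by linarith
  -- r0 ≤ 3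
  have hr0le : r 0 ≤ 3 := by
    by_contra h
    push_neg at h
    have : (4:ℝ) ≤ (r 0 : ℝ) := by exact_mod_cast h
    have : 1/(r 0:ℝ) ≤ 1/4 := by apply one_div_le_one_div_of_le <;> linarith
    linarith
  interval_cases hr0 : r 0
  · -- r 0 = 2
    left
    push_cast at hLe
    have hr1ge : 3 ≤ r 1 := by
      by_contra h
      push_neg at h
      have e : r 1 = 2 := by omega
      rw [e] at hLe
      push_cast at hLe
      have : 0 < 1/(r 2:ℝ) := by positivity
      linarith
    have hr1le : r 1 ≤ 5 := by
      by_contra h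
      push_neg at h
      have : (6:ℝ) ≤ (r 1 : ℝ) := by exact_mod_cast h
      have : 1/(r 1:ℝ) ≤ 1/6 := by apply one_div_le_one_div_of_le <;> linarith
      have : 0 < 1/(r 2:ℝ) := by positivity
      linarith
    refine ⟨rfl, hr1ge, hr1le, ?_⟩
    have he : 1/(r 2:ℝ) = 1/2 - L - 1/(r 1:ℝ) := by linarith
    rw [← he, one_div_one_div]
  · -- r 0 = 3
    right
    push_cast at hLe
    have hr1le : r 1 ≤ 3 := by
      by_contra h
      push_neg at h
      have : (4:ℝ) ≤ (r 1 : ℝ) := by exact_mod_cast h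
      have : 1/(r 1:ℝ) ≤ 1/4 := by apply one_div_le_one_div_of_le <;> linarith
      linarith
    have hr1 : r 1 = 3 := by omega
    rw [hr1] at hLe
    push_cast at hLe
    have hr2lt : r 2 < 6 := by
      by_contra h
      push_neg at h
      have : (6:ℝ) ≤ (r 2 : ℝ) := by exact_mod_cast h
      have : 1/(r 2:ℝ) ≤ 1/6 := by apply one_div_le_one_div_of_le <;> linarith
      linarith
    have hr2gt : 3 < r 2 := by
      by_contra h
      push_neg at h
      have : (r 2 : ℝ) ≤ 3 := by exact_mod_cast h
      have : 1/3 ≤ 1/(r 2:ℝ) := by apply one_div_le_one_div_of_le <;> linarith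
      linarith
    have : r 2 = 4 ∨ r 2 = 5 := by omega
    rcases this with e | e
    · left
      have c : (1:ℝ)/(r 2:ℝ) = 1/4 := by rw [e]; norm_num
      exact ⟨rfl, hr1, e, by linarith⟩
    · right
      have c : (1:ℝ)/(r 2:ℝ) = 1/5 := by rw [e]; norm_num
      exact ⟨rfl, hr1, e, by linarith⟩
end

section
/- Suppose κ, λ, μ, α, β, γ, δ ∈ ℂ with α ≠ 0 satisfy: κ²w⁶ + 2κλw⁵ + (2κμ + λ²)w⁴ + 2λμw³ + μ²w² − w + 1 = (αw³ + βw² + γw + δ)² as polynomials in w, where additionally κ = α. Then no such solution exists (the system is inconsistent). -/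
/-- There are no `κ, λ, μ, α, β, γ, δ ∈ ℂ` with `α ≠ 0`, `κ = α`, such that
`κ²w⁶ + 2κλw⁵ + (2κμ + λ²)w⁴ + 2λμw³ + μ²w² − w + 1 = (αw³ + βw² + γw + δ)²`
as polynomials in `w`. -/
theorem genus10_case_i_impossible :
    ¬ ∃ (κ l μ α β γ δ : ℂ), α ≠ 0 ∧ κ = α ∧
      ∀ w : ℂ,
        κ ^ 2 * w ^ 6 + 2 * κ * l * w ^ 5 + (2 * κ * μ + l ^ 2) * w ^ 4 +
            2 * l * μ * w ^ 3 + μ ^ 2 * w ^ 2 - w + 1 =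
          (α * w ^ 3 + β * w ^ 2 + γ * w + δ) ^ 2 := by
  rintro ⟨κ, l, μ, α, β, γ, δ, hα, rfl, h⟩
  have h0 := h 0
  have h1 := h 1
  have hm1 := h (-1)
  have h2 := h 2
  have hm2 := h (-2)
  have h3 := h 3
  have hm3 := h (-3)
  have h2α : (2 : ℂ) * κ ≠ 0 := mul_ne_zero two_ne_zero hα
  have E5 : (2 * κ) * (l - β) = 0 := by
    linear_combination (-1/240 : ℂ) * hm3 + (1/60 : ℂ) * hm2 + (-1/48 : ℂ) * hm1 +
      (1/48 : ℂ) * h1 + (-1/60 : ℂ) * h2 + (1/240 : ℂ) * h3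
  have hβ : β = l := (sub_eq_zero.mp ((mul_eq_zero.mp E5).resolve_left h2α)).symm
  have E4 : (2 * κ) * (μ - γ) = 0 := by
    linear_combination (-1/144 : ℂ) * hm3 + (1/12 : ℂ) * hm2 + (-13/48 : ℂ) * hm1 +
      (7/18 : ℂ) * h0 + (-13/48 : ℂ) * h1 + (1/12 : ℂ) * h2 + (-1/144 : ℂ) * h3 +
      (l + β) * hβ
  have hγ : γ = μ := (sub_eq_zero.mp ((mul_eq_zero.mp E4).resolve_left h2α)).symm
  have E3 : (2 * κ) * δ = 0 := by
    linear_combination (-1/48 : ℂ) * hm3 + (1/6 : ℂ) * hm2 + (-13/48 : ℂ) * hm1 +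
      (13/48 : ℂ) * h1 + (-1/6 : ℂ) * h2 + (1/48 : ℂ) * h3 +
      (2 * γ - 4 * μ) * hβ + (2 * l - 4 * β) * hγ
  have hδ : δ = 0 := (mul_eq_zero.mp E3).resolve_left h2α
  exact one_ne_zero (by linear_combination h0 + (δ + 0) * hδ : (1 : ℂ) = 0)
end

section
/- If κ, λ ∈ ℂ and the polynomial κ²w⁶ + 2κλw⁵ + λ²w⁴ − w + 1 factors as (w² + αw + β)²(γw² + δw + ε) for some α, β, γ, δ, ε ∈ ℂ, then 50κ = −λ(256λ² − 25) and 442368λ⁴ − 72000λ² + 3125 = 0. -/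
set_option maxHeartbeats 1000000 in
/-- If `κ²w⁶ + 2κλw⁵ + λ²w⁴ − w + 1` factors as `(w² + αw + β)²(γw² + δw + ε)`,
then `50κ = −λ(256λ² − 25)` and `442368λ⁴ − 72000λ² + 3125 = 0`. -/
theorem genus10_elimination (κ l α β γ δ ε : ℂ)
    (h : ∀ w : ℂ,
      κ ^ 2 * w ^ 6 + 2 * κ * l * w ^ 5 + l ^ 2 * w ^ 4 - w + 1 =
        (w ^ 2 + α * w + β) ^ 2 * (γ * w ^ 2 + δ * w + ε)) :
    50 * κ = -l * (256 * l ^ 2 - 25) ∧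
      442368 * l ^ 4 - 72000 * l ^ 2 + 3125 = 0 := by
  have hE0 : 1 + (-1) * β ^ 2 * ε = 0 := by
    linear_combination h 0
  have hE1 : -1 + (-1) * β ^ 2 * δ + -2 * α * β * ε = 0 := by
    linear_combination (3 / 4) * h 1 + (-3 / 4) * h (-1) + (-3 / 20) * h 2 + (3 / 20) * h (-2) + (1 / 60) * h 3 + (-1 / 60) * h (-3)
  have hE2 : -2 * β * ε + (-1) * β ^ 2 * γ + -2 * α * β * δ + (-1) * α ^ 2 * ε = 0 := by
    linear_combination (-49 / 36) * h 0 + (3 / 4) * h 1 + (3 / 4) * h (-1) + (-3 / 40) * h 2 + (-3 / 40) * h (-2) + (1 / 180) * h 3 + (1 / 180) * h (-3)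
  have hE3 : -2 * β * δ + -2 * α * ε + -2 * α * β * γ + (-1) * α ^ 2 * δ = 0 := by
    linear_combination (-13 / 48) * h 1 + (13 / 48) * h (-1) + (1 / 6) * h 2 + (-1 / 6) * h (-2) + (-1 / 48) * h 3 + (1 / 48) * h (-3)
  have hE4 : (-1) * ε + l ^ 2 + -2 * β * γ + -2 * α * δ + (-1) * α ^ 2 * γ = 0 := by
    linear_combination (7 / 18) * h 0 + (-13 / 48) * h 1 + (-13 / 48) * h (-1) + (1 / 12) * h 2 + (1 / 12) * h (-2) + (-1 / 144) * h 3 + (-1 / 144) * h (-3)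
  have hE5 : (-1) * δ + 2 * κ * l + -2 * α * γ = 0 := by
    linear_combination (1 / 48) * h 1 + (-1 / 48) * h (-1) + (-1 / 60) * h 2 + (1 / 60) * h (-2) + (1 / 240) * h 3 + (-1 / 240) * h (-3)
  have hE6 : (-1) * γ + κ ^ 2 = 0 := by
    linear_combination (-1 / 36) * h 0 + (1 / 48) * h 1 + (1 / 48) * h (-1) + (-1 / 120) * h 2 + (-1 / 120) * h (-2) + (1 / 720) * h 3 + (1 / 720) * h (-3)
  have hG0 : -1 + β ^ 2 * l ^ 2 + -2 * β ^ 3 * κ ^ 2 + -4 * α * β ^ 2 * κ * l + 3 * α ^ 2 * β ^ 2 * κ ^ 2 = 0 := by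
    linear_combination -1 * hE0 + β ^ 2 * hE4 + -2 * α * β ^ 2 * hE5 + (-2 * β ^ 3 + 3 * α ^ 2 * β ^ 2) * hE6
  have hG1 : 1 + 2 * β ^ 2 * κ * l + 2 * α * β * l ^ 2 + -6 * α * β ^ 2 * κ ^ 2 + -8 * α ^ 2 * β * κ * l + 6 * α ^ 3 * β * κ ^ 2 = 0 := by
    linear_combination -1 * hE1 + 2 * α * β * hE4 + (β ^ 2 + -4 * α ^ 2 * β) * hE5 + (-6 * α * β ^ 2 + 6 * α ^ 3 * β) * hE6
  have hG2 : 2 * β * l ^ 2 + -3 * β ^ 2 * κ ^ 2 + -4 * α * β * κ * l + α ^ 2 * l ^ 2 + -4 * α ^ 3 * κ * l + 3 * α ^ 4 * κ ^ 2 = 0 := by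
    linear_combination -1 * hE2 + (2 * β + α ^ 2) * hE4 + (-2 * α * β + -2 * α ^ 3) * hE5 + (-3 * β ^ 2 + 3 * α ^ 4) * hE6
  have hG3 : 4 * β * κ * l + 2 * α * l ^ 2 + -6 * α * β * κ ^ 2 + -6 * α ^ 2 * κ * l + 4 * α ^ 3 * κ ^ 2 = 0 := by
    linear_combination -1 * hE3 + 2 * α * hE4 + (2 * β + -3 * α ^ 2) * hE5 + (-6 * α * β + 4 * α ^ 3) * hE6
  have hG4 : (4 / 9) * β * l ^ 2 + (-2 / 3) * β ^ 2 * κ ^ 2 + (-14 / 9) * α * β * κ * l + (-1 / 9) * α ^ 2 * l ^ 2 + α ^ 2 * β * κ ^ 2 + (1 / 9) * α ^ 3 * κ * l = 0 := by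
    linear_combination (2 / 9) * hG2 + (-1 / 6) * α * hG3
  have hG5 : 3 + β ^ 2 * l ^ 2 + -2 * α * β ^ 2 * κ * l + (-1) * α ^ 2 * β * l ^ 2 + α ^ 3 * β * κ * l = 0 := by
    linear_combination -3 * hG0 + 9 * β * hG4
  have hG6 : -9 * β ^ 2 * κ * l + (-1 / 2) * α * β * l ^ 2 + (15 / 2) * α * β ^ 2 * κ ^ 2 + (-1 / 2) * α ^ 2 * β * κ * l + (-1) * α ^ 3 * l ^ 2 + α ^ 4 * κ * l = 0 := by
    linear_combination (-9 / 4) * β * hG3 + 9 * α * hG4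
  have hG7 : (1 / 3) + (-4 / 3) * β ^ 2 * κ * l + (-1 / 3) * α * β * l ^ 2 + α * β ^ 2 * κ ^ 2 + (1 / 3) * α ^ 2 * β * κ * l = 0 := by
    linear_combination (1 / 3) * hG1 + (-1 / 2) * β * hG3
  have hG8 : -1 + (-1) * β ^ 2 * l ^ 2 + β ^ 3 * κ ^ 2 + (1 / 2) * α + α * β ^ 2 * κ * l = 0 := by
    linear_combination (-1 / 2) * hG0 + (-1 / 2) * hG5 + (3 / 2) * α * hG7
  have hG9 : (-1 / 2) * β + 2 * β ^ 3 * κ * l + (-3 / 2) * α + (-1) * α * β ^ 2 * l ^ 2 + (3 / 4) * α ^ 2 + α ^ 2 * β ^ 2 * κ * l = 0 := by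
    linear_combination (-3 / 2) * β * hG7 + (3 / 2) * α * hG8
  have hG10 : (-9 / 7) * l + (3 / 14) * β * κ + (-1) * β ^ 2 * l ^ 3 + (4 / 7) * α * l + (9 / 14) * α * κ + α * β ^ 2 * κ * l ^ 2 + (-9 / 28) * α ^ 2 * κ = 0 := by
    linear_combination (3 / 7) * β * l * hG4 + (-1 / 21) * l * hG5 + (8 / 7) * l * hG8 + (-3 / 7) * κ * hG9
  have hG11 : (-1) * β + β ^ 3 * κ * l + (-3 / 2) * α + (1 / 4) * α ^ 2 = 0 := by
    linear_combination (-3 / 4) * β ^ 2 * hG3 + -1 * α * hG5 + ((-9 / 2) * β + 3 * α ^ 2) * hG7 + -1 * hG9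
  have hG12 : 4 * l + 11 * β * κ + (-1) * α * l + 12 * α * κ + α ^ 2 * κ = 0 := by
    linear_combination 14 * l * hG8 + -14 * hG10 + -14 * κ * hG11
  have hG13 : (-4 / 9) * l ^ 2 + (-1 / 27) * β * l ^ 2 + (-8 / 9) * β * κ * l + (35 / 36) * β ^ 2 * κ ^ 2 + (4 / 27) * α * l ^ 2 + (-4 / 3) * α * κ * l + (4 / 27) * α * β * κ * l + α * β * κ ^ 2 = 0 := by
    linear_combination (-1 / 12) * hG4 + ((-1 / 9) * l + (1 / 12) * β * κ + (1 / 108) * α * l) * hG12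
  have hG14 : (-35 / 72) + (7 / 18) * β * l ^ 2 + (349 / 72) * β ^ 2 * κ * l + β ^ 2 * κ ^ 2 + (1 / 6) * α * β * l ^ 2 + 6 * α * β * κ * l + (2 / 9) * α ^ 2 * l ^ 2 = 0 := by
    linear_combination (-35 / 24) * hG7 + (2 * l + (19 / 72) * β * l + (-3 / 2) * β * κ) * hG12 + (18 + (3 / 2) * α) * hG13
  have hG15 : (-24 / 349) + (-1632 / 349) * β * l ^ 2 + (-4392 / 349) * β ^ 2 * κ * l + (-35 / 349) * α + (460 / 349) * α * β * l ^ 2 + (-4896 / 349) * α * β * κ * l + α * β ^ 2 * κ * l + (12 / 349) * α ^ 2 * β * l ^ 2 + (16 / 349) * α ^ 3 * l ^ 2 = 0 := by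
    linear_combination (-72 / 349) * hG7 + (-408 / 349) * β * l * hG12 + (72 / 349) * α * hG14
  have hG16 : (21945 / 1424) + (-6984 / 89) * β * l ^ 2 + (35249 / 1424) * β ^ 2 * l ^ 2 + (-58983 / 356) * β ^ 2 * κ * l + (-42875 / 2848) * α + (11631 / 356) * α * β * l ^ 2 + (-20952 / 89) * α * β * κ * l + (3 / 4) * α ^ 2 * β * l ^ 2 + α ^ 3 * l ^ 2 = 0 := by
    linear_combination (-36645 / 1424) * hG8 + (28269 / 178) * β * l * hG12 + (9423 / 356) * β * hG13 + (-9423 / 356) * α * hG14 + (427525 / 2848) * hG15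
  have hG17 : (-1225 / 14736) + (384 / 7675) * l ^ 2 + (-5184 / 7675) * κ * l + (269 / 3684) * β * l ^ 2 + (498 / 7675) * β * κ * l + (-14256 / 7675) * β * κ ^ 2 + (12215 / 14736) * β ^ 2 * κ * l + (-8 / 307) * α * l ^ 2 + (576 / 1535) * α * κ * l + (-15552 / 7675) * α * κ ^ 2 + (35 / 1228) * α * β * l ^ 2 + α * β * κ * l + (35 / 921) * α ^ 2 * l ^ 2 = 0 := by
    linear_combination (-27 / 7675) * hG3 + ((-54 / 7675) * l + (-1296 / 7675) * κ + (108 / 7675) * α * κ) * hG12 + (-54 / 307) * hG13 + (105 / 614) * hG14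
  have hG18 : (-35 / 349) * l + (1039891968 / 330110375) * l ^ 3 + (-386820 / 377269) * κ + (2239197696 / 330110375) * κ * l ^ 2 + (-2750091264 / 330110375) * κ ^ 2 * l + (180172 / 377269) * β * l ^ 3 + (2018913696 / 330110375) * β * κ * l ^ 2 + (5861776896 / 330110375) * β * κ ^ 2 * l + (-7562750976 / 330110375) * β * κ ^ 3 + β ^ 2 * κ * l ^ 2 + (-422784 / 377269) * α * l ^ 3 + (467016192 / 66022075) * α * κ * l ^ 2 + (7634290176 / 330110375) * α * κ ^ 2 * l + (-8250273792 / 330110375) * α * κ ^ 3 + (12 / 349) * α * β * l ^ 3 + (16 / 349) * α ^ 2 * l ^ 3 = 0 := by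
    linear_combination (-176832 / 377269) * l ^ 2 * hG12 + (-162862272 / 13204415) * l * hG13 + (666804 / 377269) * l * hG14 + ((-120542936 / 13204415) * l + (162862272 / 13204415) * κ) * hG17
  have hG19 : (-35 / 349) + (2800512 / 493835) * l ^ 2 + (-1202688 / 493835) * κ * l + (159284 / 493835) * β * l ^ 2 + (7969824 / 493835) * β * κ * l + (-3307392 / 493835) * β * κ ^ 2 + β ^ 2 * κ * l + (-655488 / 493835) * α * l ^ 2 + (31104 / 1745) * α * κ * l + (-3608064 / 493835) * α * κ ^ 2 + (12 / 349) * α * β * l ^ 2 + (16 / 349) * α ^ 2 * l ^ 2 = 0 := by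
    linear_combination ((117888 / 98767) * l + (-3182976 / 493835) * κ + (942490 / 296301) * β * l) * hG12 + (-2917728 / 493835) * hG13 + (567336 / 98767) * hG14 + (53725 / 20376) * hG15 + ((-3413840 / 98767) + (-942490 / 296301) * α) * hG17
  have hG20 : (665879 / 6601824) * l ^ 3 + (30625 / 746496) * κ + (-33821 / 91692) * κ * l ^ 2 + (1 / 3) * κ ^ 2 * l + (-2275 / 366768) * β * l ^ 3 + (1323769 / 3300912) * β * κ * l ^ 2 + (-717743 / 733536) * β * κ ^ 2 * l + (11 / 12) * β * κ ^ 3 + (-2275 / 275076) * α * l ^ 3 + (1115 / 2592) * α * κ * l ^ 2 + (-37217 / 30564) * α * κ ^ 2 * l + α * κ ^ 3 = 0 := by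
    linear_combination (-330110375 / 8250273792) * hG18 + (330110375 / 8250273792) * l * hG19
  have hG21 : (-103614807 / 6438250) * l ^ 3 + (-5943 / 832) * κ + (-74022264 / 3219125) * κ * l ^ 2 + (-64463323 / 7725900) * β * l ^ 3 + (-1051954373 / 12876500) * β * κ * l ^ 2 + (-504430587 / 6438250) * β * κ ^ 2 * l + (-6876447 / 643825) * α * l ^ 3 + (-49525 / 9984) * α * κ + (-235743 / 4550) * α * κ * l ^ 2 + (-222066792 / 3219125) * α * κ ^ 2 * l + (3 / 4) * α * β * l ^ 3 + α ^ 2 * l ^ 3 = 0 := by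
    linear_combination ((276491 / 3640) * l ^ 2 + (-334953 / 2275) * κ * l + (275076 / 2275) * κ ^ 2) * hG12 + ((9315063 / 18200) * l + (252153 / 2275) * κ) * hG13 + ((5143 / 208) * l + (-28017 / 260) * κ) * hG14 + (-215303 / 1365) * l * hG17 + (5565503 / 510848) * hG18 + ((-14493324816 / 12296375) + (-275076 / 2275) * α) * hG20
  have hG22 : (-126899 / 1043712) * l ^ 3 + (-2723875 / 33398784) * κ + (1 / 3) * κ * l ^ 2 + (715 / 57984) * β * l ^ 3 + (-332209 / 521856) * β * κ * l ^ 2 + (68099 / 115968) * β * κ ^ 2 * l + (715 / 43488) * α * l ^ 3 + (-83485 / 115968) * α * κ * l ^ 2 + α * κ ^ 2 * l = 0 := by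
    linear_combination (2002225 / 106806528) * l ^ 2 * hG12 + (698776525 / 1708904448) * l * hG14 + (-694772075 / 284817408) * l * hG17 + (755377423525 / 18886811959296) * hG18 + (-698776525 / 1708904448) * κ * hG19 + (-84051 / 42280) * hG20
  have hG23 : (10352131 / 84540672) * l ^ 4 + (3516275 / 2705301504) * κ * l + (-20 / 81) * κ * l ^ 3 + (1925 / 7776) * κ ^ 2 + (-923 / 4696704) * β * l ^ 4 + (9215009 / 42270336) * β * κ * l ^ 3 + (-157051 / 1043712) * β * κ ^ 2 * l ^ 2 + β * κ ^ 3 * l + (-923 / 3522528) * α * l ^ 4 + (4737127 / 28180224) * α * κ * l ^ 3 = 0 := by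
    linear_combination (38656 / 12735) * l * hG20 + ((147028793 / 97308135) * l + (-38656 / 12735) * κ) * hG22
  have hG24 : (-4087 / 11583) * l ^ 3 + (11225 / 370656) * κ + (-18 / 143) * β * l ^ 3 + (-1726 / 3861) * β * κ * l ^ 2 + β * κ ^ 2 * l + (-24 / 143) * α * l ^ 3 + (-409 / 1287) * α * κ * l ^ 2 = 0 := by
    linear_combination ((-356360 / 127413) * l ^ 2 + (46696448 / 12019293) * κ * l) * hG12 + (82263592 / 36057879) * l * hG13 + (-719806430 / 324520911) * l * hG14 + (10219610540 / 973562733) * l * hG17 + (612747873185 / 298883759031) * hG18 + (616409812992 / 12030421975) * hG20 + (48320 / 756459) * hG21 + ((-42251008 / 7082075) + (-46696448 / 12019293) * α) * hG22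
  have hG25 : (1 / 3) * l ^ 3 + (25 / 288) * κ + (326 / 2133) * β * l ^ 3 + (106 / 79) * β * κ * l ^ 2 + (1304 / 6399) * α * l ^ 3 + (3575 / 51192) * α * κ + α * κ * l ^ 2 = 0 := by
    linear_combination (-760331 / 27484416) * l ^ 2 * hG12 + (265837 / 3053824) * l * hG13 + (-9304295 / 109937664) * l * hG14 + (25064897 / 54968832) * l * hG17 + (19596732155 / 607515531264) * hG18 + (259899354 / 322381225) * hG20 + (-5577 / 381728) * hG21 + (3587348193 / 23631349000) * hG22 + ((-3150487197 / 18445096960) + (-265837 / 3053824) * α) * hG24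
  have hG26 : (30205 / 113076) * l + (4174295 / 2713824) * κ + (-47454326 / 20099259) * β * l ^ 3 + (-11225 / 62208) * β * κ + (-11277466 / 2233251) * β * κ * l ^ 2 + (3 / 4) * β ^ 2 * l ^ 3 + (-225549320 / 60297777) * α * l ^ 3 + (-10660878865 / 3859057728) * α * κ + α * β * l ^ 3 = 0 := by
    linear_combination (143 / 24) * l * hG14 + (-8131 / 216) * l * hG17 + (-1086641 / 3182976) * hG18 + (-2816573472 / 330110375) * hG20 + (3452 / 28269) * hG21 + (-237103595788 / 3370423875) * hG22 + ((-4676180643 / 219227840) + (-143 / 24) * β) * hG24 + (-2705080798 / 87586785) * hG25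
  have hG27 : (2001860 / 104804617) * l + (242069035 / 2515310808) * κ + (401194280 / 943241553) * β * l ^ 3 + (148194125 / 5030621616) * β * κ + β * κ * l ^ 2 + (20 / 27) * α * l ^ 3 + (2907405685 / 11318898636) * α * κ + (55831275 / 3353747744) * α * β * κ = 0 := by
    linear_combination (-14290573149 / 59948240924) * l * hG17 + (-35999642100087 / 294465759418688) * hG18 + (-43313449044111552 / 14175885595997125) * hG20 + (219767256 / 14987060231) * hG21 + (-17594581314404088 / 48245220266117875) * hG22 + (95540145365799 / 941427175470496) * hG24 + ((389782109901276 / 139304724847145) + (14290573149 / 59948240924) * β) * hG25 + (-728039826 / 14987060231) * hG26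
  have hG28 : (3021295688284972556475 / 19470393401549879379712) * l ^ 2 + (145274759872873558695 / 38940786803099758759424) * κ * l + (176468326515 / 656459406592) * κ ^ 2 + (796816261776783375 / 160912342161569251072) * β * l ^ 2 + (9785036156809119 / 17768589019607912) * β * l ^ 4 + (31812461091957727945215 / 77881573606199517518848) * β * κ * l + (18660665112884460465435 / 38940786803099758759424) * β * κ ^ 2 + (-3027901794751776825 / 110627235236078860112) * α * l ^ 2 + α * l ^ 4 + (17762767001134190065 / 34399988341960917632) * α * κ * l + (1018204070499912418065 / 885017881888630880896) * α * κ ^ 2 = 0 := by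
    linear_combination (-122102998425 / 2625837626368) * hG13 + (474844993875 / 10503350505472) * hG14 + (-159530118104919704625 / 550399813471374682112) * hG17 + (648874042506893928375 / 30722316861038550437888) * hG19 + (-229207697379 / 82057425824) * l * hG24 + (-34695254043999 / 11734211892832) * l * hG25 + ((225495422343 / 147330378184) * l + (229207697379 / 82057425824) * κ) * hG27
  have hG29 : (175203 / 397892) * l + (-164060667 / 197354432) * κ + β * l ^ 3 + (710289425 / 1578835456) * β * κ + (24279201 / 394708864) * α * κ + (-45 / 352) * α * β * κ = 0 := by
    linear_combination (8489173977 / 986772160) * l * hG13 + (-126340603333479 / 38144664616960) * l * hG14 + (94637625909447 / 7628932923392) * l * hG17 + (11064313024637535 / 37473318519701504) * hG18 + (14518591550929373427 / 1967492115774046400) * hG20 + (104451111026859 / 416015248478720) * hG21 + ((5431568491946308056273 / 121745916978096320000) + (-8489173977 / 986772160) * β) * hG22 + (19330236423587981493009 / 1045296553937571020800) * hG24 + (524453329018513017 / 9978998024799232) * hG25 + (12262140189 / 86692419584) * hG26 + (-104804617 / 13647645) * hG27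
  have hG30 : (-347529591 / 271007225) + (-797550049240733952 / 3798322087529375) * l ^ 2 + (185633196907401216 / 542617441075625) * κ * l + (157 / 8) * β + (-125843553961763256 / 759664417505875) * β * l ^ 2 + (-3109423665907499904 / 3798322087529375) * β * κ * l + (510491291495353344 / 542617441075625) * β * κ ^ 2 + (11315 / 356) * β ^ 2 * l ^ 2 + (48975 / 2848) * α + (-14238489071642112 / 108523488215125) * α * l ^ 2 + (-1997027755363584 / 2684326563625) * α * κ * l + (556899590722203648 / 542617441075625) * α * κ ^ 2 + (99467305065216 / 2684326563625) * α * β * l ^ 2 + (3 / 4) * α * β ^ 2 * l ^ 2 + (-349 / 64) * α ^ 2 + (118145806560288 / 2684326563625) * α ^ 2 * l ^ 2 + α ^ 2 * β * l ^ 2 = 0 := by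
    linear_combination (-349 / 16) * hG11 + ((28646784 / 61075) * l + (-3323026944 / 17284225) * κ) * hG12 + (-10622467008 / 86421125) * hG13 + (14551465536 / 86421125) * hG14 + (14736 / 12215) * hG16 + ((-451116380448 / 1538296025) + (921 / 35) * β) * hG17 + ((-82389211704 / 219756575) + (-921 / 35) * α) * hG19
  have hG31 : (-185296 / 45215) * l + (732672 / 1401665) * κ + (-3587124 / 280333) * β * κ + (4 / 3) * α * l + (-19573416 / 1401665) * α * κ + α * β * κ = 0 := by
    linear_combination ((-4 / 3) + (-68256 / 3575) * l ^ 2) * hG12 + (-91584 / 3575) * l * hG17 + (4661244 / 219505) * hG18 + (51275317248 / 96614375) * hG20 + (-41728 / 10725) * hG21 + (-1900685463552 / 11508371875) * hG22 + (-794508912 / 7017725) * hG24 + ((-3298014848 / 6645925) + (68256 / 3575) * α) * hG25 + (72544 / 1185) * hG27 + (705790976 / 4716207765) * hG29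
  have hG32 : (-280333 / 4282794) * l ^ 2 + (226114 / 2141397) * κ * l + (-16960 / 79311) * κ ^ 2 + (-3644329 / 17131176) * β * κ * l + (435283 / 475866) * β * κ ^ 2 + (-1401665 / 6424191) * α * κ * l + α * κ ^ 2 = 0 := by
    linear_combination (7008325 / 17131176) * hG13 + (-245291375 / 616722336) * hG14 + (2151555775 / 925083504) * hG17 + (-7008325 / 17131176) * κ * hG31
  have hG33 : (4055022258255 / 15694682029576) * l + (-6295401 / 19722289) * l ^ 3 + (723650071428927 / 973070285833712) * κ + (-47402982 / 19722289) * κ * l ^ 2 + (-44509824 / 19722289) * κ ^ 2 * l + (788970798148785 / 707687480606336) * β * κ + (-45 / 352) * α * l + α * l ^ 3 + (2966646390349625 / 1946140571667424) * α * κ = 0 := by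
    linear_combination (-1040718942 / 98611445) * hG22 + (-1317514425309 / 381192401792) * hG24 + (-18030991149 / 2820287327) * hG25 + (15954416505 / 6232243324) * hG27 + (-861188902925916 / 2066986945008313) * hG29 + (-135 / 1408) * hG31 + (1040718942 / 98611445) * l * hG32
  have hG34 : (-35 / 16) + (68956595583614 / 81797011781277) * l ^ 2 + (83474374398272 / 6292077829329) * κ * l + (26126554042368 / 2097359276443) * κ ^ 2 + (-9989090104 / 3094035321) * β * l ^ 2 + (-3917848825936751 / 163594023562554) * β * κ * l + (-594742459361424 / 27265670593759) * β * κ ^ 2 + (-11943659996 / 3094035321) * α * l ^ 2 + (-655802633014066 / 245391035343831) * α * κ * l + (3 / 4) * α * β * l ^ 2 + α ^ 2 * l ^ 2 = 0 := by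
    linear_combination (-747347553 / 7288658) * hG13 + (171903789 / 29154632) * hG14 + (95537005 / 43731948) * hG17 + (-2764277933605 / 322216992864) * hG19 + ((-23107211712 / 396671195) + (747347553 / 7288658) * β) * hG32
  have hG35 : (14881082006721295 / 41345142925685994) * l + (292539492090722 / 48006635045859) * l ^ 3 + (404153664643001307065 / 107662752178486328376) * κ + (-108607869170386 / 1778023520217) * κ * l ^ 2 + (2973351175364 / 65852722971) * κ ^ 2 * l + (768 / 7) * κ ^ 3 + (1428211845595076287625 / 3445208069711562508032) * β * κ + β * κ ^ 3 + (-458751191572339703875 / 861302017427890627008) * α * κ = 0 := by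
    linear_combination (951732 / 1855) * hG20 + (7268467681 / 14174055) * hG22 + (106575013595 / 1161651456) * hG24 + (1962681157 / 11050182) * hG25 + (-4910998418 / 64098783) * hG27 + (1514121274060238 / 109332071649783) * hG29 + (108740705 / 35700588) * hG31 + (-951732 / 1855) * κ * hG32 + (695940512 / 21907179) * hG33
  have hG36 : (-12214120571 / 332140347) * l ^ 2 + (517883595260 / 10296350757) * κ * l + (768 / 7) * κ ^ 2 + (-660925 / 26712) * β * l ^ 2 + (127506431269 / 2941814502) * β * κ * l + β * κ ^ 2 + (-660925 / 20034) * α * l ^ 2 + (249258086708 / 4412721753) * α * κ * l = 0 := by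
    linear_combination (37408355 / 293832) * hG17 + (-65277579475 / 618558336) * hG19 + (-37408355 / 293832) * l * hG31 + (-951732 / 1855) * hG32
  have hG37 : (-259958912129478186625 / 166534369706399065724128) + (-71309215882683507071663 / 109288180119824386881459) * l ^ 2 + (32817757212799534526784 / 36429393373274795627153) * κ * l + (71231525203707071115264 / 36429393373274795627153) * κ ^ 2 + (-16070333703655875300140 / 36429393373274795627153) * β * l ^ 2 + (15628397101971742664235 / 20816796213299883215516) * β * κ * l + (-193010067073982945947781 / 327864540359473160644377) * α * l ^ 2 + α * κ * l = 0 := by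
    linear_combination (-6358649317121352524 / 5204199053324970803879) * l * hG12 + (5444416697387585250333 / 275166820745504506284298246) * hG14 + (-2627480074377495520959685 / 2476501386709540556558684214) * hG17 + (28426756702106146705529587925 / 36493724434551789641448770577504) * hG19 + ((79366991852855036499625499472 / 67943503461428108930453212156705) + (-112569868973721159 / 5204199053324970803879) * β) * hG32 + (205647715015694540166288997 / 288099661320543218079660263562) * hG34 + ((690853424714883890803206996 / 38936105135488887639228201809) + (112569868973721159 / 5204199053324970803879) * α) * hG36
  have hG38 : (25199097978612565505056740965 / 7341467535757540190850445320192) * l + (4065248376213646953248131 / 76109983575944862644280576) * l ^ 3 + (373044709756500825577337405627185 / 10924103693207219803985462636445696) * κ + (-98179521553575066612089 / 176180517536909404269168) * κ * l ^ 2 + (10723900541834525346691 / 26100817412875467299136) * κ ^ 2 * l + κ ^ 3 + (31408875694770662004517152131375 / 7944802685968887130171245553778688) * β * κ + (-8960984354439173568477283206775 / 1986200671492221782542811388444672) * α * κ = 0 := by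
    linear_combination (-36429393373274795627153 / 71231525203707071115264) * hG22 + (-690884162135913035837015693 / 8260577514823501623094935552) * hG24 + (-103059511432171779281954327 / 1100099675246052006304137216) * hG25 + (-2654736914417914249348097 / 227905264889260774033287168) * hG27 + (40956357176926444470994169110985 / 2721135645455983614191643823282176) * hG29 + (537714011895330496941625 / 253869155826012001454800896) * hG31 + (107542802379066099388325 / 4868229550640855141533824) * hG33 + (36429393373274795627153 / 71231525203707071115264) * κ * hG37
  have hG39 : (-1482947769017356904330069167723283110065696448 / 135561887157373465425702000565616838276575425) * l + (3841411289201100130706178319700572962816 / 1362800831958154126503694475542276178225) * l ^ 3 + (-376866210304199924756898287118268634998134420672 / 21012092509392887140983810087670609932869190875) * κ + (1761885317780606773942928776790193445797888 / 6814004159790770632518472377711380891125) * κ * l ^ 2 + (1618761343961017087680506792214555632074752 / 6814004159790770632518472377711380891125) * κ ^ 2 * l + (83328 / 95975) * β * l + (590116724875618654197122701432372855551337968 / 382038045625325220745160183412192907870348925) * β * κ + β ^ 2 * κ + (-1781690900171406136802933423863504 / 2280284375440350061527945244737825) * α * l + (105227171659755239090239845991140543762921013824 / 4202418501878577428196762017534121986573838175)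 * α * κ = 0 := by
    linear_combination (4936492873075341126342571293879042048 / 345497632642477282049688673445125) * hG22 + (128821581800914851353757323417422823424 / 52170142529014069589502989690213875) * hG24 + (942720327914955849454987630459737980928 / 345843130275119759331738362118570125) * hG25 + (81083499714074420406824571507778781184 / 191060190851289936973477836415154125) * hG27 + (-24130103504996261914954608102679378594582528 / 50693645888902141266986034945516154598975) * hG29 + (-71058358374533566174213722036799484 / 1064132708538830028713041114210985) * hG31 + (-455335864626899872493463889056628736 / 659586389590183902094860194758875) * hG33 + (-7944802685968887130171245553778688 / 31408875694770662004517152131375) * κ * hG36 + ((6101608462824105315971516585302032384 / 219862129863394634031620064919625) + (7944802685968887130171245553778688 / 31408875694770662004517152131375) * β) * hG38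
  have hG40 : (2418480333152665 / 23834578472589312) * l + (-3358020943265 / 3459348031104) * l ^ 3 + (-348784058131735505 / 11821950922404298752) * κ + (1328054305 / 64062000576) * κ * l ^ 2 + κ ^ 2 * l + (232113649974327023375 / 1986087754963922190336) * β * κ + (218352726489392433725 / 1489565816222941642752) * α * κ = 0 := by
    linear_combination (-60816892864607 / 3875666942680128) * hG24 + (-64266764223156164303 / 72099032134678421184) * hG25 + (49545256201929515231 / 97364504934010175616) * hG27 + (269001634276960151608585415915 / 878857146985064961364227343872) * hG29 + (10055134332245211445675 / 327972951101257162702848) * hG31 + (2011026866449042289135 / 6289254033901948432512) * hG33 + (60816892864607 / 3875666942680128) * l * hG36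
  have hG41 : (-179711996040358303867115650915 / 1206051206300011126092110413824) * l + (522698045843369075 / 506836164972264768) * l ^ 3 + (-37975500370224349503612125622965 / 149550349581201379635421691314176) * κ + κ * l ^ 2 + (-159857749568368713182891363663825 / 326291671813530282840920053776384) * β * κ + (72723144996718630677445 / 5736278907822773278408704) * α * l + (-1796872824022262877176479474129105 / 2691906292461624833437590443655168) * α * κ = 0 := by
    linear_combination (5656864085160689780513575 / 96995261532275984525819904) * hG12 + (-212977382203332243 / 585221335314979196) * hG24 + (-2923666275216981014343 / 141932560011271274447488) * hG25 + (-37290830122907373915 / 739719767838133703744) * hG27 + (-3310803786534545667191234003 / 156033436277735681135358739008) * hG29 + (1678273757617068992254698545435 / 37609201360555442976000145096704) * hG31 + (4403563750089 / 11068225126054) * l * hG32 + (-7248827693595573582749 / 17865636924495684895488) * hG33 + ((-181314546944482392273 / 218290734653098417606) + (-4403563750089 / 11068225126054) * α) * hG40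
  have hG42 : (543326741579373312214452366026196944885047780261268889664375 / 3875105715455645702582420071214929518347689917493515865030656) + (-55552117353700651280172707672342908291316938003445675336082355365655 / 15683745152038822417338167356582481704379277700937747491941786451968) * l ^ 2 + l ^ 4 + (78481932644045067887657825424408150718194400137421349880967880425 / 72609931259438992672861885910104081964718878245082164314545307648) * κ * l + (627444990352315314635638277161482865267585132512203103636878853 / 41515112212372208503637441915439726680799816034924050494308352) * κ ^ 2 + (-8142025965853453670561471275901483314088893375307484275549915533925 / 3802120036857896343597131480383631928334370351742484240470736109568) * β * l ^ 2 + (452324606313720826452783394972425243118823877688691723388433052965 / 186711251809985981158787706625981925052134258344496993951687933952) * β * κ * l + (-247539902318003698665083029826486020773853018424383572319716618322745 / 94102470912232934504029004139494890226275666205626484951650718711808) * α * l ^ 2 = 0 := by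
    linear_combination (-5966457881750045247911689274143967046148560501 / 638937675002230934727743984510825523805650944) * hG32 + (1220508457208295285880035426713526822490223819 / 723065581891563785415089955952928597326036992) * hG36 + (-1806747674498397599483083327774292173381870414753445 / 20115035884420234287098836120369809140449503019008) * hG37 + (29768862608166179458075452588 / 2127950701359659744593586045) * l * hG40 + ((467621980283895548596411969113962 / 33077291292074823001911620200689) * l + (-29768862608166179458075452588 / 2127950701359659744593586045) * κ) * hG41
  have hG43 : (2772593054138910065908745699425995842277473244681542285 / 51791863203693899454855863486785291045421749904401883136) * l + l ^ 3 + (-15231128765216675616209187312240867974614828025337541699403 / 7611485673787310853217335789465334624749389022987654529024) * κ + (-21530290662826655022871506665048843909318205553528440375355 / 7117233357307615343268158140798754454311117008507936702464) * β * κ + (4354428558347224340094057467465520673830353943394085 / 35472233861547619064941786337900910277138174890737664) * α * l + (-234954297914238201511657830134453544792609657234122349630835 / 45668914042723865119304014736792007748496334137925927174144) * α * κ = 0 := by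
    linear_combination (-32250229335972287171121065871396710509348296051 / 114275139635344637350115802623076640692430637824) * hG24 + (-1465593755379185050332057326822361622035939231651 / 16341344967854283141066559775099959619017581208832) * hG25 + (-2501979181461469523736730714194026303347062052183473 / 214354564324628222470050819781104208771484772094951424) * hG27 + (188000269487798209536563981854195964688524697740301550906411 / 731240984253890490814756713342683016045032616805399799758848) * hG29 + (-1921810328900203135566422050809885720928149839165726084927195 / 231332299503827968472335381635224912867332954900883419844050944) * hG31 + (-124801529521337299327509244921185278112166288489559 / 6105035059878651905792586639335246452352414395109376) * hG33 + (-924837902493714793310694509597974740715875566036021789918875 / 28040278727736723451192167470936353074828236957682838768975872) * hG39 + ((778859033538734725493514590145676926972165685185 / 99990747180926557681351327295192060605876808096) + (32250229335972287171121065871396710509348296051 / 114275139635344637350115802623076640692430637824) * β) * hG40 + (1092491848972352102351102475442137673946355307 / 131346837439420157054324111985000357418778848) * hG41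
  have hG44 : (356680981213873510510863473773826241586707075 / 2008925616697222329786728029924759994252484998) + (-20577222392285729014255993539254804517106069334719128 / 9855442535847692479081799504225710510703682846525845) * l ^ 2 + (-1266342816829662247454836833445243363180072307183616 / 1971088507169538495816359900845142102140736569305169) * κ * l + (13461402689504174543511432217666579444110935935254528 / 9855442535847692479081799504225710510703682846525845) * κ ^ 2 + (58421275640602875 / 22032090928886197024) * β + (1589671908956738807837442496311693735343600186430052 / 1971088507169538495816359900845142102140736569305169) * β * l ^ 2 + (229621848560481295115009346011316807809678655622698 / 281584072452791213688051414406448871734390938472167) * β * κ * l + (515932848907916220 / 688502841527693657) * β ^ 2 * l ^ 2 + (-3421720914144631659574462172167688021687274690982788 / 9855442535847692479081799504225710510703682846525845) * α * l ^ 2 + α * β * l ^ 2 = 0 := by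
    linear_combination (327864540359473160644377 / 193010067073982945947781) * hG17 + (-125879806766712986281145145 / 948065449467404230495500272) * hG19 + (1178097488324099914826043813024 / 476575632367401840560612150675) * hG32 + (-3938356069696879151387220 / 67360513408820048135775569) * hG34 + (53967251744110582716056517313816362264 / 26312744550592745028105369906392493895) * hG36 + ((-112139090765097050978313365032600804272 / 985920206609100559482482277283875085) + (-327864540359473160644377 / 193010067073982945947781) * β) * hG37
  have hG45 : (-1046416904707604999720806825662487925481401214229999812099393242133969296 / 22784591430420543545515133292332492062993934959918408639091931597962385) * l + (-22832935077531039152978112004163150195327183568575011024141768496010440256 / 392401296857242694394982851145726252196006657643039259895472155298241075) * κ + (1986045448797390243444596 / 91109550204905878561695) * β * l + (-488830126429211251323061405864432184892013150049815341668352202674767684 / 3057672443043449566714152086849814952176675254361344882302380430895385) * β * κ + (1841624662153070508108802742660559516164311371424073256437253908876 / 48766127634821180978725586981908998361935130633750022949332254707) * α * l + (-10373958717595158706243442376667699424887819515555745616518828742957113736 / 78480259371448538878996570229145250439201331528607851979094431059648215) * α * κ + α * β * l = 0 := by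
    linear_combination (-5736278907822773278408704 / 72723144996718630677445) * hG27 + (-93676194863051172383885224322048 / 1959871206449973174406476110631) * hG29 + (326630714757266381106762443565341 / 6825466291651043479610823339138) * hG31 + (7648371877097031037878272 / 130901660994093535219401) * hG33 + (351687049050411169002361000060415 / 9100621722201391306147764452184) * hG39 + (-505459799323181035185255827579709615892741781697377438458976403456 / 55860400684152551501298809658024584568051228138175429755212525) * hG40 + ((-709134037136753658471655065861156196325262722146612966933921792 / 73377659181667003852552219562873402392820791104709542521575) + (5736278907822773278408704 / 72723144996718630677445) * β) * hG41 + (97876734519921191813766353154686855712433720286156336073190383026176 / 89568781856591844918005315055600190679598207417692491073997223849) * hG43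
  have hG46 : (53555527212054740458111787660625642399524315147500240186009668814660 / 369318212518152841379741026344006749250808475927052957212057525747091) * l + (159409532849255652553223740323761487200488573762300151621201965001256 / 205176784732307134099856125746670416250449153292807198451143069859495) * κ + (106205213609469486111284261527849856561110127080395569857724131889951 / 123106070839384280459913675448002249750269491975684319070685841915697) * β * κ + (-14467101471585484727767268428707168716675068364844747753361619805023 / 1107954637554458524139223079032020247752425427781158871636172577241273) * α * l + α * κ = 0 := by
    linear_combination (181728046036375983913117830607361927742538296450775055853796679196105781135 / 3237244675665079148383293896316939789633323664836836151307036803292919827244) * hG12 + (-2552948517265906152535811562352017931641712096554794743920471813586944 / 205176784732307134099856125746670416250449153292807198451143069859495) * hG20 + (-23205127405951938438257122529195305203861819815502543699335817891140548474801152 / 1145175304016521748740590215822117450582788246436030788524864269164870388887565) * hG22 + (-168445671316171553884558806900213519128444873371520996248050244713414360015516 / 611029932531783689257346722929822385293289841737952823559203196621538617392305) * hG24 + (-125663496461995029181671501393832146211204605178262041666389630409500742474752 / 52605225979557536161228525815150271581541509553598587458739348053509947192715) * hG25 + (-1543276838649352034526192531757564196481399779973577277825585645499966919351296 / 319677911721926565902850272261297804226290711902637569941569884325175832940345)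 * hG27 + (1084177643082659686829782519914496606321435467368046624987005958599205496160471133184 / 424097735460459800526246607502418231580726321412826225411860051967523501632516981935) * hG29 + (4635646031389651516304806024831158790591527633629992473956033729370449382649 / 12948978702660316593533175585267759158533294659347344605228147213171679308976) * hG31 + (8697291836370891123807447829557058922125182402226115987357026197539984681216 / 2427933506748809361287470422237704842224992748627627113480277602469689870433) * hG33 + (2340202807493747306491160598822683104004902755175228515260432495788032 / 205176784732307134099856125746670416250449153292807198451143069859495) * hG35 + ((-256753679450742561626458762842260089125109330853510785674287450966458368 / 205176784732307134099856125746670416250449153292807198451143069859495) + (2552948517265906152535811562352017931641712096554794743920471813586944 / 205176784732307134099856125746670416250449153292807198451143069859495) * α) * hG38 + (909002058033753955897058447840932531830565603440088715660362667500477440228199661568 / 79807343821472447715361506243873402658434516685564025527156384460223895608420301895) * hG40 + (148157339627680413505004708238658642552033059788975236301686001384991035376795648 / 14976303180795572410208213387836242701791163604451413244984179011233870350787555) * hG41 + (-267177644045922992430105355325510429773404303293960038957657769416318651242381312 / 227094284405709455196862354921570524277442022973839852324842159795599757444378273) * hG43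
  have hG47 : (-6724842082038732444983643502502176210944968093466105085127784753726667879544702029842460110045296426325553852714082677387474417559272260022576 / 43271781062674017788053120716996479145657225311922184887898247737979376099302858732311274740546977541465041816296330293005068773913027666931033) * l + (29416236086762772431747894440118763830742568048671658538716033690790147238765776998835576147477973520052323640008434878385680010584758475297400 / 14423927020891339262684373572332159715219075103974061629299415912659792033100952910770424913515659180488347272098776764335022924637675888977011) * κ + (-18689137228189709483869279871144344606919287980325268893993842262446250242722408447590194625428680473284385625814638898039853117580596866567064 / 43271781062674017788053120716996479145657225311922184887898247737979376099302858732311274740546977541465041816296330293005068773913027666931033) * β * l + β * κ + (-66585372221991401148880482140099944030248660796670059315220915246787737849010251290684229571859729248678563714367323681496723578493287889796756 / 129815343188022053364159362150989437436971675935766554663694743213938128297908576196933824221640932624395125448888990879015206321739083000793099) * α * l = 0 := by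
    linear_combination (-134891343513836969317209922062477183042301921087264104000255163331382253927620531357905999791010321823746620764627850164055315449889244824183847077632536775 / 99750398158715060658869419747865757893880081794037775300989485713306943646371099654259681194165051694673138730768344589899933918738483600567785840108644552) * hG31 + (-10579320192795836985582670980100816817912855250269951575972489196539209798196504568517873895572093726975563260763539839907176870227347746152415090347994075 / 9068218014428641878079038158896887081261825617639797754635407792118813058761009059478152835833186517697558066433485871809084901703498509142525985464422232) * hG39 + (875207315787982454642083565388511150192869458581235385164200964001118455130149139190255064598908800119727589846631612660341833132986844757947621819876101944276729761413650293203471958016 / 3157873288999224502979161579694936213558005161916711649670627657707654355792322848715040843798976441290813340191538563146003209507405823453796442814960243274629391554735613026096202615) * hG40 + (175354063709401926246060914362908532405561113669394524264909957726166000258081638200904667684423693207137622090434993903572067116011282963710327837484229419984532773163838420133871616 / 592592930900978577361171261938761719107664282997462911907993689838741779455081855006503867928312571082256231619407068936235437904135212327661390361847342382996384351941932491182035) * hG41 + (-5821571140133814870001902448071135391768350747338858765007037187449281391208037899371435600911128594890261709460896385029882289800301994509871411963175042428507824353619701830088595540541440 / 177221074502031692142807440728377011102380363390356862121454832622686957871979995462314223847357091999524947701119665661429428462164789247046475198291994104818834178330146685947085587174689)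 * hG43 + (202678513169743249550046678101990226887270484682320881524601544129557462892739313598360824120603821126329853236853787219245988765623524415749575675 / 11478330340392993523816021538884775386815896462540894659610406392640059943269208711144531819377145325285738945579852968629581883059868269633681721624) * hG45 + ((20783401191423527102707582162335850141921719608749749646364042171965565093702125592079418933253526889917578608437709236384306807261445466318626604888603010872770657679125095632434481070088304 / 37273596386170417748049948781027503424801821636273672475498577548311943176170855992622112748939508873216442744118411130310884477045730238986254251632544034769578754322277266108754158952573921) + (134891343513836969317209922062477183042301921087264104000255163331382253927620531357905999791010321823746620764627850164055315449889244824183847077632536775 / 99750398158715060658869419747865757893880081794037775300989485713306943646371099654259681194165051694673138730768344589899933918738483600567785840108644552) * β) * hG46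
  have hG48 : (419934700140215093952043006768406861433452297807024669810021721567532232014269505142683818966864904528994011620253116244785486216772585450201360913072003846576547909041560509965071128874642168481297896382457228436537101522110360015491123477247602871146338354912682054324259056073867917026222072313536438391125 / 5042035428400746473334031805346620468699483643956516036039482512770828698674752738345677607481755718757088535382830169664358084265377200323634197337587358526548835441074598389450350393679830747356921953793264479655688405314365662796885494762989450948819066888719189131152119288343862701315546170137303286919613) + (174837667123345820413150268741658541664810102767595642577117290233164457335469909456568878947756785295047343928433545594691727452675638421711564525528295888439738866151503747017279323635748308456461369891888447151322279072508809654015169199172996619632273350522791423454610419038936191968517160643404174088798234 / 327732302846048520766712067347530330465466436857173542342566363330103865413858927992469044486314121719210754799883961028183275477249518021036222826943178304225674303669848895314272775589188998578199926996562191177619746345433768081797557159594314311673239347766747293524887753742351075585510501058924713649774845) * l ^ 2 + (-888993812428515869548259702473237416765641058300658826527120010903599622363878623221504422232888828234317480139867007278598865314300482148791810277068150805966098520744980858196301927061962636526230644825567843247098833297863289644004951159643779343904646860261728883403382353992846820296018325504746736891092896 / 327732302846048520766712067347530330465466436857173542342566363330103865413858927992469044486314121719210754799883961028183275477249518021036222826943178304225674303669848895314272775589188998578199926996562191177619746345433768081797557159594314311673239347766747293524887753742351075585510501058924713649774845)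 * κ * l + (-1158817585823275542112828980817442465934934678286628862129163219561457571108954641927448176792965619103553460489676578314134708833885568610658870499391149065475506443365870475698126413839230066430909882238713993140464032021604275956713767218957923814053468457736579958241061481304520167882229925355107273258479472 / 327732302846048520766712067347530330465466436857173542342566363330103865413858927992469044486314121719210754799883961028183275477249518021036222826943178304225674303669848895314272775589188998578199926996562191177619746345433768081797557159594314311673239347766747293524887753742351075585510501058924713649774845) * κ ^ 2 + (202703400752377478699359999747144836963270807384306658657508848453007980225189808347223263240368426874571465325457978284782664492461965037676716763502944934957362060282326436827037017864228906192171910821119635220200982672952526875851704132905456881592568004070612815058939075073042694806187024755129433343063319 / 262185842276838816613369653878024264372373149485738833874053090664083092331087142393975235589051297375368603839907168822546620381799614416828978261554542643380539442935879116251418220471351198862559941597249752942095797076347014465438045727675451449338591478213397834819910202993880860468408400847139770919819876) * β * l ^ 2 + α * l ^ 2 = 0 := by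
    linear_combination (306779090890188948321010486747857981926238747964608253241596198614666801524630394342907479721451989846585944964059400482131867310136866976099118114044859991723723953811165248099032203836845019514565012616770084255274072104940243681271831019778586691576400214658870191136696756481740270308878336840526659180028342 / 327732302846048520766712067347530330465466436857173542342566363330103865413858927992469044486314121719210754799883961028183275477249518021036222826943178304225674303669848895314272775589188998578199926996562191177619746345433768081797557159594314311673239347766747293524887753742351075585510501058924713649774845) * hG36 + (-980389173430830435349232065542217195046940189472075285348640554735995454464629155924670033944523947430882032790921134494123883682456641087726885214490660979684376068768500828860095440314769017801365830709160692642854949214289721629933747137260051994132904457685757424268331780990174134357515870845772511687972212419936 / 18374835930748263994418938795147044026075120528696406129103731266283601380612662972182564929596379336782301705063174089382740432872757827078229490749092400711699190914135950074027205999848823907684504026945453747879135270450896901534910918244110582786858841215499113807142471733970900814422583058670308350316466324677) * hG37 + ((-60254224734271116154517781985379673765370155446909061789942117968662105386538988222514873996678725597034507407587960759106015574704233065134693918763749287085118855111095835778284680635766900035354454194827420773462734292639042454225302176217794144501497481895703783664877524737393339045454742729254686228524817 / 65546460569209704153342413469506066093093287371434708468513272666020773082771785598493808897262824343842150959976792205636655095449903604207244565388635660845134860733969779062854555117837799715639985399312438235523949269086753616359511431918862862334647869553349458704977550748470215117102100211784942729954969)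 * l + (-306779090890188948321010486747857981926238747964608253241596198614666801524630394342907479721451989846585944964059400482131867310136866976099118114044859991723723953811165248099032203836845019514565012616770084255274072104940243681271831019778586691576400214658870191136696756481740270308878336840526659180028342 / 327732302846048520766712067347530330465466436857173542342566363330103865413858927992469044486314121719210754799883961028183275477249518021036222826943178304225674303669848895314272775589188998578199926996562191177619746345433768081797557159594314311673239347766747293524887753742351075585510501058924713649774845) * κ) * hG47
  have hG49 : (1336339911953788757726876318999175395461560856306867854240900653572355345744028300525297099077599779462694952617806312377695140993143800032416110504416757007138681459279665450119654967162130528868309115656372034942031350272 / 30019627448131247953470431943798527792256395144707323186114545034317319369525995510703504214202069769079225338832776350780515131429693065206265793809197282150272122415859958531428786960975158749266891842110316917497176605) * l + (-310851948442613447500230927365055398200655194217693194861194753128177832004575546554113783512131326453385348104644510631592761387269856620327519764043519900604102895564430768709388658852787579024122338514043695965771469921216 / 1651079509647218637440873756908919028574101732958902775236299976887452565323929753088692731781113837299357393635802699292928332228633118586344618659505850518264966732872297719228583282853633731209679051316067430462344713275) * κ + (-604724961384780236137109531304716577487280158265285448543711365813987108439086145651601966428792898110791486860062761601121469413953914505563219679624236050535595706622238251078193371974912790397714316167313384876384207428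 / 330215901929443727488174751381783805714820346591780555047259995377490513064785950617738546356222767459871478727160539858585666445726623717268923731901170103652993346574459543845716656570726746241935810263213486092468942655) * β * l + β ^ 2 * l + (-1179042358990613411722785135155338708130365816571027124637203892537126288081201561006872587103639802961615349361602640401861021280343144887192352349006240287309786198503004584606341940121188861117885435713003704530960689312 / 66043180385888745497634950276356761142964069318356111009451999075498102612957190123547709271244553491974295745432107971717133289145324743453784746380234020730598669314891908769143331314145349248387162052642697218493788531) * α * l = 0 := by
    linear_combination (43271781062674017788053120716996479145657225311922184887898247737979376099302858732311274740546977541465041816296330293005068773913027666931033 / 18689137228189709483869279871144344606919287980325268893993842262446250242722408447590194625428680473284385625814638898039853117580596866567064) * hG39 + (-8755835808575135152674281122102273513050520402575063341475089397583399348415427857604899909262632879655664084708158848798325611162284833463097043688118162530555302146944491235785572352 / 15918482351973154166405890331855257208594387139819337941482806333981659079859452686147777487619540832858089446204686633973846789977092833796282869186523017837602488117373588486863375) * hG40 + (-12280061578056115518890958425833592412443754819012234892256424808712218884136113376787983971438164475950740811493038274851835246285295779147094102232353114491077968819994240484900864 / 20910357935256323694936089863979487802001825834278140232606624093910338793936081189157631316109374746351933250893180635693983025395102163098832001296363308697016236789593619530125)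 * hG41 + (11648147845989735974340232831422046430068891683960103806360745555071683361908832257661414824689751697046637664891782106040331948614135206221245100187760325887628674334618866548504407310336 / 178670281463532390858983772938756504490201114863273495495533362290358708558526289072978733231806648568180222088635325008370731557511900970640196004792997934006108813783289884432201254005) * hG43 + (-16646343055497850287220120535024986007562165199167514828805228811696934462252562822671057392964932312169640928591830920374180894623321972449189 / 14016852921142282112901959903358258455189465985243951670495381696834687682041806335692645969071510354963289219360979173529889838185447649925298) * hG45 + (-825146036005743418855888773744412643586060773985832099384538595551156340669753566453162744210004540009907662976824823542411571522099728496198207719571558524491371641695693477732911410953211040630012594753363082234992 / 4321610278946291623724569809314487306734760975406607709408941795735665530381298526403774444501172236742191507883161729097268217661083353572063431246242183976358431624159826420721893997574371257804257215605714097775) * hG46 + ((-24120472793408612167840755257714533495602472943365505667026673402412623457386505384508839655156992841950142331509609125259391085351038579167113189115417784918737911084415722250239354875548152697238660457362707712081286777007809395200396 / 480379066093386766124991841690743455036315889257228768394886285682747946329909088510220983403563159700476256664285446565247559888726621443655953228163216816355607621810476606045872834831729675321378413130626721042837168142285302614825) + (-43271781062674017788053120716996479145657225311922184887898247737979376099302858732311274740546977541465041816296330293005068773913027666931033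 / 18689137228189709483869279871144344606919287980325268893993842262446250242722408447590194625428680473284385625814638898039853117580596866567064) * β) * hG47
  have hG50 : (311767277327106981190347647150644855705375324977996853573352476339521895458602912625081976926805718444392072471939122129897375785487225762823569657481527145590098273035209807608989848532686334928738053135146990417884349659522993310075847579586906392973133756429782614665273359265047068218564 / 12288846627627236658020006531406589100487625674270999954521829722080000136472957096899695552018655175976130386894658925729192878410951261172306283931869183504606542470683948859191262343197960835631859611156921115487815488412760945778483779917858105049652658543924166053619068337085271557299) * l + (-5833779670907495043613031747958214538838087054797222118113864962368680534286963862125499198907711545712309811188932989178366539823384657659483901610764805318303955141622770351920351825448791371665837215129381915447135972283118287745191902897534370860982871935525338418375708601045112311137432 / 61444233138136183290100032657032945502438128371354999772609148610400000682364785484498477760093275879880651934473294628645964392054756305861531419659345917523032712353419744295956311715989804178159298055784605577439077442063804728892418899589290525248263292719620830268095341685426357786495) * κ + (-10273908579278417847868386340606965634516574678442250428640648343418732631464856062158279926770759639341444572095837621322630157277592942342477628894557160612757845828407262901738036260809955786662630387949294658143064853841283281672706967858583755456443346600493566170085858565603272161408 / 12288846627627236658020006531406589100487625674270999954521829722080000136472957096899695552018655175976130386894658925729192878410951261172306283931869183504606542470683948859191262343197960835631859611156921115487815488412760945778483779917858105049652658543924166053619068337085271557299)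 * β * l + (-86576070278138705645372385011067416165004032487879346843196631169617326228452036547190985810933716316879390165385420699311372794463376827995061255820231945641348330131550236322609389855419449306802772530547489035389606840008872198980492129599182105516702634898636379093661242364437414042277 / 12288846627627236658020006531406589100487625674270999954521829722080000136472957096899695552018655175976130386894658925729192878410951261172306283931869183504606542470683948859191262343197960835631859611156921115487815488412760945778483779917858105049652658543924166053619068337085271557299) * α * l + α ^ 2 * l = 0 := by
    linear_combination (129815343188022053364159362150989437436971675935766554663694743213938128297908576196933824221640932624395125448888990879015206321739083000793099 / 66585372221991401148880482140099944030248660796670059315220915246787737849010251290684229571859729248678563714367323681496723578493287889796756) * hG31 + (-14016852921142282112901959903358258455189465985243951670495381696834687682041806335692645969071510354963289219360979173529889838185447649925298 / 16646343055497850287220120535024986007562165199167514828805228811696934462252562822671057392964932312169640928591830920374180894623321972449189) * hG45 + (-14949826314966534022820793432734558741087193131062144975292406264893922749677977982399520539163189884703383848812459047818657894070758229726635250001445304116726621684452211095170664994443934403053765080016014188116 / 186629902940226067161066750510161974778939875466954372161348864613881035856807722590709882843558602973071538183188224510720755151155131019673694710982687031123799412492334721282992728917916054165661913333186006805) * hG46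 + ((-841484946442498981112315857036905464461572539226749532383956017127432799640732529350874159198340324982926604737860659519319780768471332835469537807663471848259985319903650946905095237952277713621311426157597472395036584203288090469223 / 20745299250210204206054005832002965073824879565067018473986672606644053888765486096232224565492014359793660406618642493995281207879298465588903834749109941160254701417834473742010547073765761689425331685436326261284888399514409769715) + (-129815343188022053364159362150989437436971675935766554663694743213938128297908576196933824221640932624395125448888990879015206321739083000793099 / 66585372221991401148880482140099944030248660796670059315220915246787737849010251290684229571859729248678563714367323681496723578493287889796756) * α) * hG47
  have hG51 : (20485484878032235502604018163847646316674786693195540008402314976525657148559838792017646308111145097714138144841575264505124119008111946681735896042405179974016520180397729627099346148126117396071430492822427636475060429953572934864504176858601542623197145221242418913434453224 / 24725789665236138204275059657719751214832903301232008621327369176747572853221909133188507123617189569302349184537506424367089005883597886520890704375633404149653344332686745523008068232097487622257740747177876201992409459441591112295619249752431152748174243637783068743023599295) * l + (11022555264301356411031264110499266169349636721939444404628633642685716330367742601370274688275378862538417051924118933682459225662646620571999539050025886006680991622591638000612402876469041300765430084549228567098997105651603679868286707413179008809534336572916716293832639116 / 4945157933047227640855011931543950242966580660246401724265473835349514570644381826637701424723437913860469836907501284873417801176719577304178140875126680829930668866537349104601613646419497524451548149435575240398481891888318222459123849950486230549634848727556613748604719859)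 * κ + (13814866830224890662284363191807844602108108950929997357553029502096162570232428572378819580811482365420444968877678027427433104857691452229941872713340608600284507375298006758192581413659507267728215736774389742760353351067583956278456113979868042685058774277770145292681507807 / 19780631732188910563420047726175800971866322640985606897061895341398058282577527306550805698893751655441879347630005139493671204706878309216712563500506723319722675466149396418406454585677990097806192597742300961593927567553272889836495399801944922198539394910226454994418879436) * β * l + α * l = 0 := by
    linear_combination (720316912191667024365682960360676174780931928309587539586281807042457169836831466573515301695081485862495675361637654152665610973463859313356887356550429857052805287353741555998784451839430306303033915583336850519986840140643653647553805899720097597720989735092563610731662238159782237 / 310529174781263976438613005396434285575387302195263415743346929177447944861669133895929192783326996638199348336913084923102042470429225755228326251572102871029717739761315289785023651468544607892944989812161977506124587820515052345485918835110003048982256074828636717245223952820202528) * hG12 + (3642924358372831974216948531340436847625285999725239242282161775237459426819169362905948142505319634715722800017627078728329201909194625704028146407062986053148521869329896390082038853944767758650538831978980038520876544559035119176518449801588888185298423162188032764868840065032839192624209201387299147148674976275994502880126200241697709171305171447 / 1820382218491325033691060847885341147993455085466194072464496963115155272477167401738075128595146201881081050585949093686097310202640544560660787459196180211261754236105125475321324983402595972815848828556850442986196770901024598800073638451176069311843298538352215595932525582463533922001026382775660494131762203677846847793175970642790828933668680096)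 * hG31 + ((1707396417832848365381970756234336241625265710817568264071200248588881924644882149787975214640932697222529862149643392812823937708488001084595696069656199956872388343665813850024977480916957154405489414357882092391605668416964498067617255372769360819950696865440874504409075756797315266028924007197482103711383032145482863148034185133022594639791754609294635 / 893048114798575086172003281172922345070786177829490520103332197531681440248848096155019676292810460370875914769344017740533255206814455612066510928897974877536372362972601744778192744001349889482924361897698221658886623909744625496986825753883696817194692966015810395645467214690312246173549025684636158277518764226338220669207698911859592533058748670365944) + (-720316912191667024365682960360676174780931928309587539586281807042457169836831466573515301695081485862495675361637654152665610973463859313356887356550429857052805287353741555998784451839430306303033915583336850519986840140643653647553805899720097597720989735092563610731662238159782237 / 310529174781263976438613005396434285575387302195263415743346929177447944861669133895929192783326996638199348336913084923102042470429225755228326251572102871029717739761315289785023651468544607892944989812161977506124587820515052345485918835110003048982256074828636717245223952820202528) * α) * hG46 + (-2906883693119655596355826783745078463431261240034697078773488504665919694771323168370769594908838039181095496557130247272839859502719478746630702432265772172697545072898840011239765313879509873820351202454449677537865992841951954314595234501084474404936176956089943771028287791062008683793229370947613880372924440596968365311465444616536327607149468206734958444507842907547591595615344975196662005985673972465556963 /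 1865282499040355587039704269730627681028525216270558140080826711191456790177733526233282947206653032444967827702604223952777955850216575728749405721645107704825934195529446414029103390021357091773586245617996775751948478127035547790418262050989265649419141906440670680064419334635461530222082476827158573547498276895791569658507866385438542031628616834050946841194399800705009952219607866159500747739611126927987616) * hG47 + (-12391094234804058498742165403975173803799552737008377076833655528596895843003093038961048932083908556330887177977169535201139995024063041574843399310134351713967023871650335672087193011365115381268908343778022874680921563982618378970315184934628161879750940161481027183159633330008594274629956719760961098397158935775067381457392620694074194932549 / 409099463013464262582488802305745282658793900055898615451136001384977088555616164738003492637307098053058705849524647124042230286003982076036819104170252354555084548999307626805418819597990769147401398333701625952457957381986957384270275787809827478913034883214568326039920778842314808053510154405177453707915296564101805392051903095589253576357856) * hG50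
  have hG52 : (36 / 5) * l + (-216 / 5) * κ + β * l = 0 := by
    linear_combination (195420421140926957579835916539952737864268787400854458645796763860170461852073821253574796108660626432996722594389536303035195957976789805921595120981384072627739247051098330898106415926044666844546970986933112048246876537746977143152670430301749889070566137884132498317687898813715078913570661161529898168745215397486127143307299089686280046433699864079446482315940248903250241126225072707460071509005638120633705794861997518542852353000892160538014581590078064425346043695920534142665 / 31458017407188701170096214618092101608235380678254948193247607362478963530735370768006515167769771184900805277029729881414647508803824100685834709346095458704050142048609241368185283451434480365688214337505333045301567020395931767787979792477989961216828369661678727417299608143366293804006281302259064369590012426614989031567722931665981867475835749693400433093500377234846347212338698850882898368477514621490950909613745086749686341238486788055237530562847895916336789883645067570752) * hG45 + (8248021620743632463223653055155961887798552719332870815922858200395553277362511141121076065185478557150209051834757653367976535026682748239326380091545266602011374099850724211021986907922942156834659337127038865905416648297872498864513882077655884526820967310706848661038628126807809736828583629179665866529488968730259309878244394472595755955687867883042878409363011410391926026583093180026732017930324990415456184378219728062933722219078421340133326664904982263688193203434589869986963389969670429762754359736868160198193318780760827421819504824270679295964118438861970018890848950544625185537616443828353845779028330461041 / 9807674187836985593557996652858281424221946462894510253951833591435808004370020752619536588014901858720930743683735254661182183256605382194076881843855080962208023289615014013358174917699957880841902085697494061638605118514253557609515575624141921348765001369054017312717074891045432970253121860675402803125799567469497554390522288684450011611085110274691442629070818016243432874501038851215265234330462228587460283828755231223946343654263499366689759258606369781183238887427130538771056067075580729515032844411237855100511185616239912757877860047812381915892472018444622969920797536430202978571175977529188892451124019592)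 * hG46 + (11907947165901759934712893733486076087471873113172869348100537814149562741496964905129013053725736241561942257563001883837753858414510242291215129114601681512158906561040520490988425620368654234382954859303410480564553189610342478166002579527150016873622696475079920183984050810533096440248314951893982728331353672807523215078065994576723817046265092990858948668969365250209769884567304290627988757873979290275017498247233940250430734938706576944356637176656791865695897449011031285333116475447570027309400002564070688509793726421704005821855060202719098938566760375174770028333130641703663414025716291999396830681348724731569159225997478726797 / 44497787675362972166035345714789269620573893975124798875101832226034831302181903784263341758186771624567329676438003953991539760234385907176259103754295706621461617765946955599969832339433688348581668931574381885328450698988124727947928625899366152916394211755761411848428284671929151504677523028975212910847574595749433186727189923756886210436908806265952827952656082784685147844076037696234124817716458498760411428410422559272101113370860113091704068738362413008937362879817489627714031567434608567550702799703977297024904954504997391387821200047077934822842599466531121302858699954252427896129114712925673932532724031666048761764255121008) * hG47 + (6258051081828297673080468910178254969991692949573882074746908879565586627063041568528642475669020758520414998099186793116820526126963877824281329743308798882962999947658262414405068359398923007076268745801642013375756480295830972125432820416339845133956594446377024192268638773654838842756921002289015495442512325416946297670741901195916165510297412670882873524165313903916436518148803922525924721710674651933772664800326981736772002808216984451458563324492411965760285647740270250149402585017077546622627738524669330179654447123855662743968403727131296447305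 / 703569578249040076724394071313359197824099872892770499025867020909980510327954157248036701835910073940517666070462711791746585060958360402603030725389849944144794045810544015690386921158947352570879440346299677977475817509781739015205187866001927458057297865477756787109041087294871042075650943858104379974535257193779856295576814384323415316360759707336443893840691926534474974846255046435573761779700589446197996955940469702453606002920083194668266413911988402494585076748194782775335533387831008940225353043692291484507959947440252402633988680826164115408) * hG50 + ((-4343951839452608376071189077745265212656090919092886100398123068853025731742672712645328670918635895040242138342601678508266679722319495282478734249499258835970529822109123177775842078881742776433591874195981503528436138921477607540103533578957956169386439355480961468881496557952574746838316790288656617060076807384079656660579692514337816370073858632083167524716248995329818293872350075009021576911607449017086879549372135915951801070823024189267027421011152847879301956485524043980262819252271290334769069781883642793101714200019794800762488670982691286156012987476125013488676880847303672049164801824610816775307135093610977979847326335530251560492980103709399726130784721399850949811920576893677 / 266178649157851355868372910676216719987538294091795179630840002281362892698806484294020699852537740785704730606242090125653351821596896989796598270341574160275472104572555197814007538193621094345744140267634960586269791831785280460294644786609698621476239960458200011512411203365424661215631032807791240466939314526790617327614657031533114060712904039913669436650751901528395077636350109451270157194659768124762453438954991379807424672810693121228467132072276401829016028294484110043027051088471599159748452917657561416881728490376397007637056654493393008022660730011266654501120460208877490364528478392587195614350327214120992706711457222136791260518157139327309707104839043161058225349408577545548)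 + (-6258051081828297673080468910178254969991692949573882074746908879565586627063041568528642475669020758520414998099186793116820526126963877824281329743308798882962999947658262414405068359398923007076268745801642013375756480295830972125432820416339845133956594446377024192268638773654838842756921002289015495442512325416946297670741901195916165510297412670882873524165313903916436518148803922525924721710674651933772664800326981736772002808216984451458563324492411965760285647740270250149402585017077546622627738524669330179654447123855662743968403727131296447305 / 703569578249040076724394071313359197824099872892770499025867020909980510327954157248036701835910073940517666070462711791746585060958360402603030725389849944144794045810544015690386921158947352570879440346299677977475817509781739015205187866001927458057297865477756787109041087294871042075650943858104379974535257193779856295576814384323415316360759707336443893840691926534474974846255046435573761779700589446197996955940469702453606002920083194668266413911988402494585076748194782775335533387831008940225353043692291484507959947440252402633988680826164115408) * α) * hG51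
  have hG53 : (-19115092700685641904272887022098878818649898415874819585405809033380845433421967613323303976096956412556135997537459158205611543612494034328267464724010084140869808125 / 811514653580499813631721905291367099885423850398706495203412576918095496453386841968448017021167682841353174366485776195684048802995351336421096531618046935114721668848) + (295050530046139663531086647012379501837277288969954066911145665400849924503655033501525399147847605136593793994197755221334062415505360723490054758116935340906394429 / 1252337428364968848197101705696554166489851620985658171610204594009406630329300682050074100341308152532952429577910148450129704942894060704353544030274763788757286526) * l ^ 2 + (1820563151505277739648378685980379405542261186739147821126841259268044900313361513480345858769756344540709192895839698025253425110952206041841463469535908875652692177 / 3757012285094906544591305117089662499469554862956974514830613782028219890987902046150222301023924457598857288733730445350389114828682182113060632090824291366271859578) * κ * l + κ ^ 2 = 0 := by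
    linear_combination (-327732302846048520766712067347530330465466436857173542342566363330103865413858927992469044486314121719210754799883961028183275477249518021036222826943178304225674303669848895314272775589188998578199926996562191177619746345433768081797557159594314311673239347766747293524887753742351075585510501058924713649774845 / 1158817585823275542112828980817442465934934678286628862129163219561457571108954641927448176792965619103553460489676578314134708833885568610658870499391149065475506443365870475698126413839230066430909882238713993140464032021604275956713767218957923814053468457736579958241061481304520167882229925355107273258479472) * hG48 + (327732302846048520766712067347530330465466436857173542342566363330103865413858927992469044486314121719210754799883961028183275477249518021036222826943178304225674303669848895314272775589188998578199926996562191177619746345433768081797557159594314311673239347766747293524887753742351075585510501058924713649774845 / 1158817585823275542112828980817442465934934678286628862129163219561457571108954641927448176792965619103553460489676578314134708833885568610658870499391149065475506443365870475698126413839230066430909882238713993140464032021604275956713767218957923814053468457736579958241061481304520167882229925355107273258479472) * l * hG51 + (16792359353615361154881181292263442051570808233849321930491100451833933412998243754670711524641313168467078976534573155839283258396301326312218414099929375801932380857647849937013455226853094454645327453690660426599017276989658962036149690385226218840489923379381181365305731583341110598656934036261108383073633753347399213332173690401649629184355541445061558047862715919658437477499063066979955086149827282034721334390573331658922638080691896145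 / 794587489133660923158574456834657854448812252837415634301107343970856044830760320340212538057602509669336362217645632853372141341067451476262890900378782938131982818452124342234674220332761013548207542948566498780461954667575616918424289903542041993250253890297547518058509462081799473643802256285836966308029132485769046078935998759796678777524649806254482285179198708782623814869121556574815206679495466263628630127410074247594838225373435981536) * l * hG52
  have hG54 : (-125 / 3456) + (1 / 3) * l ^ 2 + κ * l = 0 := by
    linear_combination (-358015273975119739335935307517596960117167415947872547630132817040996749665323236721004602727646698837322021034279630774765495981387667439780887372862997080833987 / 440444494192325956710876115355378876200610091665695119601674118025872607888003259233414610064136922437861829916926250802381329232533076548103705618289427210618548) * hG37 + (358015273975119739335935307517596960117167415947872547630132817040996749665323236721004602727646698837322021034279630774765495981387667439780887372862997080833987 / 440444494192325956710876115355378876200610091665695119601674118025872607888003259233414610064136922437861829916926250802381329232533076548103705618289427210618548) * l * hG46 + (-366404243049655416455492903697593093498793317538116072807451463377778151723975029538150686623411457272069289507889379006962218668330132504101850519768913302414341974170772448781259865622159808660634954704797070130797742627359194835984942181170919 / 4026338850544926701958188004932500756399693435395299401761566886915444978729991458702797009199586364534047428281395874386919130783995799516602410853762559443621275117183401271089572633676495409883752932897470883613617171320534471587515256226336112)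 * l * hG47 + (-11470118163820567893509725008802255132137385081553484520387022711817182836451990011027257100892750961345006464945425073149644783599734675637692726485811555777350666693517126524291725639039402334698792169039005034101956585965824716833002296965830461582867633707138340917028292180185419632357897272235354961594961138319761561 / 22290313707377138397505523579483208243312922793781628895857365336909539218333042150234601344092365657437705305177440539710995027689385426224180405602090721334869182443698659056658156240135301006513738842972541072247286914968406398951528088304091216705560666405161687237445282462357887629450590196519020066349155741842652996) * hG48 + (-1195658705291511645975695967895798087320970451518224132276650743031485575982387323498933409672842423480501031903852113341719126489280020788434319766430655981885828546798587941918013185754332612005586991821586261994650915448430264975772092795861154162753420649441585604682326162636088947433244521547150184154835801536716103854628749328110844702295594644463342475999316388561877506772728271652833332543625316760355810279302368405123366185410080192709372516460712999111 / 25951755851857280725604120868517969823087129375074644450895598785991417564042280737182388869549391557808870972862490545873993540552793389179740646330764414053179294939415698289595539964958377402493825227619715142454636558552121933255840492869105536203248687456850349523422716945139638129138332718884332355807525278230706892315376462295626054837082800807823546406802373274238478217366557952535962268950495982412080637263424838120658812709439861014125791151318269617698928) * l * hG52 + (-743136227126686033570733324607130805729913292043879664952381508145278402329361172775289586184091213508517384515270293033382878406371362933471522564787932024748764206155056759100975175455775635327882806544251250074861597558764983902132624171112859463943207518238169742463378476862475598839195939887785088456435537606089372406627725345852830109504522382963761387616552349483438372924846375831160188376215645549202914533917794041298129775385544768625416255605871125244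 / 3229758543889048278276100267388237980770500967626772756234517969184515328061813114444243935378010697656420620875957106963609311598067675873623636789471875504427928979915334813022145057367380700230713016181266818804091566924547233828136262055593580272208369108030957477526722041161344848807538420808982023572222879110751056889109973901785401089840053863976446934339204160971535023069314759126837199939080045600866268078383218603228147738630010580212787628350043510765) * hG53
  have hG55 : (-25 / 384) + l ^ 2 + (125 / 27648) * β = 0 := by
    linear_combination ((1 / 24) * l + (1 / 8) * κ) * hG52 + (27 / 5) * hG53 + ((-1791591655984189973324741749698153483446003064369478102982608443395012377723066758682963212898653402411349467160326935700282858959257763534497037181597790471911073371 / 1043614523637474040164251421413795138741543017488048476341837161674505525274417235041728416951090127110793691314925123708441420785745050586961286691895636490631072105) + (-1 / 8) * β) * hG54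
  have hG56 : (864 / 25) + (36 / 5) * β + β ^ 2 = 0 := by
    linear_combination (-27648 / 125) * l * hG52 + (-5971968 / 625) * hG54 + ((2985984 / 625) + (27648 / 125) * β) * hG55
  have hG57 : (-216 / 5) + -15 * β + (-72 / 5) * α + α * β = 0 := by
    linear_combination (-27648 / 125) * l * hG51 + (95488359530514444257709518381775821889771249068828141735406539918488675685446546292282400942568966109786115624882510525578417620776363317813358224194610286645166514978059822712627122731214514234537427172584581901959562362579140305796688659828847911039126247807947244263014581961984 / 618144741630903455106876491442993780370822582530800215533184229418689321330547728329712678090429739232558729613437660609177225147089947163022267609390835103741333608317168638075201705802437190556443518679446905049810236486039777807390481243810778818704356090944576718575589982375) * l * hG52 + (4478976 / 625) * hG54 + ((-82944 / 25) + (27648 / 125) * α) * hG55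
  have hG58 : (6 / 5) + (3 / 4) * β + α = 0 := by
    linear_combination ((-25 / 576) + (5 / 1728) * α) * hG56 + ((-1 / 16) + (-5 / 1728) * β) * hG57
  constructor
  · linear_combination 256 * hG43 + (234954297914238201511657830134453544792609657234122349630835 / 178394195479390098122281307565593780267563805226273153024) * hG46 + (-1366610447752674388274430922618327359504162437770960667594639045535193934050325 / 3777112233168409327609419249892702284988492490994453187456276124371002687488) * hG47 + (-111914975429482408918504097401343056032212882693989176655717163855648023985496165140064091640632971074319552575415650150518614740506041834324484499661275 / 560104395287276463974282723761350650512056480312680835149289267744694582869235492665119404398473287283598193744787213382380105560727169253213923979776) * hG51 + (-25684265700441350089266149650549104814942465794093196870565890493753446978181579814622090323831777647579535889947387319764650937582617737066489114422491606173183240410201329510482963114976375888926245447266834963493699929928641264757407571581238351562947129928865639135571760594966029175 / 1536227791323549228914141880009063703663879688253717897107318096258716604749340061194990342780107578166966738290997739309689349302869782124465286096454585770739432320388268720702669552784973622259625026755142995794092286470085504802682184301751202543927115088052536346769112138818097152) * hG52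
  · linear_combination 442368 * hG42 + (-452324606313720826452783394972425243118823877688691723388433052965 / 422072238068725543345783842018369152045659402001268161240614) * l * hG47 + (1883878158305826124112859355061046466534035554111651068175138473870042915800266513971608532252051715590697162291671866041969473869003280741892200448872393841939254245701986305406948641773726681631894696425248955 / 3068321336361576559711013605115550280954288701604163688460659832791896297373676986853379550287204132386993648447143047412727377583705216072694418310107311466152726769344559859833757283373291684931104476016) * hG48 + (7479310915332373361322193633468808114805767832903230881400733528763736929135570162578582853515568981039874376836726802187806633739990309097821532797640296989780036042589170399964665851537323783878904879379259685240350590844704479610246267741345896471804344442816101993435788492785391755790791279918198404386319799411969425721780903941462142090564663325 / 765936673777537624757736966380664674313169994293175157764455724817278321290536495463719510438072805095400864197778276721267072808154664306645444796324863030226665155426200457203260145289906432017324249789228889445453107744165445291142435343356090856358850479947184027623976094159671771420978438555418201053257920177765401446448532859679282605390392) * l * hG52 + (-144087255673590305294604098508373580108405553843031447924574498751515939036716421775560304634209696629697561341962704550034073749315116610446146241154411425872106738320768828954839108544231747831622124148009162560851279532563890548951085341870753730115612781712765685559904550412135570820632357559120917821821559030461466651821380573879813947010197510062 / 31914028074064067698239040265861028096382083095548964906852321867386596720439020644321646268253033545641702674907428196719461367006444346110226866513535959592777714809425019050135839387079434667388510407884537060227212822673560220464268139306503785681618769997799334484332337256652990475874101606475758377219080007406891726935355535819970108557933)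 * hG53 + (309824054488027954439567340245162641177304667968363232203903016646798543547639821675345110021261805096917824834876355955491818246528550336590641985461886396147142649641429102194273159924013197065155135 / 51788129205447788820967910672515247375360835533429422953156427877326850397368387556829092112740665625917563298702858181484348243235812317210791776261105507162790445935851666461575621597859186587) * hG54
end

section
/- If κ, λ ∈ ℂ with κ ≠ 0 and the polynomial κw⁶ + λw⁵ − w + 1 factors as (w² + αw + β)²(κw² + γw + δ) for some α, β, γ, δ ∈ ℂ, then 216λ² − 799λ + 64 = 954κ and (16λ − 1)(11664λ² − 1647λ + 64) = 0. -/
set_option maxHeartbeats 4000000 in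
/-- If `κ ≠ 0` and `κw⁶ + λw⁵ − w + 1` factors as `(w² + αw + β)²(κw² + γw + δ)`,
then `216λ² − 799λ + 64 = 954κ` and `(16λ − 1)(11664λ² − 1647λ + 64) = 0`. -/
theorem genus19_elimination (κ l α β γ δ : ℂ) (hκ : κ ≠ 0)
    (h : ∀ w : ℂ,
      κ * w ^ 6 + l * w ^ 5 - w + 1 =
        (w ^ 2 + α * w + β) ^ 2 * (κ * w ^ 2 + γ * w + δ)) :
    216 * l ^ 2 - 799 * l + 64 = 954 * κ ∧
      (16 * l - 1) * (11664 * l ^ 2 - 1647 * l + 64) = 0 := by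
  have E0 : (γ + 2*α*κ - l : ℂ) = 0 := by linear_combination ((-1)/48) * h (1) + ((1)/48) * h (-1) + ((1)/60) * h (2) + ((-1)/60) * h (-2) + ((-1)/240) * h (3) + ((1)/240) * h (-3)
  have E1 : (δ + 2*α*γ + (α^2+2*β)*κ : ℂ) = 0 := by linear_combination ((-7)/18) * h (0) + ((13)/48) * h (1) + ((13)/48) * h (-1) + ((-1)/12) * h (2) + ((-1)/12) * h (-2) + ((1)/144) * h (3) + ((1)/144) * h (-3)
  have E2 : (2*α*δ + (α^2+2*β)*γ + 2*α*β*κ : ℂ) = 0 := by linear_combination ((13)/48) * h (1) + ((-13)/48) * h (-1) + ((-1)/6) * h (2) + ((1)/6) * h (-2) + ((1)/48) * h (3) + ((-1)/48) * h (-3)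
  have E3 : ((α^2+2*β)*δ + 2*α*β*γ + β^2*κ : ℂ) = 0 := by linear_combination ((49)/36) * h (0) + ((-3)/4) * h (1) + ((-3)/4) * h (-1) + ((3)/40) * h (2) + ((3)/40) * h (-2) + ((-1)/180) * h (3) + ((-1)/180) * h (-3)
  have E4 : (2*α*β*δ + β^2*γ + 1 : ℂ) = 0 := by linear_combination ((-3)/4) * h (1) + ((3)/4) * h (-1) + ((3)/20) * h (2) + ((-3)/20) * h (-2) + ((-1)/60) * h (3) + ((1)/60) * h (-3)
  have E5 : (β^2*δ - 1 : ℂ) = 0 := by linear_combination (-1) * h (0)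
  refine ⟨by linear_combination (((381389)/2400)*l + ((-26631)/400)*κ + ((-1187021)/19200)*δ + ((-896)/3)*β + ((327067)/9600)*β*l + ((-1225161)/6400)*β*κ + ((1258)/15)*β*δ + ((13039)/2560)*β*γ + (448)*β^2 + (-119)*β^2*l + ((618)/5)*β^2*κ + (851)*β^2*δ + ((-7293)/32)*β^2*δ*l + ((8877)/200)*β^2*δ*κ + ((-24429)/1600)*β^2*δ^2 + (486)*β^2*γ + ((-2959)/800)*β^2*γ*l + ((-26631)/800)*β^2*γ^2 + (-286)*β^3*κ + ((2431)/32)*β^3*κ*l + ((-2959)/200)*β^3*κ^2 + (-392)*β^3*δ + ((833)/8)*β^3*δ*l + ((42703)/1600)*β^3*δ*κ + ((49)/8)*β^3*δ^2 + (-714)*β^3*γ + ((1993067)/12800)*β^3*γ*l + ((-473581)/2400)*β^3*γ*κ + ((-795)/32)*β^3*γ*δ + ((-198333)/2560)*β^3*γ^2 + ((392)/3)*β^4*κ + ((-833)/24)*β^4*κ*l + ((-36)/5)*β^4*κ^2 + ((-49)/24)*β^4*δ*κ + (336)*β^4*γ + ((-357)/4)*β^4*γ*l + (120)*β^4*γ*κ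 + ((-21)/4)*β^4*γ*δ + (-2)*α + ((12199)/2400)*α*l + ((2647)/200)*α*κ + ((13039)/3840)*α*δ + ((-1187021)/9600)*α*γ + ((-112)/3)*α*β + ((119)/12)*α*β*l + ((-156523)/1920)*α*β*κ + ((9727)/12)*α*β*δ + ((-2959)/480)*α*β*δ*l + ((-54973)/480)*α*β*δ^2 + ((936)/5)*α*β*γ + ((-8877)/160)*α*β*γ*δ + (-324)*α*β^2*κ + ((2959)/1200)*α*β^2*κ*l + ((-7564)/5)*α*β^2*δ + ((2651579)/7680)*α*β^2*δ*l + ((-293867)/1200)*α*β^2*δ*κ + ((9091)/80)*α*β^2*δ^2 + (-977)*α*β^2*γ + ((420687)/1600)*α*β^2*γ*l + ((-2959)/40)*α*β^2*γ*κ + ((-1405739)/12800)*α*β^2*γ*δ + ((-714649)/4800)*α*β^2*γ^2 + ((2918)/5)*α*β^3*κ + ((-2541827)/19200)*α*β^3*κ*l + ((2907)/25)*α*β^3*κ^2 + ((4576)/5)*α*β^3*δ + ((-2431)/10)*α*β^3*δ*l + ((16781)/160)*α*β^3*δ*κ + ((-143)/10)*α*β^3*δ^2 + ((2032)/3)*α*β^3*γ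 + ((-2159)/12)*α*β^3*γ*l + ((6207)/1280)*α*β^3*γ*κ + ((-127)/12)*α*β^3*γ*δ + (195)*α*β^3*γ^2 + ((-1712)/5)*α*β^4*κ + ((1819)/20)*α*β^4*κ*l + (-60)*α*β^4*κ^2 + ((107)/20)*α*β^4*δ*κ + (448)*α^2 + ((-363669)/3200)*α^2*l + ((-17)/5)*α^2*δ + ((-13039)/15360)*α^2*γ + (-512)*α^2*β + (136)*α^2*β*l + (-953)*α^2*β*δ + ((250517)/960)*α^2*β*δ*l + ((-50303)/400)*α^2*β*δ*κ + ((64931)/3200)*α^2*β*δ^2 + (-405)*α^2*β*γ + ((2959)/960)*α^2*β*γ*l + ((-54973)/400)*α^2*β*γ*δ + ((8877)/320)*α^2*β*γ^2 + (270)*α^2*β^2*κ + ((-177587)/2400)*α^2*β^2*κ*l + ((8877)/200)*α^2*β^2*κ^2 + (824)*α^2*β^2*δ + ((-1751)/8)*α^2*β^2*δ*l + ((-107649)/1600)*α^2*β^2*δ*κ + ((-103)/8)*α^2*β^2*δ^2 + ((5731)/5)*α^2*β^2*γ + ((-20901457)/76800)*α^2*β^2*γ*l + ((171253)/800)*α^2*β^2*γ*κ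 + ((61469)/320)*α^2*β^2*γ*δ + ((66111)/1024)*α^2*β^2*γ^2 + ((-832)/3)*α^2*β^3*κ + ((221)/3)*α^2*β^3*κ*l + ((108)/5)*α^2*β^3*κ^2 + ((13)/3)*α^2*β^3*δ*κ + ((-4504)/5)*α^2*β^3*γ + ((9571)/40)*α^2*β^3*γ*l + (-165)*α^2*β^3*γ*κ + ((563)/40)*α^2*β^3*γ*δ + ((224)/9)*α^3 + ((-119)/18)*α^3*l + ((-2923)/18)*α^3*δ + ((2959)/2400)*α^3*δ*l + ((54973)/2400)*α^3*δ^2 + ((8877)/800)*α^3*γ*δ + ((4528)/5)*α^3*β*δ + ((-4272811)/19200)*α^3*β*δ*l + ((2907)/50)*α^3*β*δ*κ + ((-643)/20)*α^3*β*δ^2 + ((675)/2)*α^3*β*γ + ((-177587)/1920)*α^3*β*γ*l + ((8877)/160)*α^3*β*γ*κ + ((46653)/2560)*α^3*β*γ*δ + ((54973)/640)*α^3*β*γ^2 + (-224)*α^3*β^2*κ + ((363669)/6400)*α^3*β^2*κ*l + ((-4352)/5)*α^3*β^2*δ + ((1156)/5)*α^3*β^2*δ*l + ((-53)/2)*α^3*β^2*δ*κ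 + ((68)/5)*α^3*β^2*δ^2 + (-328)*α^3*β^2*γ + ((697)/8)*α^3*β^2*γ*l + (27)*α^3*β^2*γ*κ + ((41)/8)*α^3*β^2*γ*δ + ((-225)/2)*α^3*β^2*γ^2 + (256)*α^3*β^3*κ + (-68)*α^3*β^3*κ*l + (-4)*α^3*β^3*δ*κ + (135)*α^4*δ + ((-177587)/4800)*α^4*δ*l + ((8877)/400)*α^4*δ*κ + ((-9729)/3200)*α^4*δ^2 + ((54973)/1600)*α^4*γ*δ + ((-968)/9)*α^4*β*δ + ((2057)/72)*α^4*β*δ*l + ((54)/5)*α^4*β*δ*κ + ((121)/72)*α^4*β*δ^2 + (-280)*α^4*β*γ + ((363669)/5120)*α^4*β*γ*l + ((-325)/8)*α^4*β*γ*δ + ((-112)/9)*α^4*β^2*κ + ((119)/36)*α^4*β^2*κ*l + ((7)/36)*α^4*β^2*δ*κ + (320)*α^4*β^2*γ + (-85)*α^4*β^2*γ*l + (-5)*α^4*β^2*γ*δ + (-112)*α^5*δ + ((363669)/12800)*α^5*δ*l + ((7)/4)*α^5*δ^2 + (128)*α^5*β*δ + (-34)*α^5*β*δ*l + (-2)*α^5*β*δ^2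 + ((-140)/9)*α^5*β*γ + ((595)/144)*α^5*β*γ*l + ((35)/144)*α^5*β*γ*δ + ((-56)/9)*α^6*δ + ((119)/72)*α^6*δ*l + ((7)/72)*α^6*δ^2) * E0 + ((1) + ((5569)/1280)*l + ((-54973)/400)*κ + ((1187021)/19200)*γ + ((112)/9)*β + ((-119)/36)*β*l + ((104683)/960)*β*κ + ((-7)/36)*β*δ + ((-504)/5)*β*γ + (324)*β^2*κ + ((-2959)/1200)*β^2*κ*l + ((-54973)/1200)*β^2*δ*κ + (858)*β^2*γ + ((-7293)/32)*β^2*γ*l + ((8877)/400)*β^2*γ*κ + ((-24429)/1600)*β^2*γ*δ + ((54973)/800)*β^2*γ^2 + (-476)*β^3*κ + ((1993067)/19200)*β^3*κ*l + ((-2907)/25)*β^3*κ^2 + ((695)/16)*β^3*δ*κ + (-392)*β^3*γ + ((833)/8)*β^3*γ*l + ((-38463)/1280)*β^3*γ*κ + ((49)/8)*β^3*γ*δ + (-90)*β^3*γ^2 + (224)*β^4*κ + ((-119)/2)*β^4*κ*l + (60)*β^4*κ^2 + ((-7)/2)*β^4*δ*κ + ((-896)/3)*α + ((2892221)/38400)*α*l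 + ((-38)/15)*α*δ + ((13039)/7680)*α*γ + (384)*α*β + (-102)*α*β*l + (566)*α*β*δ + ((-2431)/16)*α*β*δ*l + ((2959)/100)*α*β*δ*κ + ((-8143)/800)*α*β*δ^2 + (648)*α*β*γ + ((-2959)/600)*α*β*γ*l + ((-54973)/1200)*α*β*γ*δ + ((-8877)/200)*α*β*γ^2 + (-270)*α*β^2*κ + ((177587)/2400)*α*β^2*κ*l + ((-8877)/200)*α*β^2*κ^2 + ((-784)/3)*α*β^2*δ + ((833)/12)*α*β^2*δ*l + ((32769)/1600)*α*β^2*δ*κ + ((49)/12)*α*β^2*δ^2 + ((-6374)/5)*α*β^2*γ + ((2816207)/9600)*α*β^2*γ*l + ((-241021)/800)*α*β^2*γ*κ + ((5107)/160)*α*β^2*γ*δ + ((-66111)/640)*α*β^2*γ^2 + ((832)/3)*α*β^3*κ + ((-221)/3)*α*β^3*κ*l + ((-108)/5)*α*β^3*κ^2 + ((-13)/3)*α*β^3*δ*κ + ((4016)/5)*α*β^3*γ + ((-4267)/20)*α*β^3*γ*l + (210)*α*β^3*γ*κ + ((-251)/20)*α*β^3*γ*δ + ((-56)/3)*α^2 +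 ((119)/24)*α^2*l + ((7783)/24)*α^2*δ + ((-2959)/1200)*α^2*δ*l + ((-54973)/1200)*α^2*δ^2 + ((-8877)/400)*α^2*γ*δ + ((-3456)/5)*α^2*β*δ + ((3090587)/19200)*α^2*β*δ*l + ((-2907)/25)*α^2*β*δ*κ + ((234)/5)*α^2*β*δ^2 + (-540)*α^2*β*γ + ((177587)/1200)*α^2*β*γ*l + ((-8877)/100)*α^2*β*γ*κ + ((-252723)/6400)*α^2*β*γ*δ + ((-54973)/400)*α^2*β*γ^2 + (224)*α^2*β^2*κ + ((-363669)/6400)*α^2*β^2*κ*l + ((2304)/5)*α^2*β^2*δ + ((-612)/5)*α^2*β^2*δ*l + ((113)/2)*α^2*β^2*δ*κ + ((-36)/5)*α^2*β^2*δ^2 + ((1664)/3)*α^2*β^2*γ + ((-442)/3)*α^2*β^2*γ*l + ((-216)/5)*α^2*β^2*γ*κ + ((-26)/3)*α^2*β^2*γ*δ + (180)*α^2*β^2*γ^2 + (-256)*α^2*β^3*κ + (68)*α^2*β^3*κ*l + (4)*α^2*β^3*δ*κ + (-270)*α^3*δ + ((177587)/2400)*α^3*δ*l + ((-8877)/200)*α^3*δ*κ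 + ((9729)/1600)*α^3*δ^2 + ((-54973)/800)*α^3*γ*δ + ((832)/3)*α^3*β*δ + ((-221)/3)*α^3*β*δ*l + ((-108)/5)*α^3*β*δ*κ + ((-13)/3)*α^3*β*δ^2 + (448)*α^3*β*γ + ((-363669)/3200)*α^3*β*γ*l + (83)*α^3*β*γ*δ + ((112)/9)*α^3*β^2*κ + ((-119)/36)*α^3*β^2*κ*l + ((-7)/36)*α^3*β^2*δ*κ + (-512)*α^3*β^2*γ + (136)*α^3*β^2*γ*l + (8)*α^3*β^2*γ*δ + (224)*α^4*δ + ((-363669)/6400)*α^4*δ*l + ((-7)/2)*α^4*δ^2 + (-256)*α^4*β*δ + (68)*α^4*β*δ*l + (4)*α^4*β*δ^2 + ((224)/9)*α^4*β*γ + ((-119)/18)*α^4*β*γ*l + ((-7)/18)*α^4*β*γ*δ + ((112)/9)*α^5*δ + ((-119)/36)*α^5*δ*l + ((-7)/36)*α^5*δ^2) * E1 + (((448)/3) + ((-2906023)/76800)*l + ((87561)/6400)*κ + ((19)/15)*δ + ((-13039)/5120)*γ + (-256)*β + (-13)*β*l + ((2959)/4800)*β*l^2 + ((-243)/5)*β*κ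 + (-282)*β*δ + ((419623)/4800)*β*δ*l + ((-2959)/200)*β*δ*κ + ((8143)/1600)*β*δ^2 + (-243)*β*γ + ((2959)/400)*β*γ*l + ((54973)/4800)*β*γ*δ + ((26631)/1600)*β*γ^2 + (119)*β^2*l + ((-1993067)/76800)*β^2*l^2 + (286)*β^2*κ + ((-37519)/800)*β^2*κ*l + ((2959)/200)*β^2*κ^2 + ((392)/3)*β^2*δ + ((-8749)/192)*β^2*δ*l + ((-19663)/1600)*β^2*δ*κ + ((-49)/24)*β^2*δ^2 + (357)*β^2*γ + ((-103907)/1600)*β^2*γ*l + ((264277)/2400)*β^2*γ*κ + ((-165)/64)*β^2*γ*δ + ((198333)/5120)*β^2*γ^2 + (-56)*β^3*l + ((119)/8)*β^3*l^2 + ((-392)/3)*β^3*κ + ((473)/24)*β^3*κ*l + ((36)/5)*β^3*κ^2 + ((7)/8)*β^3*δ*l + ((49)/24)*β^3*δ*κ + (-168)*β^3*γ + ((357)/8)*β^3*γ*l + (-75)*β^3*γ*κ + ((21)/8)*β^3*γ*δ + ((112)/9)*α + ((-119)/36)*α*l + ((-5839)/36)*α*δ + ((2959)/2400)*α*δ*l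 + ((54973)/2400)*α*δ^2 + ((8877)/800)*α*γ*δ + ((135)/2)*α*β*l + ((-177587)/9600)*α*β*l^2 + (162)*α*β*κ + ((2959)/300)*α*β*κ*l + ((1728)/5)*α*β*δ + ((-3148961)/38400)*α*β*δ*l + ((84563)/2400)*α*β*δ*κ + ((-117)/5)*α*β*δ^2 + ((405)/2)*α*β*γ + ((-61307)/1600)*α*β*γ*l + ((8877)/400)*α*β*γ*κ + ((272181)/12800)*α*β*γ*δ + ((164919)/3200)*α*β*γ^2 + ((-208)/3)*α*β^2*l + ((221)/12)*α*β^2*l^2 + ((-1728)/5)*α*β^2*κ + ((3297947)/38400)*α*β^2*κ*l + ((-2907)/50)*α*β^2*κ^2 + ((-1152)/5)*α*β^2*δ + ((3737)/60)*α*β^2*δ*l + ((-33)/5)*α*β^2*δ*κ + ((18)/5)*α*β^2*δ^2 + (-208)*α*β^2*γ + ((131)/4)*α*β^2*γ*l + ((-24639)/2560)*α*β^2*γ*κ + ((13)/4)*α*β^2*γ*δ + ((-135)/2)*α*β^2*γ^2 + ((1152)/5)*α*β^3*κ + ((-306)/5)*α*β^3*κ*l + (30)*α*β^3*κ^2 +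 ((-18)/5)*α*β^3*δ*κ + (135)*α^2*δ + ((-177587)/4800)*α^2*δ*l + ((8877)/400)*α^2*δ*κ + ((-9729)/3200)*α^2*δ^2 + ((54973)/1600)*α^2*γ*δ + (-56)*α^2*β*l + ((363669)/25600)*α^2*β*l^2 + (-135)*α^2*β*κ + ((177587)/4800)*α^2*β*κ*l + ((-8877)/400)*α^2*β*κ^2 + ((-416)/3)*α^2*β*δ + ((905)/24)*α^2*β*δ*l + ((44289)/3200)*α^2*β*δ*κ + ((13)/6)*α^2*β*δ^2 + (-168)*α^2*β*γ + ((1091007)/25600)*α^2*β*γ*l + ((-54973)/1600)*α^2*β*γ*κ + ((-339)/8)*α^2*β*γ*δ + (64)*α^2*β^2*l + (-17)*α^2*β^2*l^2 + ((416)/3)*α^2*β^2*κ + ((-221)/6)*α^2*β^2*κ*l + ((-54)/5)*α^2*β^2*κ^2 + (-1)*α^2*β^2*δ*l + ((-13)/6)*α^2*β^2*δ*κ + (192)*α^2*β^2*γ + (-51)*α^2*β^2*γ*l + (45)*α^2*β^2*γ*κ + (-3)*α^2*β^2*γ*δ + (-112)*α^3*δ + ((363669)/12800)*α^3*δ*l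 + ((7)/4)*α^3*δ^2 + ((-28)/9)*α^3*β*l + ((119)/144)*α^3*β*l^2 + (112)*α^3*β*κ + ((-363669)/12800)*α^3*β*κ*l + (128)*α^3*β*δ + ((-4889)/144)*α^3*β*δ*l + ((-7)/4)*α^3*β*δ*κ + (-2)*α^3*β*δ^2 + ((-28)/3)*α^3*β*γ + ((119)/48)*α^3*β*γ*l + ((7)/48)*α^3*β*γ*δ + (-128)*α^3*β^2*κ + (34)*α^3*β^2*κ*l + (2)*α^3*β^2*δ*κ + ((-56)/9)*α^4*δ + ((119)/72)*α^4*δ*l + ((7)/72)*α^4*δ^2 + ((56)/9)*α^4*β*κ + ((-119)/72)*α^4*β*κ*l + ((-7)/72)*α^4*β*δ*κ) * E2 + (((-56)/9) + ((1891)/360)*l + ((-1003)/480)*κ + ((7)/72)*δ + ((36)/5)*γ + (-286)*β*l + ((2431)/32)*β*l^2 + (-648)*β*κ + ((-2959)/300)*β*κ*l + ((8143)/1600)*β*δ*l + ((54973)/600)*β*δ*κ + (-572)*β*γ + ((309677)/2400)*β*γ*l + ((2959)/200)*β*γ*κ + ((8143)/800)*β*γ*δ + ((-54973)/1200)*β*γ^2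 + ((392)/3)*β^2*l + ((-833)/24)*β^2*l^2 + (952)*β^2*κ + ((-2062187)/9600)*β^2*κ*l + ((5814)/25)*β^2*κ^2 + ((-49)/24)*β^2*δ*l + ((-695)/8)*β^2*δ*κ + ((784)/3)*β^2*γ + ((-473)/12)*β^2*γ*l + ((11379)/128)*β^2*γ*κ + ((-49)/12)*β^2*γ*δ + (60)*β^2*γ^2 + (-448)*β^3*κ + (119)*β^3*κ*l + (-120)*β^3*κ^2 + (7)*β^3*δ*κ + (-162)*α*l + ((2959)/2400)*α*l^2 + ((54973)/2400)*α*δ*l + (-324)*α*γ + ((32549)/2400)*α*γ*l + ((54973)/1200)*α*γ*δ + ((8877)/400)*α*γ^2 + ((1728)/5)*α*β*l + ((-3090587)/38400)*α*β*l^2 + (540)*α*β*κ + ((-107819)/1200)*α*β*κ*l + ((8877)/100)*α*β*κ^2 + ((-117)/5)*α*β*δ*l + ((-9729)/800)*α*β*δ*κ + ((3456)/5)*α*β*γ + ((-5189509)/38400)*α*β*γ*l + ((20297)/80)*α*β*γ*κ + ((-234)/5)*α*β*γ*δ + ((66111)/1280)*α*β*γ^2 + ((-1152)/5)*α*β^2*l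 + ((306)/5)*α*β^2*l^2 + ((-1664)/3)*α*β^2*κ + ((352)/3)*α*β^2*κ*l + ((216)/5)*α*β^2*κ^2 + ((18)/5)*α*β^2*δ*l + ((26)/3)*α*β^2*δ*κ + ((-2304)/5)*α*β^2*γ + ((612)/5)*α*β^2*γ*l + (-240)*α*β^2*γ*κ + ((36)/5)*α*β^2*γ*δ + (135)*α^2*l + ((-177587)/4800)*α^2*l^2 + ((8877)/400)*α^2*κ*l + ((-9729)/3200)*α^2*δ*l + (270)*α^2*γ + ((-38051)/960)*α^2*γ*l + ((8877)/200)*α^2*γ*κ + ((-9729)/1600)*α^2*γ*δ + ((54973)/800)*α^2*γ^2 + ((-416)/3)*α^2*β*l + ((221)/6)*α^2*β*l^2 + (-448)*α^2*β*κ + ((398229)/3200)*α^2*β*κ*l + ((13)/6)*α^2*β*δ*l + (7)*α^2*β*δ*κ + ((-832)/3)*α^2*β*γ + ((86)/3)*α^2*β*γ*l + ((108)/5)*α^2*β*γ*κ + ((13)/3)*α^2*β*γ*δ + (-90)*α^2*β*γ^2 + (512)*α^2*β^2*κ + (-136)*α^2*β^2*κ*l + (-8)*α^2*β^2*δ*κ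 + (-112)*α^3*l + ((363669)/12800)*α^3*l^2 + ((7)/4)*α^3*δ*l + (-224)*α^3*γ + ((363669)/6400)*α^3*γ*l + ((7)/2)*α^3*γ*δ + (128)*α^3*β*l + (-34)*α^3*β*l^2 + ((-224)/9)*α^3*β*κ + ((119)/18)*α^3*β*κ*l + (-2)*α^3*β*δ*l + ((7)/18)*α^3*β*δ*κ + (256)*α^3*β*γ + (-68)*α^3*β*γ*l + (-4)*α^3*β*γ*δ + ((-56)/9)*α^4*l + ((119)/72)*α^4*l^2 + ((7)/72)*α^4*δ*l + ((-112)/9)*α^4*γ + ((119)/36)*α^4*γ*l + ((7)/36)*α^4*γ*δ) * E3 + ((64) + (631)*l + ((-2959)/600)*l^2 + (18)*κ + (-1)*δ + ((-54973)/600)*δ*l + ((-8877)/200)*γ*l + (-952)*β*l + ((1993067)/9600)*β*l^2 + (-1430)*β*κ + ((117827)/800)*β*κ*l + ((-2959)/40)*β*κ^2 + ((695)/8)*β*δ*l + ((8143)/320)*β*δ*κ + ((-66111)/640)*β*γ*l + ((-54973)/480)*β*γ*κ + (448)*β^2*l + (-119)*β^2*l^2 + ((1960)/3)*β^2*κ +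 ((-1285)/24)*β^2*κ*l + (-36)*β^2*κ^2 + (-7)*β^2*δ*l + ((-245)/24)*β^2*δ*κ + (150)*β^2*γ*κ + (-540)*α*l + ((177587)/1200)*α*l^2 + (-810)*α*κ + ((-198253)/2400)*α*κ*l + ((9729)/800)*α*δ*l + ((54973)/480)*α*δ*κ + ((-54973)/400)*α*γ*l + ((8877)/160)*α*γ*κ + ((1664)/3)*α*β*l + ((-442)/3)*α*β*l^2 + (1728)*α*β*κ + ((-3422363)/7680)*α*β*κ*l + ((2907)/10)*α*β*κ^2 + ((-26)/3)*α*β*δ*l + (-117)*α*β*δ*κ + (180)*α*β*γ*l + ((66111)/512)*α*β*γ*κ + (-1152)*α*β^2*κ + (306)*α*β^2*κ*l + (-150)*α*β^2*κ^2 + (18)*α*β^2*δ*κ + (448)*α^2*l + ((-363669)/3200)*α^2*l^2 + (675)*α^2*κ + ((-177587)/960)*α^2*κ*l + ((8877)/80)*α^2*κ^2 + (-7)*α^2*δ*l + ((-9729)/640)*α^2*δ*κ + ((54973)/320)*α^2*γ*κ + (-512)*α^2*β*l + (136)*α^2*β*l^2 + ((-2080)/3)*α^2*β*κ + ((1105)/6)*α^2*β*κ*l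 + (54)*α^2*β*κ^2 + (8)*α^2*β*δ*l + ((65)/6)*α^2*β*δ*κ + (-225)*α^2*β*γ*κ + ((224)/9)*α^3*l + ((-119)/18)*α^3*l^2 + (-560)*α^3*κ + ((363669)/2560)*α^3*κ*l + ((-7)/18)*α^3*δ*l + ((35)/4)*α^3*δ*κ + (640)*α^3*β*κ + (-170)*α^3*β*κ*l + (-10)*α^3*β*δ*κ + ((-280)/9)*α^4*κ + ((595)/72)*α^4*κ*l + ((35)/72)*α^4*δ*κ) * E4 + ((1430)*l + ((-12155)/32)*l^2 + (972)*κ + ((26631)/400)*κ*l + ((-8143)/320)*δ*l + ((-54973)/400)*δ*κ + ((54973)/480)*γ*l + ((-26631)/400)*γ*κ + ((-1960)/3)*β*l + ((4165)/24)*β*l^2 + (-1428)*β*κ + ((2223467)/6400)*β*κ*l + ((-8721)/25)*β*κ^2 + ((245)/24)*β*δ*l + ((2085)/16)*β*δ*κ + (-150)*β*γ*l + ((-198333)/1280)*β*γ*κ + (672)*β^2*κ + ((-357)/2)*β^2*κ*l + (180)*β^2*κ^2 + ((-21)/2)*β^2*δ*κ + (-538)*α*l + ((4573)/32)*α*l^2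 + (-810)*α*κ + ((177587)/800)*α*κ*l + ((-26631)/200)*α*κ^2 + ((269)/32)*α*δ*l + ((29187)/1600)*α*δ*κ + ((-164919)/800)*α*γ*κ + (592)*α*β*l + ((-629)/4)*α*β*l^2 + (832)*α*β*κ + (-221)*α*β*κ*l + ((-324)/5)*α*β*κ^2 + ((-37)/4)*α*β*δ*l + (-13)*α*β*δ*κ + (270)*α*β*γ*κ + (672)*α^2*κ + ((-1091007)/6400)*α^2*κ*l + ((-21)/2)*α^2*δ*κ + (-768)*α^2*β*κ + (204)*α^2*β*κ*l + (12)*α^2*β*δ*κ + ((112)/3)*α^3*κ + ((-119)/12)*α^3*κ*l + ((-7)/12)*α^3*δ*κ) * E5, ?_⟩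
  linear_combination (((-19469021)/2400)*l + ((3432501)/25)*l^2 + ((2155959)/400)*κ + ((-1438074)/25)*κ*l + ((44910749)/19200)*δ + ((-10683189)/200)*δ*l + ((896)/3)*β + ((-61166923)/9600)*β*l + ((2943603)/100)*β*l^2 + ((57618009)/6400)*β*κ + ((-33079347)/200)*β*κ*l + ((-64222)/15)*β*δ + ((362304)/5)*β*δ*l + ((-707551)/2560)*β*γ + ((352053)/80)*β*γ*l + (-448)*β^2 + (13223)*β^2*l + (-102816)*β^2*l^2 + ((-33372)/5)*β^2*κ + ((533952)/5)*β^2*κ*l + (-851)*β^2*δ + ((616845)/32)*β^2*δ*l + (-196911)*β^2*δ*l^2 + ((-718653)/200)*β^2*δ*κ + ((958716)/25)*β^2*δ*κ*l + ((184701)/1600)*β^2*δ^2 + ((-659583)/50)*β^2*δ^2*l + (-486)*β^2*γ + ((6460351)/800)*β^2*γ*l + ((-79893)/25)*β^2*γ*l^2 + ((2155959)/800)*β^2*γ^2 + ((-719037)/25)*β^2*γ^2*l + (286)*β^3*κ + ((-270127)/32)*β^3*κ*l + (65637)*β^3*κ*l^2 + ((239551)/200)*β^3*κ^2 + ((-319572)/25)*β^3*κ^2*l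 + (392)*β^3*δ + ((-92561)/8)*β^3*δ*l + (89964)*β^3*δ*l^2 + ((-1927807)/1600)*β^3*δ*κ + ((1152981)/50)*β^3*δ*κ*l + ((-49)/8)*β^3*δ^2 + (5292)*β^3*δ^2*l + (714)*β^3*γ + ((-246288923)/12800)*β^3*γ*l + ((53812809)/400)*β^3*γ*l^2 + ((22369789)/2400)*β^3*γ*κ + ((-4262229)/25)*β^3*γ*κ*l + ((61851)/32)*β^3*γ*δ + (-21465)*β^3*γ*δ*l + ((10707597)/2560)*β^3*γ^2 + ((-5354991)/80)*β^3*γ^2*l + ((-392)/3)*β^4*κ + ((92561)/24)*β^4*κ*l + (-29988)*β^4*κ*l^2 + ((1944)/5)*β^4*κ^2 + ((-31104)/5)*β^4*κ^2*l + ((49)/24)*β^4*δ*κ + (-1764)*β^4*δ*κ*l + (-336)*β^4*γ + ((39669)/4)*β^4*γ*l + (-77112)*β^4*γ*l^2 + (-6480)*β^4*γ*κ + (103680)*β^4*γ*κ*l + ((21)/4)*β^4*γ*δ + (-4536)*β^4*γ*δ*l + (2)*α + ((-732631)/2400)*α*l + ((109791)/25)*α*l^2 + ((356057)/200)*α*κ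 + ((285876)/25)*α*κ*l + ((-707551)/3840)*α*δ + ((117351)/40)*α*δ*l + ((44910749)/9600)*α*γ + ((-10683189)/100)*α*γ*l + ((112)/3)*α*β + ((-13223)/12)*α*β*l + (8568)*α*β*l^2 + ((8452507)/1920)*α*β*κ + ((-1408707)/20)*α*β*κ*l + ((-9727)/12)*α*β*δ + ((6702271)/480)*α*β*δ*l + ((-26631)/5)*α*β*δ*l^2 + ((2169037)/480)*α*β*δ^2 + ((-494757)/5)*α*β*δ^2*l + ((-50544)/5)*α*β*γ + ((808704)/5)*α*β*γ*l + ((718653)/160)*α*β*γ*δ + ((-239679)/5)*α*β*γ*δ*l + (324)*α*β^2*κ + ((-6460351)/1200)*α*β^2*κ*l + ((53262)/25)*α*β^2*κ*l^2 + ((7564)/5)*α*β^2*δ + ((-319461227)/7680)*α*β^2*δ*l + ((23864211)/80)*α*β^2*δ*l^2 + ((14664923)/1200)*α*β^2*δ*κ + ((-5289606)/25)*α*β^2*δ*κ*l + ((-390691)/80)*α*β^2*δ^2 + ((490914)/5)*α*β^2*δ^2*l + (977)*α*β^2*γ + ((-46434303)/1600)*α*β^2*γ*l + ((11358549)/50)*α*β^2*γ*l^2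 + ((239551)/40)*α*β^2*γ*κ + ((-319572)/5)*α*β^2*γ*κ*l + ((86204891)/12800)*α*β^2*γ*δ + ((-37954953)/400)*α*β^2*γ*δ*l + ((28197481)/4800)*α*β^2*γ^2 + ((-6431841)/50)*α*β^2*γ^2*l + ((-2918)/5)*α*β^3*κ + ((307265843)/19200)*α*β^3*κ*l + ((-22876443)/200)*α*β^3*κ*l^2 + ((-140283)/25)*α*β^3*κ^2 + ((2511648)/25)*α*β^3*κ^2*l + ((-4576)/5)*α*β^3*δ + ((270127)/10)*α*β^3*δ*l + ((-1050192)/5)*α*β^3*δ*l^2 + ((-983501)/160)*α*β^3*δ*κ + ((453087)/5)*α*β^3*δ*κ*l + ((143)/10)*α*β^3*δ^2 + ((-61776)/5)*α*β^3*δ^2*l + ((-2032)/3)*α*β^3*γ + ((239903)/12)*α*β^3*γ*l + (-155448)*α*β^3*γ*l^2 + ((-334383)/1280)*α*β^3*γ*κ + ((167589)/40)*α*β^3*γ*κ*l + ((127)/12)*α*β^3*γ*δ + (-9144)*α*β^3*γ*δ*l + (-10530)*α*β^3*γ^2 + (168480)*α*β^3*γ^2*l + ((1712)/5)*α*β^4*κ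 + ((-202123)/20)*α*β^4*κ*l + ((392904)/5)*α*β^4*κ*l^2 + (3240)*α*β^4*κ^2 + (-51840)*α*β^4*κ^2*l + ((-107)/20)*α*β^4*δ*κ + ((23112)/5)*α*β^4*δ*κ*l + (-448)*α^2 + ((41388261)/3200)*α^2*l + ((-9819063)/100)*α^2*l^2 + ((-937)/5)*α^2*δ + ((-14688)/5)*α^2*δ*l + ((707551)/15360)*α^2*γ + ((-117351)/160)*α^2*γ*l + (512)*α^2*β + (-15112)*α^2*β*l + (117504)*α^2*β*l^2 + (953)*α^2*β*δ + ((-20889893)/960)*α^2*β*δ*l + ((2254653)/10)*α^2*β*δ*l^2 + ((4072367)/400)*α^2*β*δ*κ + ((-2716362)/25)*α^2*β*δ*κ*l + ((-973139)/3200)*α^2*β*δ^2 + ((1753137)/100)*α^2*β*δ^2*l + (405)*α^2*β*γ + ((-6460351)/960)*α^2*β*γ*l + ((26631)/10)*α^2*β*γ*l^2 + ((2169037)/400)*α^2*β*γ*δ + ((-2968542)/25)*α^2*β*γ*δ*l + ((-718653)/320)*α^2*β*γ^2 + ((239679)/10)*α^2*β*γ^2*l + (-270)*α^2*β^2*κ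 + ((19421603)/2400)*α^2*β^2*κ*l + ((-1598283)/25)*α^2*β^2*κ*l^2 + ((-718653)/200)*α^2*β^2*κ^2 + ((958716)/25)*α^2*β^2*κ^2*l + (-824)*α^2*β^2*δ + ((194567)/8)*α^2*β^2*δ*l + (-189108)*α^2*β^2*δ*l^2 + ((5457681)/1600)*α^2*β^2*δ*κ + ((-2906523)/50)*α^2*β^2*δ*κ*l + ((103)/8)*α^2*β^2*δ^2 + (-11124)*α^2*β^2*δ^2*l + ((-5731)/5)*α^2*β^2*γ + ((2464248673)/76800)*α^2*β^2*γ*l + ((-188113113)/800)*α^2*β^2*γ*l^2 + ((-7780357)/800)*α^2*β^2*γ*κ + ((4623831)/25)*α^2*β^2*γ*κ*l + ((-3623069)/320)*α^2*β^2*γ*δ + ((1659663)/10)*α^2*β^2*γ*δ*l + ((-3569199)/1024)*α^2*β^2*γ^2 + ((1784997)/32)*α^2*β^2*γ^2*l + ((832)/3)*α^2*β^3*κ + ((-24557)/3)*α^2*β^3*κ*l + (63648)*α^2*β^3*κ*l^2 + ((-5832)/5)*α^2*β^3*κ^2 + ((93312)/5)*α^2*β^3*κ^2*l + ((-13)/3)*α^2*β^3*δ*κ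 + (3744)*α^2*β^3*δ*κ*l + ((4504)/5)*α^2*β^3*γ + ((-1063507)/40)*α^2*β^3*γ*l + ((1033668)/5)*α^2*β^3*γ*l^2 + (8910)*α^2*β^3*γ*κ + (-142560)*α^2*β^3*γ*κ*l + ((-563)/40)*α^2*β^3*γ*δ + ((60804)/5)*α^2*β^3*γ*δ*l + ((-224)/9)*α^3 + ((13223)/18)*α^3*l + (-5712)*α^3*l^2 + ((2923)/18)*α^3*δ + ((-7266751)/2400)*α^3*δ*l + ((26631)/25)*α^3*δ*l^2 + ((-2169037)/2400)*α^3*δ^2 + ((494757)/25)*α^3*δ^2*l + ((-718653)/800)*α^3*γ*δ + ((239679)/25)*α^3*γ*δ*l + ((-4528)/5)*α^3*β*δ + ((494533339)/19200)*α^3*β*δ*l + ((-38455299)/200)*α^3*β*δ*l^2 + ((-140283)/50)*α^3*β*δ*κ + ((1255824)/25)*α^3*β*δ*κ*l + ((19723)/20)*α^3*β*δ^2 + ((-138888)/5)*α^3*β*δ^2*l + ((-675)/2)*α^3*β*γ + ((19421603)/1920)*α^3*β*γ*l + ((-1598283)/20)*α^3*β*γ*l^2 + ((-718653)/160)*α^3*β*γ*κ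 + ((239679)/5)*α^3*β*γ*κ*l + ((-3229197)/2560)*α^3*β*γ*δ + ((1259631)/80)*α^3*β*γ*δ*l + ((-2169037)/640)*α^3*β*γ^2 + ((1484271)/20)*α^3*β*γ^2*l + (224)*α^3*β^2*κ + ((-41388261)/6400)*α^3*β^2*κ*l + ((9819063)/200)*α^3*β^2*κ*l^2 + ((4352)/5)*α^3*β^2*δ + ((-128452)/5)*α^3*β^2*δ*l + ((998784)/5)*α^3*β^2*δ*l^2 + ((3233)/2)*α^3*β^2*δ*κ + (-22896)*α^3*β^2*δ*κ*l + ((-68)/5)*α^3*β^2*δ^2 + ((58752)/5)*α^3*β^2*δ^2*l + (328)*α^3*β^2*γ + ((-77449)/8)*α^3*β^2*γ*l + (75276)*α^3*β^2*γ*l^2 + (-1458)*α^3*β^2*γ*κ + (23328)*α^3*β^2*γ*κ*l + ((-41)/8)*α^3*β^2*γ*δ + (4428)*α^3*β^2*γ*δ*l + (6075)*α^3*β^2*γ^2 + (-97200)*α^3*β^2*γ^2*l + (-256)*α^3*β^3*κ + (7556)*α^3*β^3*κ*l + (-58752)*α^3*β^3*κ*l^2 + (4)*α^3*β^3*δ*κ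 + (-3456)*α^3*β^3*δ*κ*l + (-135)*α^4*δ + ((19421603)/4800)*α^4*δ*l + ((-1598283)/50)*α^4*δ*l^2 + ((-718653)/400)*α^4*δ*κ + ((479358)/25)*α^4*δ*κ*l + ((170001)/3200)*α^4*δ^2 + ((-262683)/100)*α^4*δ^2*l + ((-2169037)/1600)*α^4*γ*δ + ((1484271)/50)*α^4*γ*δ*l + ((968)/9)*α^4*β*δ + ((-228569)/72)*α^4*β*δ*l + (24684)*α^4*β*δ*l^2 + ((-2916)/5)*α^4*β*δ*κ + ((46656)/5)*α^4*β*δ*κ*l + ((-121)/72)*α^4*β*δ^2 + (1452)*α^4*β*δ^2*l + (280)*α^4*β*γ + ((-41388261)/5120)*α^4*β*γ*l + ((9819063)/160)*α^4*β*γ*l^2 + ((19405)/8)*α^4*β*γ*δ + (-35100)*α^4*β*γ*δ*l + ((112)/9)*α^4*β^2*κ + ((-13223)/36)*α^4*β^2*κ*l + (2856)*α^4*β^2*κ*l^2 + ((-7)/36)*α^4*β^2*δ*κ + (168)*α^4*β^2*δ*κ*l + (-320)*α^4*β^2*γ + (9445)*α^4*β^2*γ*l + (-73440)*α^4*β^2*γ*l^2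 + (5)*α^4*β^2*γ*δ + (-4320)*α^4*β^2*γ*δ*l + (112)*α^5*δ + ((-41388261)/12800)*α^5*δ*l + ((9819063)/400)*α^5*δ*l^2 + ((-7)/4)*α^5*δ^2 + (1512)*α^5*δ^2*l + (-128)*α^5*β*δ + (3778)*α^5*β*δ*l + (-29376)*α^5*β*δ*l^2 + (2)*α^5*β*δ^2 + (-1728)*α^5*β*δ^2*l + ((140)/9)*α^5*β*γ + ((-66115)/144)*α^5*β*γ*l + (3570)*α^5*β*γ*l^2 + ((-35)/144)*α^5*β*γ*δ + (210)*α^5*β*γ*δ*l + ((56)/9)*α^6*δ + ((-13223)/72)*α^6*δ*l + (1428)*α^6*δ*l^2 + ((-7)/72)*α^6*δ^2 + (84)*α^6*δ^2*l) * E0 + ((-1) + ((-281041)/1280)*l + ((150363)/40)*l^2 + ((2169037)/400)*κ + ((-2968542)/25)*κ*l + ((-44910749)/19200)*γ + ((10683189)/200)*γ*l + ((-112)/9)*β + ((13223)/36)*β*l + (-2856)*β*l^2 + ((-5653147)/960)*β*κ + ((942147)/10)*β*κ*l + ((7)/36)*β*δ + (-168)*β*δ*l + ((27216)/5)*β*γ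 + ((-435456)/5)*β*γ*l + (-324)*β^2*κ + ((6460351)/1200)*β^2*κ*l + ((-53262)/25)*β^2*κ*l^2 + ((2169037)/1200)*β^2*δ*κ + ((-989514)/25)*β^2*δ*κ*l + (-858)*β^2*γ + ((810381)/32)*β^2*γ*l + (-196911)*β^2*γ*l^2 + ((-718653)/400)*β^2*γ*κ + ((479358)/25)*β^2*γ*κ*l + ((184701)/1600)*β^2*γ*δ + ((-659583)/50)*β^2*γ*δ*l + ((-2169037)/800)*β^2*γ^2 + ((1484271)/25)*β^2*γ^2*l + (476)*β^3*κ + ((-246288923)/19200)*β^3*κ*l + ((17937603)/200)*β^3*κ*l^2 + ((140283)/25)*β^3*κ^2 + ((-2511648)/25)*β^3*κ^2*l + ((-31223)/16)*β^3*δ*κ + (37530)*β^3*δ*κ*l + (392)*β^3*γ + ((-92561)/8)*β^3*γ*l + (89964)*β^3*γ*l^2 + ((2076207)/1280)*β^3*γ*κ + ((-1038501)/40)*β^3*γ*κ*l + ((-49)/8)*β^3*γ*δ + (5292)*β^3*γ*δ*l + (4860)*β^3*γ^2 + (-77760)*β^3*γ^2*l + (-224)*β^4*κ + ((13223)/2)*β^4*κ*l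 + (-51408)*β^4*κ*l^2 + (-3240)*β^4*κ^2 + (51840)*β^4*κ^2*l + ((7)/2)*β^4*δ*κ + (-3024)*β^4*δ*κ*l + ((896)/3)*α + ((-330180749)/38400)*α*l + ((26029989)/400)*α*l^2 + ((5762)/15)*α*δ + ((-10944)/5)*α*δ*l + ((-707551)/7680)*α*γ + ((117351)/80)*α*γ*l + (-384)*α*β + (11334)*α*β*l + (-88128)*α*β*l^2 + (-566)*α*β*δ + ((187183)/16)*α*β*δ*l + (-131274)*α*β*δ*l^2 + ((-239551)/100)*α*β*δ*κ + ((639144)/25)*α*β*δ*κ*l + ((61567)/800)*α*β*δ^2 + ((-219861)/25)*α*β*δ^2*l + (-648)*α*β*γ + ((6460351)/600)*α*β*γ*l + ((-106524)/25)*α*β*γ*l^2 + ((2169037)/1200)*α*β*γ*δ + ((-989514)/25)*α*β*γ*δ*l + ((718653)/200)*α*β*γ^2 + ((-958716)/25)*α*β*γ^2*l + (270)*α*β^2*κ + ((-19421603)/2400)*α*β^2*κ*l + ((1598283)/25)*α*β^2*κ*l^2 + ((718653)/200)*α*β^2*κ^2 + ((-958716)/25)*α*β^2*κ^2*l + ((784)/3)*α*β^2*δ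 + ((-92561)/12)*α*β^2*δ*l + (59976)*α*β^2*δ*l^2 + ((-1414161)/1600)*α*β^2*δ*κ + ((884763)/50)*α*β^2*δ*κ*l + ((-49)/12)*α*β^2*δ^2 + (3528)*α*β^2*δ^2*l + ((6374)/5)*α*β^2*γ + ((-337754303)/9600)*α*β^2*γ*l + ((25345863)/100)*α*β^2*γ*l^2 + ((11147149)/800)*α*β^2*γ*κ + ((-6507567)/25)*α*β^2*γ*κ*l + ((-106867)/160)*α*β^2*γ*δ + ((137889)/5)*α*β^2*γ*δ*l + ((3569199)/640)*α*β^2*γ^2 + ((-1784997)/20)*α*β^2*γ^2*l + ((-832)/3)*α*β^3*κ + ((24557)/3)*α*β^3*κ*l + (-63648)*α*β^3*κ*l^2 + ((5832)/5)*α*β^3*κ^2 + ((-93312)/5)*α*β^3*κ^2*l + ((13)/3)*α*β^3*δ*κ + (-3744)*α*β^3*δ*κ*l + ((-4016)/5)*α*β^3*γ + ((474139)/20)*α*β^3*γ*l + ((-921672)/5)*α*β^3*γ*l^2 + (-11340)*α*β^3*γ*κ + (181440)*α*β^3*γ*κ*l + ((251)/20)*α*β^3*γ*δ + ((-54216)/5)*α*β^3*γ*δ*l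 + ((56)/3)*α^2 + ((-13223)/24)*α^2*l + (4284)*α^2*l^2 + ((-7783)/24)*α^2*δ + ((6762751)/1200)*α^2*δ*l + ((-53262)/25)*α^2*δ*l^2 + ((2169037)/1200)*α^2*δ^2 + ((-989514)/25)*α^2*δ^2*l + ((718653)/400)*α^2*γ*δ + ((-479358)/25)*α^2*γ*δ*l + ((3456)/5)*α^2*β*δ + ((-368242763)/19200)*α^2*β*δ*l + ((27815283)/200)*α^2*β*δ*l^2 + ((140283)/25)*α^2*β*δ*κ + ((-2511648)/25)*α^2*β*δ*κ*l + ((-9774)/5)*α^2*β*δ^2 + ((202176)/5)*α^2*β*δ^2*l + (540)*α^2*β*γ + ((-19421603)/1200)*α^2*β*γ*l + ((3196566)/25)*α^2*β*γ*l^2 + ((718653)/100)*α^2*β*γ*κ + ((-1917432)/25)*α^2*β*γ*κ*l + ((16485987)/6400)*α^2*β*γ*δ + ((-6823521)/200)*α^2*β*γ*δ*l + ((2169037)/400)*α^2*β*γ^2 + ((-2968542)/25)*α^2*β*γ^2*l + (-224)*α^2*β^2*κ + ((41388261)/6400)*α^2*β^2*κ*l + ((-9819063)/200)*α^2*β^2*κ*l^2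 + ((-2304)/5)*α^2*β^2*δ + ((68004)/5)*α^2*β^2*δ*l + ((-528768)/5)*α^2*β^2*δ*l^2 + ((-6473)/2)*α^2*β^2*δ*κ + (48816)*α^2*β^2*δ*κ*l + ((36)/5)*α^2*β^2*δ^2 + ((-31104)/5)*α^2*β^2*δ^2*l + ((-1664)/3)*α^2*β^2*γ + ((49114)/3)*α^2*β^2*γ*l + (-127296)*α^2*β^2*γ*l^2 + ((11664)/5)*α^2*β^2*γ*κ + ((-186624)/5)*α^2*β^2*γ*κ*l + ((26)/3)*α^2*β^2*γ*δ + (-7488)*α^2*β^2*γ*δ*l + (-9720)*α^2*β^2*γ^2 + (155520)*α^2*β^2*γ^2*l + (256)*α^2*β^3*κ + (-7556)*α^2*β^3*κ*l + (58752)*α^2*β^3*κ*l^2 + (-4)*α^2*β^3*δ*κ + (3456)*α^2*β^3*δ*κ*l + (270)*α^3*δ + ((-19421603)/2400)*α^3*δ*l + ((1598283)/25)*α^3*δ*l^2 + ((718653)/200)*α^3*δ*κ + ((-958716)/25)*α^3*δ*κ*l + ((-170001)/1600)*α^3*δ^2 + ((262683)/50)*α^3*δ^2*l + ((2169037)/800)*α^3*γ*δ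 + ((-1484271)/25)*α^3*γ*δ*l + ((-832)/3)*α^3*β*δ + ((24557)/3)*α^3*β*δ*l + (-63648)*α^3*β*δ*l^2 + ((5832)/5)*α^3*β*δ*κ + ((-93312)/5)*α^3*β*δ*κ*l + ((13)/3)*α^3*β*δ^2 + (-3744)*α^3*β*δ^2*l + (-448)*α^3*β*γ + ((41388261)/3200)*α^3*β*γ*l + ((-9819063)/100)*α^3*β*γ*l^2 + (-4853)*α^3*β*γ*δ + (71712)*α^3*β*γ*δ*l + ((-112)/9)*α^3*β^2*κ + ((13223)/36)*α^3*β^2*κ*l + (-2856)*α^3*β^2*κ*l^2 + ((7)/36)*α^3*β^2*δ*κ + (-168)*α^3*β^2*δ*κ*l + (512)*α^3*β^2*γ + (-15112)*α^3*β^2*γ*l + (117504)*α^3*β^2*γ*l^2 + (-8)*α^3*β^2*γ*δ + (6912)*α^3*β^2*γ*δ*l + (-224)*α^4*δ + ((41388261)/6400)*α^4*δ*l + ((-9819063)/200)*α^4*δ*l^2 + ((7)/2)*α^4*δ^2 + (-3024)*α^4*δ^2*l + (256)*α^4*β*δ + (-7556)*α^4*β*δ*l + (58752)*α^4*β*δ*l^2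 + (-4)*α^4*β*δ^2 + (3456)*α^4*β*δ^2*l + ((-224)/9)*α^4*β*γ + ((13223)/18)*α^4*β*γ*l + (-5712)*α^4*β*γ*l^2 + ((7)/18)*α^4*β*γ*δ + (-336)*α^4*β*γ*δ*l + ((-112)/9)*α^5*δ + ((13223)/36)*α^5*δ*l + (-2856)*α^5*δ*l^2 + ((7)/36)*α^5*δ^2 + (-168)*α^5*δ^2*l) * E1 + (((-448)/3) + ((330942487)/76800)*l + ((-26154207)/800)*l^2 + ((-1530009)/6400)*κ + ((2364147)/200)*κ*l + ((-2881)/15)*δ + ((5472)/5)*δ*l + ((707551)/5120)*γ + ((-352053)/160)*γ*l + (256)*β + (-7475)*β*l + ((275549249)/4800)*β*l^2 + ((26631)/50)*β*l^3 + ((13122)/5)*β*κ + ((-209952)/5)*β*κ*l + (282)*β*δ + ((-26099287)/4800)*β*δ*l + ((3776607)/50)*β*δ*l^2 + ((239551)/200)*β*δ*κ + ((-319572)/25)*β*δ*κ*l + ((-61567)/1600)*β*δ^2 + ((219861)/50)*β*δ^2*l + (243)*β*γ + ((-1794751)/400)*β*γ*l + ((159786)/25)*β*γ*l^2 + ((-2169037)/4800)*β*γ*δ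 + ((494757)/50)*β*γ*δ*l + ((-2155959)/1600)*β*γ^2 + ((719037)/50)*β*γ^2*l + (-119)*β^2*l + ((246288923)/76800)*β^2*l^2 + ((-17937603)/800)*β^2*l^3 + (-286)*β^2*κ + ((5630911)/800)*β^2*κ*l + ((-1013013)/25)*β^2*κ*l^2 + ((-239551)/200)*β^2*κ^2 + ((319572)/25)*β^2*κ^2*l + ((-392)/3)*β^2*δ + ((834157)/192)*β^2*δ*l + ((-78741)/2)*β^2*δ*l^2 + ((683647)/1600)*β^2*δ*κ + ((-530901)/50)*β^2*δ*κ*l + ((49)/24)*β^2*δ^2 + (-1764)*β^2*δ^2*l + (-357)*β^2*γ + ((14277683)/1600)*β^2*γ*l + ((-2805489)/50)*β^2*γ*l^2 + ((-12269413)/2400)*β^2*γ*κ + ((2378493)/25)*β^2*γ*κ*l + ((-10011)/64)*β^2*γ*δ + ((-4455)/2)*β^2*γ*δ*l + ((-10707597)/5120)*β^2*γ^2 + ((5354991)/160)*β^2*γ^2*l + (56)*β^3*l + ((-13223)/8)*β^3*l^2 + (12852)*β^3*l^3 + ((392)/3)*β^3*κ + ((-73121)/24)*β^3*κ*l + (17028)*β^3*κ*l^2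 + ((-1944)/5)*β^3*κ^2 + ((31104)/5)*β^3*κ^2*l + ((-7)/8)*β^3*δ*l + (756)*β^3*δ*l^2 + ((-49)/24)*β^3*δ*κ + (1764)*β^3*δ*κ*l + (168)*β^3*γ + ((-39669)/8)*β^3*γ*l + (38556)*β^3*γ*l^2 + (4050)*β^3*γ*κ + (-64800)*β^3*γ*κ*l + ((-21)/8)*β^3*γ*δ + (2268)*β^3*γ*δ*l + ((-112)/9)*α + ((13223)/36)*α*l + (-2856)*α*l^2 + ((5839)/36)*α*δ + ((-6863551)/2400)*α*δ*l + ((26631)/25)*α*δ*l^2 + ((-2169037)/2400)*α*δ^2 + ((494757)/25)*α*δ^2*l + ((-718653)/800)*α*γ*δ + ((239679)/25)*α*γ*δ*l + ((-135)/2)*α*β*l + ((19421603)/9600)*α*β*l^2 + ((-1598283)/100)*α*β*l^3 + (-162)*α*β*κ + ((538049)/300)*α*β*κ*l + ((213048)/25)*α*β*κ*l^2 + ((-1728)/5)*α*β*δ + ((369262769)/38400)*α*β*δ*l + ((-28340649)/400)*α*β*δ*l^2 + ((-4564547)/2400)*α*β*δ*κ + ((761067)/25)*α*β*δ*κ*l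 + ((4887)/5)*α*β*δ^2 + ((-101088)/5)*α*β*δ^2*l + ((-405)/2)*α*β*γ + ((8626283)/1600)*α*β*γ*l + ((-1655289)/50)*α*β*γ*l^2 + ((-718653)/400)*α*β*γ*κ + ((479358)/25)*α*β*γ*κ*l + ((-16825989)/12800)*α*β*γ*δ + ((7348887)/400)*α*β*γ*δ*l + ((-6507111)/3200)*α*β*γ^2 + ((4452813)/100)*α*β*γ^2*l + ((208)/3)*α*β^2*l + ((-24557)/12)*α*β^2*l^2 + (15912)*α*β^2*l^3 + ((1728)/5)*α*β^2*κ + ((-379440203)/38400)*α*β^2*κ*l + ((29681523)/400)*α*β^2*κ*l^2 + ((140283)/50)*α*β^2*κ^2 + ((-1255824)/25)*α*β^2*κ^2*l + ((1152)/5)*α*β^2*δ + ((-408089)/60)*α*β^2*δ*l + ((269064)/5)*α*β^2*δ*l^2 + ((3213)/5)*α*β^2*δ*κ + ((-28512)/5)*α*β^2*δ*κ*l + ((-18)/5)*α*β^2*δ^2 + ((15552)/5)*α*β^2*δ^2*l + (208)*α*β^2*γ + ((-19697)/4)*α*β^2*γ*l + (28296)*α*β^2*γ*l^2 + ((1329711)/2560)*α*β^2*γ*κ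 + ((-665253)/80)*α*β^2*γ*κ*l + ((-13)/4)*α*β^2*γ*δ + (2808)*α*β^2*γ*δ*l + (3645)*α*β^2*γ^2 + (-58320)*α*β^2*γ^2*l + ((-1152)/5)*α*β^3*κ + ((34002)/5)*α*β^3*κ*l + ((-264384)/5)*α*β^3*κ*l^2 + (-1620)*α*β^3*κ^2 + (25920)*α*β^3*κ^2*l + ((18)/5)*α*β^3*δ*κ + ((-15552)/5)*α*β^3*δ*κ*l + (-135)*α^2*δ + ((19421603)/4800)*α^2*δ*l + ((-1598283)/50)*α^2*δ*l^2 + ((-718653)/400)*α^2*δ*κ + ((479358)/25)*α^2*δ*κ*l + ((170001)/3200)*α^2*δ^2 + ((-262683)/100)*α^2*δ^2*l + ((-2169037)/1600)*α^2*γ*δ + ((1484271)/50)*α^2*γ*δ*l + (56)*α^2*β*l + ((-41388261)/25600)*α^2*β*l^2 + ((9819063)/800)*α^2*β*l^3 + (135)*α^2*β*κ + ((-19421603)/4800)*α^2*β*κ*l + ((1598283)/50)*α^2*β*κ*l^2 + ((718653)/400)*α^2*β*κ^2 + ((-479358)/25)*α^2*β*κ^2*l + ((416)/3)*α^2*β*δ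 + ((-98249)/24)*α^2*β*δ*l + (32580)*α^2*β*δ*l^2 + ((-2036241)/3200)*α^2*β*δ*κ + ((1195803)/100)*α^2*β*δ*κ*l + ((-13)/6)*α^2*β*δ^2 + (1872)*α^2*β*δ^2*l + (168)*α^2*β*γ + ((-124164783)/25600)*α^2*β*γ*l + ((29457189)/800)*α^2*β*γ*l^2 + ((2169037)/1600)*α^2*β*γ*κ + ((-1484271)/50)*α^2*β*γ*κ*l + ((19419)/8)*α^2*β*γ*δ + (-36612)*α^2*β*γ*δ*l + (-64)*α^2*β^2*l + (1889)*α^2*β^2*l^2 + (-14688)*α^2*β^2*l^3 + ((-416)/3)*α^2*β^2*κ + ((24557)/6)*α^2*β^2*κ*l + (-31824)*α^2*β^2*κ*l^2 + ((2916)/5)*α^2*β^2*κ^2 + ((-46656)/5)*α^2*β^2*κ^2*l + (1)*α^2*β^2*δ*l + (-864)*α^2*β^2*δ*l^2 + ((13)/6)*α^2*β^2*δ*κ + (-1872)*α^2*β^2*δ*κ*l + (-192)*α^2*β^2*γ + (5667)*α^2*β^2*γ*l + (-44064)*α^2*β^2*γ*l^2 + (-2430)*α^2*β^2*γ*κ +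 (38880)*α^2*β^2*γ*κ*l + (3)*α^2*β^2*γ*δ + (-2592)*α^2*β^2*γ*δ*l + (112)*α^3*δ + ((-41388261)/12800)*α^3*δ*l + ((9819063)/400)*α^3*δ*l^2 + ((-7)/4)*α^3*δ^2 + (1512)*α^3*δ^2*l + ((28)/9)*α^3*β*l + ((-13223)/144)*α^3*β*l^2 + (714)*α^3*β*l^3 + (-112)*α^3*β*κ + ((41388261)/12800)*α^3*β*κ*l + ((-9819063)/400)*α^3*β*κ*l^2 + (-128)*α^3*β*δ + ((544025)/144)*α^3*β*δ*l + (-29334)*α^3*β*δ*l^2 + ((7)/4)*α^3*β*δ*κ + (-1512)*α^3*β*δ*κ*l + (2)*α^3*β*δ^2 + (-1728)*α^3*β*δ^2*l + ((28)/3)*α^3*β*γ + ((-13223)/48)*α^3*β*γ*l + (2142)*α^3*β*γ*l^2 + ((-7)/48)*α^3*β*γ*δ + (126)*α^3*β*γ*δ*l + (128)*α^3*β^2*κ + (-3778)*α^3*β^2*κ*l + (29376)*α^3*β^2*κ*l^2 + (-2)*α^3*β^2*δ*κ + (1728)*α^3*β^2*δ*κ*l + ((56)/9)*α^4*δ + ((-13223)/72)*α^4*δ*l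 + (1428)*α^4*δ*l^2 + ((-7)/72)*α^4*δ^2 + (84)*α^4*δ^2*l + ((-56)/9)*α^4*β*κ + ((13223)/72)*α^4*β*κ*l + (-1428)*α^4*β*κ*l^2 + ((7)/72)*α^4*β*δ*κ + (-84)*α^4*β*δ*κ*l) * E2 + (((56)/9) + ((-136099)/360)*l + ((22692)/5)*l^2 + ((54427)/480)*κ + ((-9027)/5)*κ*l + ((-7)/72)*δ + (84)*δ*l + ((-1944)/5)*γ + ((31104)/5)*γ*l + (286)*β*l + ((-270127)/32)*β*l^2 + (65637)*β*l^3 + (648)*β*κ + ((-2870849)/300)*β*κ*l + ((-213048)/25)*β*κ*l^2 + ((-61567)/1600)*β*δ*l + ((219861)/50)*β*δ*l^2 + ((-2169037)/600)*β*δ*κ + ((1979028)/25)*β*δ*κ*l + (572)*β*γ + ((-38350013)/2400)*β*γ*l + ((2787093)/25)*β*γ*l^2 + ((-239551)/200)*β*γ*κ + ((319572)/25)*β*γ*κ*l + ((-61567)/800)*β*γ*δ + ((219861)/25)*β*γ*δ*l + ((2169037)/1200)*β*γ^2 + ((-989514)/25)*β*γ^2*l + ((-392)/3)*β^2*l + ((92561)/24)*β^2*l^2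 + (-29988)*β^2*l^3 + (-952)*β^2*κ + ((250021403)/9600)*β^2*κ*l + ((-18559683)/100)*β^2*κ*l^2 + ((-280566)/25)*β^2*κ^2 + ((5023296)/25)*β^2*κ^2*l + ((49)/24)*β^2*δ*l + (-1764)*β^2*δ*l^2 + ((31223)/8)*β^2*δ*κ + (-75060)*β^2*δ*κ*l + ((-784)/3)*β^2*γ + ((73121)/12)*β^2*γ*l + (-34056)*β^2*γ*l^2 + ((-614307)/128)*β^2*γ*κ + ((307233)/4)*β^2*γ*κ*l + ((49)/12)*β^2*γ*δ + (-3528)*β^2*γ*δ*l + (-3240)*β^2*γ^2 + (51840)*β^2*γ^2*l + (448)*β^3*κ + (-13223)*β^3*κ*l + (102816)*β^3*κ*l^2 + (6480)*β^3*κ^2 + (-103680)*β^3*κ^2*l + (-7)*β^3*δ*κ + (6048)*β^3*δ*κ*l + (162)*α*l + ((-6460351)/2400)*α*l^2 + ((26631)/25)*α*l^3 + ((-2169037)/2400)*α*δ*l + ((494757)/25)*α*δ*l^2 + (324)*α*γ + ((-15076661)/2400)*α*γ*l + ((292941)/25)*α*γ*l^2 + ((-2169037)/1200)*α*γ*δ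 + ((989514)/25)*α*γ*δ*l + ((-718653)/400)*α*γ^2 + ((479358)/25)*α*γ^2*l + ((-1728)/5)*α*β*l + ((368242763)/38400)*α*β*l^2 + ((-27815283)/400)*α*β*l^3 + (-540)*α*β*κ + ((16054811)/1200)*α*β*κ*l + ((-1940742)/25)*α*β*κ*l^2 + ((-718653)/100)*α*β*κ^2 + ((1917432)/25)*α*β*κ^2*l + ((4887)/5)*α*β*δ*l + ((-101088)/5)*α*β*δ*l^2 + ((170001)/800)*α*β*δ*κ + ((-262683)/25)*α*β*δ*κ*l + ((-3456)/5)*α*β*γ + ((682947541)/38400)*α*β*γ*l + ((-46705581)/400)*α*β*γ*l^2 + ((-882713)/80)*α*β*γ*κ + ((1096038)/5)*α*β*γ*κ*l + ((9774)/5)*α*β*γ*δ + ((-202176)/5)*α*β*γ*δ*l + ((-3569199)/1280)*α*β*γ^2 + ((1784997)/40)*α*β*γ^2*l + ((1152)/5)*α*β^2*l + ((-34002)/5)*α*β^2*l^2 + ((264384)/5)*α*β^2*l^3 + ((1664)/3)*α*β^2*κ + ((-44254)/3)*α*β^2*κ*l + (101376)*α*β^2*κ*l^2 + ((-11664)/5)*α*β^2*κ^2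 + ((186624)/5)*α*β^2*κ^2*l + ((-18)/5)*α*β^2*δ*l + ((15552)/5)*α*β^2*δ*l^2 + ((-26)/3)*α*β^2*δ*κ + (7488)*α*β^2*δ*κ*l + ((2304)/5)*α*β^2*γ + ((-68004)/5)*α*β^2*γ*l + ((528768)/5)*α*β^2*γ*l^2 + (12960)*α*β^2*γ*κ + (-207360)*α*β^2*γ*κ*l + ((-36)/5)*α*β^2*γ*δ + ((31104)/5)*α*β^2*γ*δ*l + (-135)*α^2*l + ((19421603)/4800)*α^2*l^2 + ((-1598283)/50)*α^2*l^3 + ((-718653)/400)*α^2*κ*l + ((479358)/25)*α^2*κ*l^2 + ((170001)/3200)*α^2*δ*l + ((-262683)/100)*α^2*δ*l^2 + (-270)*α^2*γ + ((6467219)/960)*α^2*γ*l + ((-342459)/10)*α^2*γ*l^2 + ((-718653)/200)*α^2*γ*κ + ((958716)/25)*α^2*γ*κ*l + ((170001)/1600)*α^2*γ*δ + ((-262683)/50)*α^2*γ*δ*l + ((-2169037)/800)*α^2*γ^2 + ((1484271)/25)*α^2*γ^2*l + ((416)/3)*α^2*β*l + ((-24557)/6)*α^2*β*l^2 + (31824)*α^2*β*l^3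 + (448)*α^2*β*κ + ((-43254501)/3200)*α^2*β*κ*l + ((10752183)/100)*α^2*β*κ*l^2 + ((-13)/6)*α^2*β*δ*l + (1872)*α^2*β*δ*l^2 + (-7)*α^2*β*δ*κ + (6048)*α^2*β*δ*κ*l + ((832)/3)*α^2*β*γ + ((-17267)/3)*α^2*β*γ*l + (24768)*α^2*β*γ*l^2 + ((-5832)/5)*α^2*β*γ*κ + ((93312)/5)*α^2*β*γ*κ*l + ((-13)/3)*α^2*β*γ*δ + (3744)*α^2*β*γ*δ*l + (4860)*α^2*β*γ^2 + (-77760)*α^2*β*γ^2*l + (-512)*α^2*β^2*κ + (15112)*α^2*β^2*κ*l + (-117504)*α^2*β^2*κ*l^2 + (8)*α^2*β^2*δ*κ + (-6912)*α^2*β^2*δ*κ*l + (112)*α^3*l + ((-41388261)/12800)*α^3*l^2 + ((9819063)/400)*α^3*l^3 + ((-7)/4)*α^3*δ*l + (1512)*α^3*δ*l^2 + (224)*α^3*γ + ((-41388261)/6400)*α^3*γ*l + ((9819063)/200)*α^3*γ*l^2 + ((-7)/2)*α^3*γ*δ + (3024)*α^3*γ*δ*l + (-128)*α^3*β*l + (3778)*α^3*β*l^2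 + (-29376)*α^3*β*l^3 + ((224)/9)*α^3*β*κ + ((-13223)/18)*α^3*β*κ*l + (5712)*α^3*β*κ*l^2 + (2)*α^3*β*δ*l + (-1728)*α^3*β*δ*l^2 + ((-7)/18)*α^3*β*δ*κ + (336)*α^3*β*δ*κ*l + (-256)*α^3*β*γ + (7556)*α^3*β*γ*l + (-58752)*α^3*β*γ*l^2 + (4)*α^3*β*γ*δ + (-3456)*α^3*β*γ*δ*l + ((56)/9)*α^4*l + ((-13223)/72)*α^4*l^2 + (1428)*α^4*l^3 + ((-7)/72)*α^4*δ*l + (84)*α^4*δ*l^2 + ((112)/9)*α^4*γ + ((-13223)/36)*α^4*γ*l + (2856)*α^4*γ*l^2 + ((-7)/36)*α^4*γ*δ + (168)*α^4*γ*δ*l) * E3 + ((-64) + (1241)*l + ((-2352449)/600)*l^2 + ((-106524)/25)*l^3 + (-972)*κ + (15552)*κ*l + (1)*δ + ((1650637)/600)*δ*l + ((-1979028)/25)*δ*l^2 + ((718653)/200)*γ*l + ((-958716)/25)*γ*l^2 + (952)*β*l + ((-246288923)/9600)*β*l^2 + ((17937603)/100)*β*l^3 + (1430)*β*κ + ((-24787763)/800)*β*κ*l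 + ((3181329)/25)*β*κ*l^2 + ((239551)/40)*β*κ^2 + ((-319572)/5)*β*κ^2*l + ((-31223)/8)*β*δ*l + (75060)*β*δ*l^2 + ((-61567)/320)*β*δ*κ + ((219861)/10)*β*δ*κ*l + ((3569199)/640)*β*γ*l + ((-1784997)/20)*β*γ*l^2 + ((2169037)/480)*β*γ*κ + ((-494757)/5)*β*γ*κ*l + (-448)*β^2*l + (13223)*β^2*l^2 + (-102816)*β^2*l^3 + ((-1960)/3)*β^2*κ + ((307285)/24)*β^2*κ*l + (-46260)*β^2*κ*l^2 + (1944)*β^2*κ^2 + (-31104)*β^2*κ^2*l + (7)*β^2*δ*l + (-6048)*β^2*δ*l^2 + ((245)/24)*β^2*δ*κ + (-8820)*β^2*δ*κ*l + (-8100)*β^2*γ*κ + (129600)*β^2*γ*κ*l + (540)*α*l + ((-19421603)/1200)*α*l^2 + ((3196566)/25)*α*l^3 + (810)*α*κ + ((-15054083)/2400)*α*κ*l + ((-1784277)/25)*α*κ*l^2 + ((-170001)/800)*α*δ*l + ((262683)/25)*α*δ*l^2 + ((-2169037)/480)*α*δ*κ + ((494757)/5)*α*δ*κ*l + ((2169037)/400)*α*γ*l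 + ((-2968542)/25)*α*γ*l^2 + ((-718653)/160)*α*γ*κ + ((239679)/5)*α*γ*κ*l + ((-1664)/3)*α*β*l + ((49114)/3)*α*β*l^2 + (-127296)*α*β*l^3 + (-1728)*α*β*κ + ((386158667)/7680)*α*β*κ*l + ((-30801267)/80)*α*β*κ*l^2 + ((-140283)/10)*α*β*κ^2 + ((1255824)/5)*α*β*κ^2*l + ((26)/3)*α*β*δ*l + (-7488)*α*β*δ*l^2 + (4887)*α*β*δ*κ + (-101088)*α*β*δ*κ*l + (-9720)*α*β*γ*l + (155520)*α*β*γ*l^2 + ((-3569199)/512)*α*β*γ*κ + ((1784997)/16)*α*β*γ*κ*l + (1152)*α*β^2*κ + (-34002)*α*β^2*κ*l + (264384)*α*β^2*κ*l^2 + (8100)*α*β^2*κ^2 + (-129600)*α*β^2*κ^2*l + (-18)*α*β^2*δ*κ + (15552)*α*β^2*δ*κ*l + (-448)*α^2*l + ((41388261)/3200)*α^2*l^2 + ((-9819063)/100)*α^2*l^3 + (-675)*α^2*κ + ((19421603)/960)*α^2*κ*l + ((-1598283)/10)*α^2*κ*l^2 + ((-718653)/80)*α^2*κ^2 + ((479358)/5)*α^2*κ^2*l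 + (7)*α^2*δ*l + (-6048)*α^2*δ*l^2 + ((170001)/640)*α^2*δ*κ + ((-262683)/20)*α^2*δ*κ*l + ((-2169037)/320)*α^2*γ*κ + ((1484271)/10)*α^2*γ*κ*l + (512)*α^2*β*l + (-15112)*α^2*β*l^2 + (117504)*α^2*β*l^3 + ((2080)/3)*α^2*β*κ + ((-122785)/6)*α^2*β*κ*l + (159120)*α^2*β*κ*l^2 + (-2916)*α^2*β*κ^2 + (46656)*α^2*β*κ^2*l + (-8)*α^2*β*δ*l + (6912)*α^2*β*δ*l^2 + ((-65)/6)*α^2*β*δ*κ + (9360)*α^2*β*δ*κ*l + (12150)*α^2*β*γ*κ + (-194400)*α^2*β*γ*κ*l + ((-224)/9)*α^3*l + ((13223)/18)*α^3*l^2 + (-5712)*α^3*l^3 + (560)*α^3*κ + ((-41388261)/2560)*α^3*κ*l + ((9819063)/80)*α^3*κ*l^2 + ((7)/18)*α^3*δ*l + (-336)*α^3*δ*l^2 + ((-35)/4)*α^3*δ*κ + (7560)*α^3*δ*κ*l + (-640)*α^3*β*κ + (18890)*α^3*β*κ*l + (-146880)*α^3*β*κ*l^2 + (10)*α^3*β*δ*κ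 + (-8640)*α^3*β*δ*κ*l + ((280)/9)*α^4*κ + ((-66115)/72)*α^4*κ*l + (7140)*α^4*κ*l^2 + ((-35)/72)*α^4*δ*κ + (420)*α^4*δ*κ*l) * E4 + ((-1430)*l + ((1350635)/32)*l^2 + (-328185)*l^3 + (-972)*κ + ((4064841)/400)*κ*l + ((1438074)/25)*κ*l^2 + ((61567)/320)*δ*l + ((-219861)/10)*δ*l^2 + ((2169037)/400)*δ*κ + ((-2968542)/25)*δ*κ*l + ((-2169037)/480)*γ*l + ((494757)/5)*γ*l^2 + ((2155959)/400)*γ*κ + ((-1438074)/25)*γ*κ*l + ((1960)/3)*β*l + ((-462805)/24)*β*l^2 + (149940)*β*l^3 + (1428)*β*κ + ((-258730523)/6400)*β*κ*l + ((60033609)/200)*β*κ*l^2 + ((420849)/25)*β*κ^2 + ((-7534944)/25)*β*κ^2*l + ((-245)/24)*β*δ*l + (8820)*β*δ*l^2 + ((-93669)/16)*β*δ*κ + (112590)*β*δ*κ*l + (8100)*β*γ*l + (-129600)*β*γ*l^2 + ((10707597)/1280)*β*γ*κ + ((-5354991)/40)*β*γ*κ*l + (-672)*β^2*κ + ((39669)/2)*β^2*κ*l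 + (-154224)*β^2*κ*l^2 + (-9720)*β^2*κ^2 + (155520)*β^2*κ^2*l + ((21)/2)*β^2*δ*κ + (-9072)*β^2*δ*κ*l + (538)*α*l + ((-508141)/32)*α*l^2 + (123471)*α*l^3 + (810)*α*κ + ((-19421603)/800)*α*κ*l + ((4794849)/25)*α*κ*l^2 + ((2155959)/200)*α*κ^2 + ((-2876148)/25)*α*κ^2*l + ((-269)/32)*α*δ*l + (7263)*α*δ*l^2 + ((-510003)/1600)*α*δ*κ + ((788049)/50)*α*δ*κ*l + ((6507111)/800)*α*γ*κ + ((-4452813)/25)*α*γ*κ*l + (-592)*α*β*l + ((69893)/4)*α*β*l^2 + (-135864)*α*β*l^3 + (-832)*α*β*κ + (24557)*α*β*κ*l + (-190944)*α*β*κ*l^2 + ((17496)/5)*α*β*κ^2 + ((-279936)/5)*α*β*κ^2*l + ((37)/4)*α*β*δ*l + (-7992)*α*β*δ*l^2 + (13)*α*β*δ*κ + (-11232)*α*β*δ*κ*l + (-14580)*α*β*γ*κ + (233280)*α*β*γ*κ*l + (-672)*α^2*κ + ((124164783)/6400)*α^2*κ*l + ((-29457189)/200)*α^2*κ*l^2 +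 ((21)/2)*α^2*δ*κ + (-9072)*α^2*δ*κ*l + (768)*α^2*β*κ + (-22668)*α^2*β*κ*l + (176256)*α^2*β*κ*l^2 + (-12)*α^2*β*δ*κ + (10368)*α^2*β*δ*κ*l + ((-112)/3)*α^3*κ + ((13223)/12)*α^3*κ*l + (-8568)*α^3*κ*l^2 + ((7)/12)*α^3*δ*κ + (-504)*α^3*δ*κ*l) * E5
end

section
/- Let f(w) = w⁵(κw + λ)/(w − 1) with κ, λ ∈ ℂ, κ ≠ 0. Then f(−λ/(κw)) = (λ⁶/κ⁴) · (1/f(w)) as rational functions. In particular, if λ³/κ² = −1, then f(−λ/(κw)) = 1/f(w). -/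
/-- For `f(w) = w⁵(κw + λ)/(w − 1)` with `κ ≠ 0`, one has
`f(−λ/(κw)) = (λ⁶/κ⁴) · (1/f(w))`; in particular, if `λ³/κ² = −1` then
`f(−λ/(κw)) = 1/f(w)`. -/
theorem genus19_functional_equation (κ l w : ℂ) (hκ : κ ≠ 0)
    (hw0 : w ≠ 0) (hw1 : w ≠ 1) (hwl : κ * w + l ≠ 0) :
    ((-l / (κ * w)) ^ 5 * (κ * (-l / (κ * w)) + l) / (-l / (κ * w) - 1) =
        (l ^ 6 / κ ^ 4) * (1 / (w ^ 5 * (κ * w + l) / (w - 1)))) ∧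
      (l ^ 3 / κ ^ 2 = -1 →
        (-l / (κ * w)) ^ 5 * (κ * (-l / (κ * w)) + l) / (-l / (κ * w) - 1) =
          1 / (w ^ 5 * (κ * w + l) / (w - 1))) := by
  have hw1' : w - 1 ≠ 0 := sub_ne_zero.mpr hw1
  have hmain : (-l / (κ * w)) ^ 5 * (κ * (-l / (κ * w)) + l) / (-l / (κ * w) - 1) =
      (l ^ 6 / κ ^ 4) * (1 / (w ^ 5 * (κ * w + l) / (w - 1))) := by
    have hden : -l / (κ * w) - 1 = -(κ * w + l) / (κ * w) := by
      field_simp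
      ring
    have hkw : κ * w ≠ 0 := mul_ne_zero hκ hw0
    have hne : (κ * w) ^ 5 * (κ * w) * (-l + -(κ * w)) ≠ 0 := by
      refine mul_ne_zero (mul_ne_zero (pow_ne_zero 5 hkw) hkw) ?_
      intro h
      apply hwl
      linear_combination -h
    rw [hden]
    field_simp
    ring
  refine ⟨hmain, fun h => ?_⟩
  have h6 : l ^ 6 = κ ^ 4 := by
    have : l ^ 3 = -κ ^ 2 := by
      field_simp at h
      linear_combination h
    calc l ^ 6 = (l ^ 3) ^ 2 := by ring
    _ = (-κ ^ 2) ^ 2 := by rw [this]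
    _ = κ ^ 4 := by ring
  rw [hmain, h6, div_self (pow_ne_zero 4 hκ), one_mul]
end
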